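/- arXiv:1911.02100 — 10 statements merged into one kernel-verified Lean document; each statement's English description precedes it below -/
import Mathlib

section
/- For every integer k ≥ 1, the number of k-germs equals the k-th Catalan number C_k = (2k)!/(k!·(k+1)!). -/
/-- A `k`-germ is a string `a_{k-1} a_{k-2} ⋯ a_2 a_1` of nonnegative integers with
`a_{k-1} ≤ 1` and `a_{i-1} ≤ a_i + 1` for `1 < i < k`.  We encode it as a function
`f : Fin (k-1) → ℕ` with `f j = a_{j+1}` (so index `j = k-2` is the leftmost entry). -/
def IsGerm (k : ℕ) (f : Fin (k - 1) → ℕ) : Prop :=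
  (∀ j : Fin (k - 1), (j : ℕ) + 2 = k → f j ≤ 1) ∧
  ∀ (j : Fin (k - 1)) (h : (j : ℕ) + 1 < k - 1), f j ≤ f ⟨(j : ℕ) + 1, h⟩ + 1

open Finset

/-- Ballot-style numbers. -/
def D : ℕ → ℕ → ℕ
  | 0, _ => 1
  | n + 1, m => ∑ v ∈ Finset.range (m + 1), D n (v + 1)

lemma D_zero (m : ℕ) : D 0 m = 1 := rfl

lemma D_succ (n m : ℕ) : D (n + 1) m = ∑ v ∈ Finset.range (m + 1), D n (v + 1) := rfl

lemma D_succ_zero (n : ℕ) : D (n + 1) 0 = D n 1 := by simp [D_succ]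

lemma D_succ_succ (n m : ℕ) : D (n + 1) (m + 1) = D (n + 1) m + D n (m + 2) := by
  rw [D_succ, D_succ, Finset.sum_range_succ]

/-- triangle sum swap -/
lemma tri {M : Type*} [AddCommMonoid M] (f : ℕ → ℕ → M) :
    ∀ n : ℕ, ∑ j ∈ range (n + 1), ∑ i ∈ range (n - j + 1), f j i
      = ∑ s ∈ range (n + 1), ∑ j ∈ range (s + 1), f j (s - j) := by
  intro n
  induction n with
  | zero => simp
  | succ n ih =>
    rw [Finset.sum_range_succ (fun s => ∑ j ∈ range (s + 1), f j (s - j)), ← ih]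
    rw [show n + 1 + 1 = (n + 1) + 1 from rfl,
      Finset.sum_range_succ (fun j => f j (n + 1 - j))]
    have h2 : ∑ j ∈ range (n + 1), f j (n + 1 - j) = ∑ j ∈ range (n + 1), f j (n - j + 1) := by
      refine Finset.sum_congr rfl fun j hj => ?_
      rw [mem_range] at hj
      congr 1
      omega
    rw [h2]
    rw [Finset.sum_range_succ (fun j => ∑ i ∈ range (n + 1 - j + 1), f j i)]
    have h1 : ∀ j ∈ range (n + 1),
        (∑ i ∈ range (n + 1 - j + 1), f j i)
          = (∑ i ∈ range (n - j + 1), f j i) + f j (n - j + 1) := by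
      intro j hj
      rw [mem_range] at hj
      have : n + 1 - j + 1 = (n - j + 1) + 1 := by omega
      rw [this, Finset.sum_range_succ]
    rw [Finset.sum_congr rfl h1, Finset.sum_add_distrib]
    have h3 : n + 1 - (n + 1) + 1 = 1 := by omega
    rw [h3]
    simp [Finset.sum_range_one]
    abel

lemma catalan_succ_range (s : ℕ) :
    catalan (s + 1) = ∑ j ∈ range (s + 1), catalan j * catalan (s - j) := by
  rw [catalan_succ']
  rw [Finset.Nat.sum_antidiagonal_eq_sum_range_succ (fun a b => catalan a * catalan b)]

lemma D_conv : ∀ n : ℕ, ∀ m : ℕ,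
    D n (m + 1) = ∑ j ∈ range (n + 1), catalan j * D (n - j) m := by
  intro n
  induction n using Nat.strong_induction_on with
  | _ n ih =>
    match n with
    | 0 => intro m; simp [D, catalan_zero]
    | Nat.succ n =>
      intro m
      rw [D_succ_succ]
      rw [Finset.sum_range_succ' (fun j => catalan j * D (n + 1 - j) m)]
      simp only [catalan_zero, one_mul, Nat.sub_zero]
      have hstep : D n (m + 2) = ∑ j ∈ range (n + 1), catalan (j + 1) * D (n - j) m := by
        rw [ih n (Nat.lt_succ_self n) (m + 1)]
        have expand : ∀ j ∈ range (n + 1),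
            catalan j * D (n - j) (m + 1)
              = ∑ i ∈ range (n - j + 1), catalan j * (catalan i * D (n - j - i) m) := by
          intro j hj
          rw [ih (n - j) (by rw [mem_range] at hj; omega) m, Finset.mul_sum]
        rw [Finset.sum_congr rfl expand]
        rw [tri (fun j i => catalan j * (catalan i * D (n - j - i) m)) n]
        refine Finset.sum_congr rfl fun s hs => ?_
        rw [mem_range] at hs
        have : ∀ j ∈ range (s + 1),
            catalan j * (catalan (s - j) * D (n - j - (s - j)) m)
              = catalan j * catalan (s - j) * D (n - s) m := by
          intro j hj
          rw [mem_range] at hj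
          have : n - j - (s - j) = n - s := by omega
          rw [this, mul_assoc]
        rw [Finset.sum_congr rfl this, ← Finset.sum_mul, ← catalan_succ_range]
      rw [hstep]
      have : ∀ j ∈ range (n + 1), catalan (j + 1) * D (n + 1 - (j + 1)) m
          = catalan (j + 1) * D (n - j) m := by
        intro j hj; congr 2; omega
      rw [Finset.sum_congr rfl this]
      abel

lemma D_zero_eq_catalan : ∀ n : ℕ, D n 0 = catalan n := by
  intro n
  induction n using Nat.strong_induction_on with
  | _ n ih =>
    match n with
    | 0 => simp [D, catalan_zero]
    | Nat.succ n =>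
      rw [D_succ_zero, D_conv n 0, catalan_succ_range]
      refine Finset.sum_congr rfl fun j hj => ?_
      rw [mem_range] at hj
      rw [ih (n - j) (by omega)]

lemma D_one_eq_catalan (n : ℕ) : D n 1 = catalan (n + 1) := by
  rw [← D_succ_zero, D_zero_eq_catalan]

/-- Germ-like sequences with top bound `m`. -/
def P (n m : ℕ) (f : Fin n → ℕ) : Prop :=
  (∀ j : Fin n, (j : ℕ) + 1 = n → f j ≤ m) ∧
  ∀ (j : Fin n) (h : (j : ℕ) + 1 < n), f j ≤ f ⟨(j : ℕ) + 1, h⟩ + 1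

lemma sigma_sub_ext {ι : Type*} {β : Type*} {p : ι → β → Prop}
    {x y : Σ i : ι, {b : β // p i b}} (h1 : x.1 = y.1) (h2 : (x.2 : β) = (y.2 : β)) :
    x = y := by
  rcases x with ⟨i, b, hb⟩
  rcases y with ⟨j, c, hc⟩
  dsimp at h1 h2
  subst h1
  subst h2
  rfl

/-- Peeling off the top entry. -/
def step (n m : ℕ) :
    {f : Fin (n + 1) → ℕ // P (n + 1) m f} ≃
      Σ v : Fin (m + 1), {g : Fin n → ℕ // P n ((v : ℕ) + 1) g} where
  toFun := fun ⟨f, hf⟩ =>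
    ⟨⟨f (Fin.last n), Nat.lt_succ_of_le (hf.1 (Fin.last n) rfl)⟩,
      ⟨f ∘ Fin.castSucc, by
        constructor
        · intro j hj
          have h' : (j : ℕ) + 1 < n + 1 := by omega
          have := hf.2 (Fin.castSucc j) (by simpa using h')
          have he : (⟨((Fin.castSucc j : Fin (n+1)) : ℕ) + 1, by simpa using h'⟩ : Fin (n + 1))
              = Fin.last n := by
            apply Fin.ext; simp [hj]
          rw [he] at this
          simpa using this
        · intro j h
          have h' : ((Fin.castSucc j : Fin (n+1)) : ℕ) + 1 < n + 1 := by
            simp only [Fin.coe_castSucc]; omega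
          have := hf.2 (Fin.castSucc j) h'
          have he : (⟨((Fin.castSucc j : Fin (n+1)) : ℕ) + 1, h'⟩ : Fin (n + 1))
              = Fin.castSucc ⟨(j : ℕ) + 1, h⟩ := by apply Fin.ext; simp
          rw [he] at this
          simpa using this⟩⟩
  invFun := fun ⟨v, g, hg⟩ =>
    ⟨Fin.snoc g (v : ℕ), by
      constructor
      · intro j hj
        have hj' : j = Fin.last n := by apply Fin.ext; simpa using hj
        rw [hj', Fin.snoc_last]
        exact Nat.lt_succ_iff.mp v.isLt
      · intro j h
        have hjn : (j : ℕ) < n := by omega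
        have hj' : j = Fin.castSucc ⟨(j : ℕ), hjn⟩ := by apply Fin.ext; simp
        have h5 : Fin.snoc (α := fun _ => ℕ) g (v : ℕ) j = g ⟨(j : ℕ), hjn⟩ :=
          (congrArg (fun t => Fin.snoc (α := fun _ => ℕ) g (v : ℕ) t) hj').trans
            (Fin.snoc_castSucc (α := fun _ => ℕ) (p := g) (x := (v : ℕ)) (i := ⟨(j : ℕ), hjn⟩))
        rw [h5]
        rcases Nat.lt_or_ge ((j : ℕ) + 1) n with h2 | h2
        · have he : (⟨(j : ℕ) + 1, h⟩ : Fin (n + 1))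
              = Fin.castSucc ⟨(j : ℕ) + 1, h2⟩ := by apply Fin.ext; simp
          rw [he, Fin.snoc_castSucc]
          exact hg.2 ⟨(j : ℕ), hjn⟩ h2
        · have h3 : (j : ℕ) + 1 = n := by omega
          have he : (⟨(j : ℕ) + 1, h⟩ : Fin (n + 1)) = Fin.last n := by
            apply Fin.ext; simpa using h3
          rw [he, Fin.snoc_last]
          exact hg.1 ⟨(j : ℕ), hjn⟩ h3⟩
  left_inv := by
    rintro ⟨f, hf⟩
    apply Subtype.ext
    funext i
    induction i using Fin.lastCases with
    | last => simp
    | cast i => simp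
  right_inv := by
    rintro ⟨v, g, hg⟩
    refine sigma_sub_ext ?_ ?_
    · apply Fin.ext
      simp
    · funext i
      simp

/-- A recursively defined finite type with `D n m` elements. -/
def T : ℕ → ℕ → Type
  | 0, _ => PUnit
  | n + 1, m => Σ v : Fin (m + 1), T n ((v : ℕ) + 1)

instance instTFintype : ∀ n m, Fintype (T n m)
  | 0, _ => inferInstanceAs (Fintype PUnit)
  | n + 1, m =>
    letI : ∀ v : Fin (m + 1), Fintype (T n ((v : ℕ) + 1)) := fun v => instTFintype n _
    inferInstanceAs (Fintype (Σ v : Fin (m + 1), T n ((v : ℕ) + 1)))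

lemma card_T : ∀ n m, Fintype.card (T n m) = D n m
  | 0, m => by simp [T, D_zero]; exact Fintype.card_eq_one_iff.mpr ⟨PUnit.unit, fun _ => rfl⟩
  | n + 1, m => by
    have hc : Fintype.card (T (n + 1) m)
        = Fintype.card (Σ v : Fin (m + 1), T n ((v : ℕ) + 1)) :=
      Fintype.card_congr (Equiv.cast rfl)
    rw [hc, Fintype.card_sigma, D_succ,
      ← Fin.sum_univ_eq_sum_range (fun v => D n (v + 1)) (m + 1)]
    exact Finset.sum_congr rfl fun v _ => card_T n _

def germEquivT : ∀ n m, {f : Fin n → ℕ // P n m f} ≃ T n m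
  | 0, m =>
    { toFun := fun _ => PUnit.unit
      invFun := fun _ => ⟨fun i => i.elim0, ⟨fun j => j.elim0, fun j => j.elim0⟩⟩
      left_inv := fun ⟨f, _⟩ => Subtype.ext (funext fun i => i.elim0)
      right_inv := fun _ => rfl }
  | n + 1, m => (step n m).trans (Equiv.sigmaCongrRight fun v => germEquivT n ((v : ℕ) + 1))

lemma card_P (n m : ℕ) : Nat.card {f : Fin n → ℕ // P n m f} = D n m := by
  rw [Nat.card_congr (germEquivT n m), Nat.card_eq_fintype_card, card_T]

lemma isGerm_iff (k : ℕ) (hk : 1 ≤ k) (f : Fin (k - 1) → ℕ) :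
    IsGerm k f ↔ P (k - 1) 1 f := by
  constructor
  · rintro ⟨h1, h2⟩
    exact ⟨fun j hj => h1 j (by omega), h2⟩
  · rintro ⟨h1, h2⟩
    exact ⟨fun j hj => h1 j (by omega), h2⟩

/-- The number of `k`-germs equals the `k`-th Catalan number `(2k)!/(k!(k+1)!)`. -/
theorem stmt0 (k : ℕ) (hk : 1 ≤ k) :
    Nat.card {f : Fin (k - 1) → ℕ // IsGerm k f} =
      (2 * k).factorial / (k.factorial * (k + 1).factorial) := by
  have hcard : Nat.card {f : Fin (k - 1) → ℕ // IsGerm k f} = catalan k := by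
    have e : {f : Fin (k - 1) → ℕ // IsGerm k f} ≃ {f : Fin (k - 1) → ℕ // P (k - 1) 1 f} :=
      Equiv.subtypeEquivRight (isGerm_iff k hk)
    rw [Nat.card_congr e, card_P, D_one_eq_catalan, Nat.sub_add_cancel hk]
  rw [hcard]
  have key : (2 * k).factorial = catalan k * (k.factorial * (k + 1).factorial) := by
    have h1 : (k + 1) * catalan k = Nat.centralBinom k := succ_mul_catalan_eq_centralBinom k
    have h2 : (2 * k).choose k * k.factorial * (2 * k - k).factorial = (2 * k).factorial :=
      Nat.choose_mul_factorial_mul_factorial (by omega)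
    have h3 : 2 * k - k = k := by omega
    rw [h3] at h2
    have h4 : Nat.centralBinom k = (2 * k).choose k := rfl
    calc (2 * k).factorial = (2 * k).choose k * k.factorial * k.factorial := h2.symm
      _ = ((k + 1) * catalan k) * k.factorial * k.factorial := by rw [h1, h4]
      _ = catalan k * (k.factorial * ((k + 1) * k.factorial)) := by ring
      _ = catalan k * (k.factorial * (k + 1).factorial) := by rw [Nat.factorial_succ]
  exact (Nat.div_eq_of_eq_mul_left (Nat.mul_pos k.factorial_pos (k + 1).factorial_pos) key).symm
end

section
/- For every integer k ≥ 1 and n = 2k+1, the number of orbits of the translation action of Z_n on the k-element subsets of Z_n (where i ∈ Z_n sends A to A + i = { a + i mod n : a ∈ A }) equals the k-th Catalan number C_k = (2k)!/(k!·(k+1)!). -/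
open Finset

private def orbZ (k : ℕ) (A : Finset (ZMod (2 * k + 1))) : Set (Finset (ZMod (2 * k + 1))) :=
  {B | ∃ i : ZMod (2 * k + 1), B = A.image (· + i)}

private lemma image_add_add (k : ℕ) (A : Finset (ZMod (2 * k + 1))) (i j : ZMod (2 * k + 1)) :
    (A.image (· + i)).image (· + j) = A.image (· + (i + j)) := by
  rw [Finset.image_image]
  congr 1
  funext a
  simp [Function.comp, add_assoc]

private lemma orbZ_image (k : ℕ) (A : Finset (ZMod (2 * k + 1))) (i : ZMod (2 * k + 1)) :
    orbZ k (A.image (· + i)) = orbZ k A := by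
  ext B
  constructor
  · rintro ⟨j, rfl⟩
    exact ⟨i + j, (image_add_add k A i j)⟩
  · rintro ⟨j, rfl⟩
    refine ⟨j - i, ?_⟩
    rw [image_add_add]
    congr 2
    simp

private lemma free_lemma (k : ℕ) (A : Finset (ZMod (2 * k + 1)))
    (hA : A.card = k) (i : ZMod (2 * k + 1)) (h : A.image (· + i) = A) : i = 0 := by
  have hsum : ∑ x ∈ A.image (· + i), x = ∑ x ∈ A, x := by rw [h]
  rw [Finset.sum_image (fun a _ b _ hab => by exact add_right_cancel hab)] at hsum
  rw [Finset.sum_add_distrib, Finset.sum_const, hA] at hsum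
  have h4 : (k : ℕ) • i = 0 := by
    have := add_eq_left.mp hsum
    exact this
  rw [nsmul_eq_mul] at h4
  have hc : ((2 * k + 1 : ℕ) : ZMod (2 * k + 1)) = 0 := ZMod.natCast_self _
  push_cast at hc
  linear_combination -2 * h4 + i * hc

/-- The number of orbits of the translation action of `ZMod (2k+1)` on the `k`-element
subsets of `ZMod (2k+1)` equals the `k`-th Catalan number `(2k)!/(k!(k+1)!)`.
An orbit is a set of the form `{B | ∃ i, B = A + i}` for some `k`-subset `A`. -/
theorem stmt3 (k : ℕ) (hk : 1 ≤ k) :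
    Nat.card {O : Set (Finset (ZMod (2 * k + 1))) //
      ∃ A : Finset (ZMod (2 * k + 1)), A.card = k ∧
        O = {B | ∃ i : ZMod (2 * k + 1), B = A.image (· + i)}} =
      (2 * k).factorial / (k.factorial * (k + 1).factorial) := by
  classical
  have hcardS : Nat.card {A : Finset (ZMod (2 * k + 1)) // A.card = k} = (2 * k + 1).choose k := by
    rw [Nat.card_eq_fintype_card, Fintype.card_finset_len, ZMod.card]
  set T := {O : Set (Finset (ZMod (2 * k + 1))) //
      ∃ A : Finset (ZMod (2 * k + 1)), A.card = k ∧ O = orbZ k A} with hT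
  show Nat.card T = _
  have hrep : ∀ t : T, (Classical.choose t.2).card = k ∧ t.1 = orbZ k (Classical.choose t.2) :=
    fun t => Classical.choose_spec t.2
  set rep : T → Finset (ZMod (2 * k + 1)) := fun t => Classical.choose t.2 with hrepdef
  have key : Nat.card T * (2 * k + 1) = (2 * k + 1).choose k := by
    have keq : Nat.card (T × ZMod (2 * k + 1)) = Nat.card {A : Finset (ZMod (2 * k + 1)) // A.card = k} := by
      refine Nat.card_eq_of_bijective
        (fun p : T × ZMod (2 * k + 1) => (⟨(rep p.1).image (· + p.2), by
          rw [Finset.card_image_of_injective _ (add_left_injective p.2)]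
          exact (hrep p.1).1⟩ : {A : Finset (ZMod (2 * k + 1)) // A.card = k})) ⟨?_, ?_⟩
      · rintro ⟨t, i⟩ ⟨t', i'⟩ hF
        have him : (rep t).image (· + i) = (rep t').image (· + i') := congrArg Subtype.val hF
        have htt' : t = t' := by
          apply Subtype.ext
          rw [(hrep t).2, (hrep t').2, ← orbZ_image k (rep t) i, ← orbZ_image k (rep t') i', him]
        subst htt'
        have h2 : (rep t).image (· + (i + -i')) = rep t := by
          rw [← image_add_add, him, image_add_add]
          simp
        have := free_lemma k (rep t) (hrep t).1 _ h2
        have hii : i = i' := by linear_combination this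
        rw [hii]
      · rintro ⟨A, hA⟩
        have ht : ∃ A' : Finset (ZMod (2 * k + 1)), A'.card = k ∧ orbZ k A = orbZ k A' :=
          ⟨A, hA, rfl⟩
        set t : T := ⟨orbZ k A, A, hA, rfl⟩ with htdef
        have hmem : A ∈ orbZ k (rep t) := by
          rw [← (hrep t).2]
          exact ⟨0, by simp⟩
        obtain ⟨i, hi⟩ := hmem
        exact ⟨⟨t, i⟩, Subtype.ext hi.symm⟩
    rw [Nat.card_prod, Nat.card_zmod, hcardS] at keq
    exact keq
  -- arithmetic
  have e1 : (2 * k).choose k * k.factorial * k.factorial = (2 * k).factorial := by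
    have := Nat.choose_mul_factorial_mul_factorial (show k ≤ 2 * k by omega)
    simpa [show 2 * k - k = k by omega] using this
  have e2 : (k + 1) * catalan k = (2 * k).choose k := by
    rw [succ_mul_catalan_eq_centralBinom, Nat.centralBinom]
  have e3 : (2 * k).factorial = catalan k * (k.factorial * (k + 1).factorial) := by
    rw [← e1, ← e2, Nat.factorial_succ]
    ring
  have e4 : (2 * k).factorial / (k.factorial * (k + 1).factorial) = catalan k := by
    rw [e3, Nat.mul_div_cancel]
    positivity
  have e5 : (2 * k + 1).choose k * (k.factorial * (k + 1).factorial) = (2 * k + 1).factorial := by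
    have := Nat.choose_mul_factorial_mul_factorial (show k ≤ 2 * k + 1 by omega)
    simpa [show 2 * k + 1 - k = k + 1 by omega, mul_assoc] using this
  have e6 : (2 * k + 1).choose k = catalan k * (2 * k + 1) := by
    have h7 : (2 * k + 1).choose k * (k.factorial * (k + 1).factorial)
        = (catalan k * (2 * k + 1)) * (k.factorial * (k + 1).factorial) := by
      rw [e5, Nat.factorial_succ, e3]
      ring
    exact Nat.eq_of_mul_eq_mul_right (by positivity) h7
  rw [e4]
  rw [e6] at key
  exact Nat.eq_of_mul_eq_mul_right (by omega) key
end

section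
/- Let k ≥ 1 and n = 2k+1. There is a group homomorphism φ from the dihedral group of order 2n into the automorphism group of the middle-levels graph M_k such that φ sends the rotation generator to the translation automorphism A ↦ A + 1 = { a + 1 mod n : a ∈ A } and sends a reflection generator to the complemented reversal ℵ. Moreover, the resulting action of the dihedral group on the vertices of M_k is free: every nonidentity element of the dihedral group moves every vertex. -/
/-- Vertices of the middle-levels graph: the `k`- and `(k+1)`-element subsets of
`ZMod (2k+1)`. -/
abbrev Vert (k : ℕ) := {A : Finset (ZMod (2 * k + 1)) // A.card = k ∨ A.card = k + 1}

/-- The middle-levels graph `M_k`: `A` is adjacent to `A′` iff one strictly contains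
the other. -/
def middleLevels (k : ℕ) : SimpleGraph (Vert k) where
  Adj A B := A.1 ⊂ B.1 ∨ B.1 ⊂ A.1
  symm := ⟨fun _ _ h => h.symm⟩
  loopless := ⟨fun _ h => h.elim (fun h' => ssubset_irrefl _ h') (fun h' => ssubset_irrefl _ h')⟩

/-- The complemented reversal `ℵ(A) = { n−1−j : j ∈ Z_n \ A }` on subsets of `Z_n`. -/
def aleph (n : ℕ) [NeZero n] (A : Finset (ZMod n)) : Finset (ZMod n) :=
  Aᶜ.image (fun j => (n : ZMod n) - 1 - j)

namespace Stmt6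

variable {n : ℕ} [NeZero n]

lemma compl_image (f : ZMod n → ZMod n) (hf : Function.Bijective f) (A : Finset (ZMod n)) :
    (A.image f)ᶜ = Aᶜ.image f := by
  ext x
  obtain ⟨a, rfl⟩ := hf.2 x
  simp only [Finset.mem_compl, Finset.mem_image]
  constructor
  · intro h
    exact ⟨a, fun ha => h ⟨a, ha, rfl⟩, rfl⟩
  · rintro ⟨b, hb, hba⟩ ⟨c, hc, hca⟩
    exact hb ((hf.1 (hba.trans hca.symm)) ▸ hc)

lemma addOrderOf_dvd_card_of_invariant (i : ZMod n) :
    ∀ A : Finset (ZMod n), A.image (· + i) = A → addOrderOf i ∣ A.card := by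
  intro A
  induction A using Finset.strongInduction with
  | _ A ih =>
    intro h
    rcases A.eq_empty_or_nonempty with rfl | ⟨x, hx⟩
    · simp
    set d := addOrderOf i with hd
    have hd0 : 0 < d := addOrderOf_pos i
    have hmem : ∀ m : ℕ, x + m • i ∈ A := by
      intro m
      induction m with
      | zero => simpa using hx
      | succ m ihm =>
        have h2 : (x + m • i) + i ∈ A.image (· + i) := Finset.mem_image_of_mem _ ihm
        rw [h] at h2
        have e : x + (m + 1) • i = (x + m • i) + i := by rw [succ_nsmul, ← add_assoc]
        rwa [e]
    set O : Finset (ZMod n) := (Finset.range d).image (fun m => x + m • i) with hO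
    have hOsub : O ⊆ A := by
      intro y hy
      rw [hO, Finset.mem_image] at hy
      obtain ⟨m, -, rfl⟩ := hy
      exact hmem m
    have hinj : Set.InjOn (fun m : ℕ => x + m • i) (Finset.range d) := by
      have key : ∀ a b : ℕ, a ≤ b → b < d → x + a • i = x + b • i → a = b := by
        intro a b hab hbd hEq
        obtain ⟨c, rfl⟩ := Nat.exists_eq_add_of_le hab
        have h0 : c • i = 0 := by
          rw [add_nsmul, ← add_assoc] at hEq
          exact left_eq_add.mp hEq
        have hdc : d ∣ c := addOrderOf_dvd_iff_nsmul_eq_zero.mpr h0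
        have hc0 : c = 0 := Nat.eq_zero_of_dvd_of_lt hdc (by omega)
        omega
      intro a ha b hb hEq
      simp only [Finset.coe_range, Set.mem_Iio] at ha hb
      rcases le_total a b with hab | hba
      · exact key a b hab hb hEq
      · exact (key b a hba ha hEq.symm).symm
    have hcardO : O.card = d := by
      rw [hO, Finset.card_image_of_injOn hinj, Finset.card_range]
    have hnsmul_mod : ∀ m : ℕ, (m % d) • i = m • i := by
      intro m
      conv_rhs => rw [← Nat.div_add_mod m d]
      rw [add_nsmul, mul_nsmul, hd, addOrderOf_nsmul_eq_zero, smul_zero, zero_add]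
    have hOinv : O.image (· + i) = O := by
      apply Finset.eq_of_subset_of_card_le
      · intro y hy
        rw [Finset.mem_image] at hy
        obtain ⟨z, hz, rfl⟩ := hy
        rw [hO, Finset.mem_image] at hz ⊢
        obtain ⟨m, hm, rfl⟩ := hz
        refine ⟨(m + 1) % d, Finset.mem_range.mpr (Nat.mod_lt _ hd0), ?_⟩
        show x + ((m + 1) % d) • i = x + m • i + i
        rw [hnsmul_mod, succ_nsmul, ← add_assoc]
      · rw [Finset.card_image_of_injective _ (add_left_injective i)]
    have hAO : (A \ O).image (· + i) = A \ O := by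
      rw [Finset.image_sdiff _ _ (add_left_injective i), h, hOinv]
    have hOne : O.Nonempty := ⟨x, by
      rw [hO, Finset.mem_image]
      exact ⟨0, Finset.mem_range.mpr hd0, by simp⟩⟩
    have hdvd : d ∣ (A \ O).card := ih (A \ O) (Finset.sdiff_ssubset hOsub hOne) hAO
    have hcs : (A \ O).card = A.card - d := by rw [Finset.card_sdiff_of_subset hOsub, hcardO]
    have hle : d ≤ A.card := hcardO ▸ Finset.card_le_card hOsub
    obtain ⟨c, hc⟩ := hdvd
    rw [hcs] at hc
    have hA : A.card = d * c + d := by omega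
    exact ⟨c + 1, by rw [hA]; ring⟩

/-- Translation permutation on finsets. -/
def trP (i : ZMod n) : Equiv.Perm (Finset (ZMod n)) := (Equiv.addRight i).finsetCongr

lemma trP_apply (i : ZMod n) (A : Finset (ZMod n)) : trP i A = A.image (· + i) := by
  simp [trP, Equiv.finsetCongr_apply, Finset.map_eq_image]

/-- Complemented reflection permutation on finsets. -/
def srP (i : ZMod n) : Equiv.Perm (Finset (ZMod n)) :=
  (⟨compl, compl, compl_compl, compl_compl⟩ : Equiv.Perm (Finset (ZMod n))).trans
    (Equiv.subLeft (-1 - i)).finsetCongr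

lemma srP_apply (i : ZMod n) (A : Finset (ZMod n)) :
    srP i A = Aᶜ.image (fun x => -1 - i - x) := by
  simp only [srP, Equiv.trans_apply, Equiv.coe_fn_mk, Equiv.finsetCongr_apply,
    Finset.map_eq_image]
  rfl

lemma sub_inj (a : ZMod n) : Function.Injective (fun x : ZMod n => a - x) :=
  fun x y h => by
    have : a - x = a - y := h
    have := sub_right_injective this
    exact this

variable (k : ℕ)

lemma card_le_n (A : Finset (ZMod (2 * k + 1))) : A.card ≤ 2 * k + 1 := by
  have := Finset.card_le_univ A
  rwa [ZMod.card] at this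

lemma trP_card (i : ZMod (2 * k + 1)) (A : Finset (ZMod (2 * k + 1))) :
    (trP i A).card = A.card := by
  rw [trP_apply, Finset.card_image_of_injective _ (add_left_injective i)]

lemma srP_card (i : ZMod (2 * k + 1)) (A : Finset (ZMod (2 * k + 1))) :
    (srP i A).card = 2 * k + 1 - A.card := by
  rw [srP_apply, Finset.card_image_of_injective _ (sub_inj (-1 - i)),
    Finset.card_compl, ZMod.card]

/-- The underlying action of the dihedral group on vertices. -/
def act : DihedralGroup (2 * k + 1) → Equiv.Perm (Vert k)
  | .r i => (trP i).subtypePerm (fun A => by rw [trP_card])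
  | .sr i => (srP i).subtypePerm (fun A => by
      have hA := card_le_n k A
      rw [srP_card]
      omega)

lemma act_r_apply (i : ZMod (2 * k + 1)) (v : Vert k) :
    (act k (.r i) v).1 = v.1.image (· + i) := by
  simp [act, Equiv.Perm.subtypePerm_apply, trP_apply]

lemma act_sr_apply (i : ZMod (2 * k + 1)) (v : Vert k) :
    (act k (.sr i) v).1 = v.1ᶜ.image (fun x => -1 - i - x) := by
  simp [act, Equiv.Perm.subtypePerm_apply, srP_apply]

lemma add_bij (j : ZMod (2 * k + 1)) : Function.Bijective (fun x : ZMod (2 * k + 1) => x + j) :=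
  (Equiv.addRight j).bijective

lemma sub_bij (a : ZMod (2 * k + 1)) : Function.Bijective (fun x : ZMod (2 * k + 1) => a - x) :=
  (Equiv.subLeft a).bijective

/-- The homomorphism. -/
def phi : DihedralGroup (2 * k + 1) →* Equiv.Perm (Vert k) :=
  MonoidHom.mk' (act k) (by
    rintro (i | i) (j | j) <;>
      · refine Equiv.ext fun v => Subtype.ext ?_
        simp only [DihedralGroup.r_mul_r, DihedralGroup.r_mul_sr, DihedralGroup.sr_mul_r,
          DihedralGroup.sr_mul_sr, Equiv.Perm.mul_apply, act_r_apply, act_sr_apply]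
        first
        | (rw [Finset.image_image]; apply Finset.image_congr; intro x _
           simp only [Function.comp_apply]; ring)
        | (rw [compl_image _ (add_bij k j), Finset.image_image]
           apply Finset.image_congr; intro x _; simp only [Function.comp_apply]; ring)
        | (rw [compl_image _ (sub_bij k (-1 - j)), compl_compl, Finset.image_image]
           apply Finset.image_congr; intro x _; simp only [Function.comp_apply]; ring))

lemma phi_apply_coe (g : DihedralGroup (2 * k + 1)) (v : Vert k) :
    ((phi k) g v).1 = (act k g v).1 := rfl

end Stmt6

/-- There is a homomorphism `φ` of the dihedral group of order `2(2k+1)` into the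
permutations of the vertices of `M_k` whose image consists of automorphisms of `M_k`,
sending the rotation generator `r 1` to translation `A ↦ A + 1` and the reflection
generator `sr 0` to the complemented reversal `ℵ`; moreover the resulting action is
free: every nonidentity element moves every vertex. -/
theorem stmt6 (k : ℕ) (hk : 1 ≤ k) :
    ∃ φ : DihedralGroup (2 * k + 1) →* Equiv.Perm (Vert k),
      (∀ g : DihedralGroup (2 * k + 1), ∀ v w : Vert k,
        (middleLevels k).Adj (φ g v) (φ g w) ↔ (middleLevels k).Adj v w) ∧
      (∀ v : Vert k, (φ (DihedralGroup.r 1) v).1 = v.1.image (· + 1)) ∧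
      (∀ v : Vert k, (φ (DihedralGroup.sr 0) v).1 = aleph (2 * k + 1) v.1) ∧
      (∀ g : DihedralGroup (2 * k + 1), g ≠ 1 → ∀ v : Vert k, φ g v ≠ v) := by
  refine ⟨Stmt6.phi k, ?_, ?_, ?_, ?_⟩
  · -- adjacency preservation
    have him : ∀ (f : ZMod (2 * k + 1) → ZMod (2 * k + 1)), Function.Injective f →
        ∀ A B : Finset (ZMod (2 * k + 1)), A.image f ⊂ B.image f ↔ A ⊂ B := by
      intro f hf A B
      rw [Finset.ssubset_def, Finset.ssubset_def,
        Finset.image_subset_image_iff hf, Finset.image_subset_image_iff hf]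
    have hcompl : ∀ A B : Finset (ZMod (2 * k + 1)), Aᶜ ⊂ Bᶜ ↔ B ⊂ A := by
      intro A B
      rw [← Finset.lt_iff_ssubset, ← Finset.lt_iff_ssubset, compl_lt_compl_iff_lt]
    rintro (i | i) v w <;>
      simp only [middleLevels, Stmt6.phi_apply_coe, Stmt6.act_r_apply,
        Stmt6.act_sr_apply]
    · rw [him _ (add_left_injective i), him _ (add_left_injective i)]
    · rw [him _ (Stmt6.sub_inj (-1 - i)), him _ (Stmt6.sub_inj (-1 - i)),
        hcompl, hcompl]
      exact or_comm
  · intro v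
    exact Stmt6.act_r_apply k 1 v
  · intro v
    rw [show (Stmt6.phi k) (DihedralGroup.sr 0) v = Stmt6.act k (.sr 0) v from rfl]
    rw [Stmt6.act_sr_apply]
    unfold aleph
    apply Finset.image_congr
    intro x _
    rw [ZMod.natCast_self]
    ring
  · rintro (i | i) hg v hv
    · -- rotation case
      have hi : i ≠ 0 := by
        rintro rfl
        exact hg DihedralGroup.one_def.symm
      have hinv : v.1.image (· + i) = v.1 := by
        rw [← Stmt6.act_r_apply k i v]
        exact congrArg Subtype.val hv
      have hdvd := Stmt6.addOrderOf_dvd_card_of_invariant i v.1 hinv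
      have hdn : addOrderOf i ∣ 2 * k + 1 := by
        have := addOrderOf_dvd_card (x := i)
        rwa [ZMod.card] at this
      have hone : addOrderOf i ≠ 1 := by
        rw [Ne, AddMonoid.addOrderOf_eq_one_iff]
        exact hi
      rcases v.2 with hc | hc <;> rw [hc] at hdvd
      · have h2k : addOrderOf i ∣ 2 * k := hdvd.mul_left 2
        have h1 : addOrderOf i ∣ 1 := by
          have := Nat.dvd_sub hdn h2k
          simpa using this
        exact hone (Nat.dvd_one.mp h1)
      · have h2k : addOrderOf i ∣ 2 * (k + 1) := hdvd.mul_left 2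
        have h1 : addOrderOf i ∣ 1 := by
          have := Nat.dvd_sub h2k hdn
          have he : 2 * (k + 1) - (2 * k + 1) = 1 := by omega
          rwa [he] at this
        exact hone (Nat.dvd_one.mp h1)
    · -- reflection case
      have hinv : v.1ᶜ.image (fun x => -1 - i - x) = v.1 := by
        rw [← Stmt6.act_sr_apply k i v]
        exact congrArg Subtype.val hv
      have hcard : v.1ᶜ.card = v.1.card := by
        conv_rhs => rw [← hinv]
        rw [Finset.card_image_of_injective _ (Stmt6.sub_inj (-1 - i))]
      rw [Finset.card_compl, ZMod.card] at hcard
      have hle := Stmt6.card_le_n k v.1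
      rcases v.2 with hc | hc <;> omega
end

section
/- Let k ≥ 1 and n = 2k+1, and consider the action of the dihedral group of order 2n on the vertex set of the middle-levels graph M_k in which the rotation generator acts by A ↦ A + 1 = { a + 1 mod n : a ∈ A } and a reflection generator acts by the complemented reversal ℵ. The number of orbits of this action on the vertices of M_k equals the k-th Catalan number C_k = (2k)!/(k!·(k+1)!). -/
namespace Stmt7Aux

lemma f_invol (n : ℕ) [NeZero n] :
    Function.Involutive (fun j : ZMod n => (n : ZMod n) - 1 - j) := fun j => by
  simp [sub_sub_cancel]

lemma compl_image {n : ℕ} [NeZero n] {f : ZMod n → ZMod n} (hf : Function.Bijective f)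
    (s : Finset (ZMod n)) : (s.image f)ᶜ = sᶜ.image f := by
  ext x
  obtain ⟨y, rfl⟩ := hf.2 x
  simp [hf.1.eq_iff]

lemma card_aleph {n : ℕ} [NeZero n] (A : Finset (ZMod n)) :
    (aleph n A).card = n - A.card := by
  rw [aleph, Finset.card_image_of_injective _ (f_invol n).injective, Finset.card_compl,
    ZMod.card]

lemma aleph_aleph {n : ℕ} [NeZero n] (A : Finset (ZMod n)) : aleph n (aleph n A) = A := by
  rw [aleph, aleph, compl_image (f_invol n).bijective, compl_compl, Finset.image_image,
    Function.Involutive.comp_self (f_invol n), Finset.image_id]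

lemma image_add_comp {n : ℕ} [NeZero n] (A : Finset (ZMod n)) (i j : ZMod n) :
    (A.image (· + i)).image (· + j) = A.image (· + (i + j)) := by
  rw [Finset.image_image]
  exact Finset.image_congr (fun x _ => (add_assoc x i j))

lemma aleph_image_add {n : ℕ} [NeZero n] (A : Finset (ZMod n)) (i : ZMod n) :
    aleph n (A.image (· + i)) = (aleph n A).image (· + (-i)) := by
  rw [aleph, aleph, compl_image (f := (· + i)) ⟨add_left_injective i, fun x => ⟨x - i, sub_add_cancel x i⟩⟩, Finset.image_image,
    Finset.image_image]
  exact Finset.image_congr (fun x _ => by simp [Function.comp]; ring)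

end Stmt7Aux

namespace Stmt7Aux

variable {k : ℕ}

/-- k-element subsets of `ZMod (2k+1)`. -/
abbrev Ks (k : ℕ) := {A : Finset (ZMod (2 * k + 1)) // A.card = k}

def trans (A : Ks k) (i : ZMod (2 * k + 1)) : Ks k :=
  ⟨A.1.image (· + i), by rw [Finset.card_image_of_injective _ (add_left_injective i)]; exact A.2⟩

lemma free (hk : 1 ≤ k) (A : Ks k) (i : ZMod (2 * k + 1))
    (h : A.1.image (· + i) = A.1) : i = 0 := by
  have hsum : ∑ x ∈ A.1.image (· + i), x = ∑ x ∈ A.1, (x + i) :=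
    Finset.sum_image (fun x _ y _ h => by simpa using h)
  rw [h, Finset.sum_add_distrib, Finset.sum_const, A.2] at hsum
  have hki : (k : ZMod (2 * k + 1)) * i = 0 := by
    have h0 : k • i = 0 := left_eq_add.mp hsum
    rwa [nsmul_eq_mul] at h0
  have hcop : Nat.Coprime k (2 * k + 1) := by
    have : Nat.Coprime k (1 + k * 2) := (Nat.coprime_add_mul_left_right k 1 2).mpr (by simp)
    simpa [Nat.add_comm, Nat.mul_comm] using this
  have hu : IsUnit ((k : ℕ) : ZMod (2 * k + 1)) := by
    rw [← ZMod.coe_unitOfCoprime k hcop]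
    exact (ZMod.unitOfCoprime k hcop).isUnit
  exact (hu.mul_right_eq_zero).mp hki

def ksetoid (k : ℕ) : Setoid (Ks k) where
  r A B := ∃ i, B.1 = A.1.image (· + i)
  iseqv := by
    constructor
    · exact fun A => ⟨0, by simp⟩
    · rintro A B ⟨i, hi⟩
      exact ⟨-i, by rw [hi, image_add_comp]; simp⟩
    · rintro A B C ⟨i, hi⟩ ⟨j, hj⟩
      exact ⟨i + j, by rw [hj, hi, image_add_comp]⟩

def KQ (k : ℕ) := Quotient (ksetoid k)

noncomputable def fiberEquiv (hk : 1 ≤ k) (q : KQ k) :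
    ZMod (2 * k + 1) ≃ {A : Ks k // Quotient.mk (ksetoid k) A = q} := by
  refine Equiv.ofBijective (fun i => ⟨trans q.out i, ?_⟩) ⟨?_, ?_⟩
  · exact (Quotient.sound ((ksetoid k).symm ⟨i, rfl⟩)).trans q.out_eq
  · intro i j hij
    have h : (trans q.out i).1 = (trans q.out j).1 :=
      congrArg Subtype.val (congrArg Subtype.val hij)
    have h2 : q.out.1.image (· + (i + -j)) = q.out.1.image (· + 0) := by
      rw [← image_add_comp]
      show ((trans q.out i).1).image _ = _
      rw [h]
      show ((trans q.out j).1).image _ = _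
      rw [trans, image_add_comp]
      simp
    have h3 := free hk q.out (i + -j) (by simpa using h2)
    have h4 : i - j = 0 := by rwa [sub_eq_add_neg]
    exact sub_eq_zero.mp h4
  · rintro ⟨A, hA⟩
    obtain ⟨i, hi⟩ := (ksetoid k).symm (Quotient.exact (hA.trans q.out_eq.symm))
    exact ⟨i, Subtype.ext (Subtype.ext hi.symm)⟩
noncomputable def ksEquiv (hk : 1 ≤ k) : Ks k ≃ KQ k × ZMod (2 * k + 1) :=
  (Equiv.sigmaFiberEquiv (Quotient.mk (ksetoid k))).symm.trans
    ((Equiv.sigmaCongrRight (fun q => (fiberEquiv hk q).symm)).trans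
      (Equiv.sigmaEquivProd _ _))

lemma card_KQ (hk : 1 ≤ k) : Nat.card (KQ k) * (2 * k + 1) = (2 * k + 1).choose k := by
  have h1 : Nat.card (Ks k) = Nat.card (KQ k) * (2 * k + 1) := by
    rw [Nat.card_congr (ksEquiv hk), Nat.card_prod, Nat.card_zmod]
  rw [← h1, Nat.card_eq_fintype_card, Fintype.card_finset_len, ZMod.card]

def D (v : Vert k) : Set (Vert k) :=
  {w : Vert k | ∃ i : ZMod (2 * k + 1),
    w.1 = v.1.image (· + i) ∨ w.1 = aleph (2 * k + 1) (v.1.image (· + i))}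

lemma self_mem_D (v : Vert k) : v ∈ D v := ⟨0, Or.inl (by simp)⟩

lemma D_trans {v w : Vert k} (j : ZMod (2 * k + 1)) (hw : w.1 = v.1.image (· + j)) :
    D w = D v := by
  ext x
  constructor
  · rintro ⟨i, hx | hx⟩
    · exact ⟨j + i, Or.inl (by rw [hx, hw, image_add_comp])⟩
    · exact ⟨j + i, Or.inr (by rw [hx, hw, image_add_comp])⟩
  · rintro ⟨i, hx | hx⟩
    · refine ⟨-j + i, Or.inl ?_⟩
      rw [hw, image_add_comp, show j + (-j + i) = i by ring]
      exact hx
    · refine ⟨-j + i, Or.inr ?_⟩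
      rw [hw, image_add_comp, show j + (-j + i) = i by ring]
      exact hx

lemma D_aleph_sub {v w : Vert k} (hw : w.1 = aleph (2 * k + 1) v.1) : D w ⊆ D v := by
  rintro x ⟨i, hx | hx⟩
  · refine ⟨-i, Or.inr ?_⟩
    rw [hw] at hx
    rw [aleph_image_add, neg_neg]
    exact hx
  · refine ⟨-i, Or.inl ?_⟩
    rw [hw, show (aleph (2*k+1) v.1).image (· + i)
        = aleph (2*k+1) (v.1.image (· + (-i))) by rw [aleph_image_add, neg_neg],
      aleph_aleph] at hx
    exact hx

lemma D_aleph {v w : Vert k} (hw : w.1 = aleph (2 * k + 1) v.1) : D w = D v :=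
  subset_antisymm (D_aleph_sub hw) (D_aleph_sub (by rw [hw, aleph_aleph]))

def toVert (A : Ks k) : Vert k := ⟨A.1, Or.inl A.2⟩

noncomputable def orbEquiv (hk : 1 ≤ k) :
    KQ k ≃ {O : Set (Vert k) // ∃ v : Vert k, O = D v} := by
  refine Equiv.ofBijective (fun q => ⟨D (toVert q.out), ⟨_, rfl⟩⟩) ⟨?_, ?_⟩
  · intro q q' hqq
    have hD : D (toVert q.out) = D (toVert q'.out) := congrArg Subtype.val hqq
    have hmem : toVert q.out ∈ D (toVert q'.out) := hD ▸ self_mem_D _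
    obtain ⟨i, h1 | h2⟩ := hmem
    · have : (ksetoid k).r q'.out q.out := ⟨i, h1⟩
      rw [← q.out_eq, ← q'.out_eq]
      exact (Quotient.sound this).symm
    · exfalso
      have hcard := congrArg Finset.card h2
      rw [card_aleph, Finset.card_image_of_injective _ (add_left_injective i)] at hcard
      have hc1 : (toVert q.out).1.card = k := q.out.2
      have hc2 : (toVert q'.out).1.card = k := q'.out.2
      omega
  · rintro ⟨O, v, hO⟩
    rcases v.2 with hcard | hcard
    · set u : Ks k := ⟨v.1, hcard⟩ with hu
      refine ⟨Quotient.mk (ksetoid k) u, Subtype.ext ?_⟩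
      obtain ⟨i, hi⟩ := Quotient.exact ((Quotient.mk (ksetoid k) u).out_eq)
      have h1 : D v = D (toVert (Quotient.mk (ksetoid k) u).out) := D_trans i hi
      show D (toVert (Quotient.mk (ksetoid k) u).out) = O
      rw [hO, h1]
    · have hcu : (aleph (2 * k + 1) v.1).card = k := by rw [card_aleph, hcard]; omega
      set u : Ks k := ⟨aleph (2 * k + 1) v.1, hcu⟩ with hu
      refine ⟨Quotient.mk (ksetoid k) u, Subtype.ext ?_⟩
      obtain ⟨i, hi⟩ := Quotient.exact ((Quotient.mk (ksetoid k) u).out_eq)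
      have h2 : D (toVert u) = D v := D_aleph rfl
      have h3 : D (toVert u) = D (toVert (Quotient.mk (ksetoid k) u).out) := D_trans i hi
      show D (toVert (Quotient.mk (ksetoid k) u).out) = O
      rw [hO, ← h2, h3]

lemma catalan_fact : catalan k * (k.factorial * (k + 1).factorial) = (2 * k).factorial := by
  have h2 : (2 * k).choose k * k.factorial * k.factorial = (2 * k).factorial := by
    have := Nat.choose_mul_factorial_mul_factorial (show k ≤ 2 * k by omega)
    simpa [show 2 * k - k = k by omega] using this
  calc catalan k * (k.factorial * (k + 1).factorial)
      = ((k + 1) * catalan k) * k.factorial * k.factorial := by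
        rw [Nat.factorial_succ]; ring
    _ = k.centralBinom * k.factorial * k.factorial := by
        rw [succ_mul_catalan_eq_centralBinom]
    _ = (2 * k).factorial := by rw [Nat.centralBinom]; exact h2

lemma choose_eq : (2 * k + 1).choose k = (2 * k + 1) * catalan k := by
  have e1 : (2 * k + 1).choose k * (k.factorial * (k + 1).factorial)
      = (2 * k + 1).factorial := by
    have := Nat.choose_mul_factorial_mul_factorial (show k ≤ 2 * k + 1 by omega)
    rw [show 2 * k + 1 - k = k + 1 by omega] at this
    rw [← mul_assoc]
    exact this
  have e2 : ((2 * k + 1) * catalan k) * (k.factorial * (k + 1).factorial)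
      = (2 * k + 1).factorial := by
    rw [mul_assoc, catalan_fact, Nat.factorial_succ]
  exact Nat.eq_of_mul_eq_mul_right
    (Nat.mul_pos k.factorial_pos (k + 1).factorial_pos) (e1.trans e2.symm)

end Stmt7Aux

/-- The number of orbits on the vertices of `M_k` of the dihedral action generated by
translations `A ↦ A + i` and the complemented reversal `ℵ` equals the Catalan number
`(2k)!/(k!(k+1)!)`.  The orbit of `v` is `{w | ∃ i, w = v + i or w = ℵ(v + i)}`. -/
theorem stmt7 (k : ℕ) (hk : 1 ≤ k) :
    Nat.card {O : Set (Vert k) // ∃ v : Vert k,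
      O = {w : Vert k | ∃ i : ZMod (2 * k + 1),
        w.1 = v.1.image (· + i) ∨ w.1 = aleph (2 * k + 1) (v.1.image (· + i))}} =
      (2 * k).factorial / (k.factorial * (k + 1).factorial) := by
  have hQ : Nat.card {O : Set (Vert k) // ∃ v : Vert k, O = Stmt7Aux.D v}
      = Nat.card (Stmt7Aux.KQ k) := (Nat.card_congr (Stmt7Aux.orbEquiv hk)).symm
  have hcard := Stmt7Aux.card_KQ (k := k) hk
  rw [Stmt7Aux.choose_eq] at hcard
  have hKQ : Nat.card (Stmt7Aux.KQ k) = catalan k := by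
    have := hcard
    rw [mul_comm (Nat.card (Stmt7Aux.KQ k)) (2 * k + 1)] at this
    exact Nat.eq_of_mul_eq_mul_left (by omega) this
  have hT : (2 * k).factorial / (k.factorial * (k + 1).factorial) = catalan k :=
    Nat.div_eq_of_eq_mul_left (Nat.mul_pos k.factorial_pos (k + 1).factorial_pos)
      (Stmt7Aux.catalan_fact (k := k)).symm
  rw [hT]
  exact hQ.trans hKQ
end

section
/- Let k ≥ 1 and n = 2k+1, and let w : Z_n → {0,1} be any binary string indexed by Z_n. Then the number of rotations j ∈ Z_n for which the rotated string c defined by c(m) = w(m + j) satisfies c(k) = 0 and c(k − i) = 1 − c(k + i) for all i = 1, …, k is at most 2. (Equivalently, any cyclic equivalence class of binary (2k+1)-strings contains at most two representatives of the anti-palindromic form b̄_k ⋯ b̄_1 0 b_1 ⋯ b_k; hence every horizontal edge of the quotient of the middle-levels graph by translations has multiplicity 1 or 2.) -/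
/-- Extended anti-palindromicity: from the conditions for `i = 1, …, k` we get
`w a + w (2t − a) = 1` for every `a ≠ t`. -/
lemma good_ext (k : ℕ) (hk : 1 ≤ k) (w : ZMod (2 * k + 1) → ZMod 2) (t : ZMod (2 * k + 1))
    (h : ∀ i ∈ Finset.Icc 1 k,
        w (t - (i : ZMod (2 * k + 1))) = 1 - w (t + (i : ZMod (2 * k + 1)))) :
    ∀ a : ZMod (2 * k + 1), a ≠ t → w a + w (2 * t - a) = 1 := by
  intro a ha
  set z := a - t with hz
  have hz0 : z ≠ 0 := sub_ne_zero.mpr ha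
  have hzv : ((z.val : ℕ) : ZMod (2 * k + 1)) = z := ZMod.natCast_rightInverse z
  have hv1 : 1 ≤ z.val := Nat.one_le_iff_ne_zero.mpr (fun hh => hz0 (by rwa [ZMod.val_eq_zero] at hh))
  have hv2 : z.val < 2 * k + 1 := ZMod.val_lt z
  by_cases hmk : z.val ≤ k
  · have h1 := h z.val (Finset.mem_Icc.mpr ⟨hv1, hmk⟩)
    rw [hzv, show t - z = 2 * t - a from by rw [hz]; ring,
      show t + z = a from by rw [hz]; ring] at h1
    linear_combination h1
  · push_neg at hmk
    have hle : z.val ≤ 2 * k + 1 := le_of_lt hv2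
    have h1 := h (2 * k + 1 - z.val) (Finset.mem_Icc.mpr ⟨by omega, by omega⟩)
    have hcast : ((2 * k + 1 - z.val : ℕ) : ZMod (2 * k + 1)) = -z := by
      rw [Nat.cast_sub hle, hzv, ZMod.natCast_self]
      ring
    rw [hcast, show t - -z = a from by rw [hz]; ring,
      show t + -z = 2 * t - a from by rw [hz]; ring] at h1
    linear_combination h1

open scoped Classical in
/-- Any binary string `w` of length `n = 2k+1` (indexed by `Z_n`) has at most two
rotations `c = w(· + j)` of the anti-palindromic form
`c(k) = 0` and `c(k−i) = 1 − c(k+i)` for `i = 1, …, k`. -/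
theorem stmt8 (k : ℕ) (hk : 1 ≤ k) (w : ZMod (2 * k + 1) → ZMod 2) :
    (Finset.univ.filter (fun j : ZMod (2 * k + 1) =>
      w ((k : ZMod (2 * k + 1)) + j) = 0 ∧
      ∀ i ∈ Finset.Icc 1 k,
        w ((k : ZMod (2 * k + 1)) - (i : ZMod (2 * k + 1)) + j) =
          1 - w ((k : ZMod (2 * k + 1)) + (i : ZMod (2 * k + 1)) + j))).card ≤ 2 := by
  by_contra hcon
  push_neg at hcon
  rw [Finset.two_lt_card_iff] at hcon
  obtain ⟨a, b, c, ha, hb, hc, hab, hac, hbc⟩ := hcon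
  simp only [Finset.mem_filter] at ha hb hc
  set K : ZMod (2 * k + 1) := (k : ZMod (2 * k + 1)) with hK
  set S : ZMod (2 * k + 1) := K + a with hSdef
  set T : ZMod (2 * k + 1) := K + b with hTdef
  set U : ZMod (2 * k + 1) := K + c with hUdef
  have hS0 : w S = 0 := ha.2.1
  have hT0 : w T = 0 := hb.2.1
  have hU0 : w U = 0 := hc.2.1
  have HS : ∀ x : ZMod (2 * k + 1), x ≠ S → w x + w (2 * S - x) = 1 := by
    refine good_ext k hk w S (fun i hi => ?_)
    rw [show S - (i : ZMod (2 * k + 1)) = K - i + a from by rw [hSdef]; ring,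
      show S + (i : ZMod (2 * k + 1)) = K + i + a from by rw [hSdef]; ring]
    exact ha.2.2 i hi
  have HT : ∀ x : ZMod (2 * k + 1), x ≠ T → w x + w (2 * T - x) = 1 := by
    refine good_ext k hk w T (fun i hi => ?_)
    rw [show T - (i : ZMod (2 * k + 1)) = K - i + b from by rw [hTdef]; ring,
      show T + (i : ZMod (2 * k + 1)) = K + i + b from by rw [hTdef]; ring]
    exact hb.2.2 i hi
  have HU : ∀ x : ZMod (2 * k + 1), x ≠ U → w x + w (2 * U - x) = 1 := by
    refine good_ext k hk w U (fun i hi => ?_)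
    rw [show U - (i : ZMod (2 * k + 1)) = K - i + c from by rw [hUdef]; ring,
      show U + (i : ZMod (2 * k + 1)) = K + i + c from by rw [hUdef]; ring]
    exact hc.2.2 i hi
  have hTS : T ≠ S := fun h => hab (add_left_cancel (hSdef ▸ hTdef ▸ h)).symm
  have hSU : S ≠ U := fun h => hac (add_left_cancel (hSdef ▸ hUdef ▸ h))
  have hTU : T ≠ U := fun h => hbc (add_left_cancel (hTdef ▸ hUdef ▸ h))
  -- w (2S - T) = 1
  have h2st : w (2 * S - T) = 1 := by
    have := HS T hTS
    linear_combination this - hT0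
  by_cases hcase : U = 2 * S - T
  · rw [← hcase, hU0] at h2st
    exact zero_ne_one h2st
  · have F1 : w (2 * U - S) = 1 := by
      have := HU S hSU
      linear_combination this - hS0
    have F2 : w (2 * U - T) = 1 := by
      have := HU T hTU
      linear_combination this - hT0
    have F3 : w (2 * U - (2 * S - T)) = 0 := by
      have := HU (2 * S - T) (fun hh => hcase hh.symm)
      linear_combination this - h2st
    have P : ∀ y : ZMod (2 * k + 1), y ≠ S → y ≠ 2 * S - T →
        w (y + 2 * (T - S)) = w y := by
      intro y hy1 hy2
      have h1 := HS y hy1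
      have h2 := HT (2 * S - y) (fun hh => hy2 (by linear_combination -hh))
      rw [show 2 * T - (2 * S - y) = y + 2 * (T - S) from by ring] at h2
      linear_combination h2 - h1
    by_cases hy1 : 2 * U - T = S
    · have h' : 2 * U - S = T := by linear_combination hy1
      rw [h', hT0] at F1
      exact zero_ne_one F1
    by_cases hy2 : 2 * U - T = 2 * S - T
    · have h' : 2 * U - S = S := by linear_combination hy2
      rw [h', hS0] at F1
      exact zero_ne_one F1
    · have hP := P (2 * U - T) hy1 hy2
      rw [show 2 * U - T + 2 * (T - S) = 2 * U - (2 * S - T) from by ring, F3, F2] at hP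
      exact zero_ne_one hP
end

section
/- Let k ≥ 1, n = 2k+1, and let S be a k-element subset of Z_n. Then the lexical-color map x ↦ c(x, S) is a bijection from the complement Z_n \ S (which has k+1 elements) onto the color set {0, 1, …, k}. -/
/-- The cyclic interval `[y, x) = {y, y+1, …, x−1}` in `Z_n` (empty if `y = x`). -/
def cycInterval (n : ℕ) [NeZero n] (y x : ZMod n) : Finset (ZMod n) :=
  Finset.univ.filter (fun z => (z - y).val < (x - y).val)

/-- The lexical color of `x ∉ S` relative to `S`:
`c(x,S) = |{ y ∈ (Z_n \ S) \ {x} : |[y,x) ∩ S| < |[y,x) ∩ (Z_n \ S)| }|`. -/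
def lexColor (n : ℕ) [NeZero n] (S : Finset (ZMod n)) (x : ZMod n) : ℕ :=
  ((Sᶜ.erase x).filter
    (fun y => (cycInterval n y x ∩ S).card < (cycInterval n y x ∩ Sᶜ).card)).card

namespace Stmt9Aux
variable {n : ℕ} [NeZero n]

lemma val_sub_eq (a b : ZMod n) :
    (a - b).val = if b.val ≤ a.val then a.val - b.val else a.val + n - b.val := by
  split_ifs with h
  · exact ZMod.val_sub h
  · push_neg at h
    have hne : b - a ≠ 0 := by
      intro h0
      have : b = a := by linear_combination h0
      subst this; omega
    have : NeZero (b - a) := ⟨hne⟩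
    have h1 : (a - b) = -(b - a) := by ring
    rw [h1, ZMod.val_neg_of_ne_zero, ZMod.val_sub h.le]
    have := ZMod.val_lt b
    omega

def cnt (A : Finset (ZMod n)) (m : ℕ) : ℕ := (A.filter (fun z => z.val < m)).card

lemma cnt_compl (S : Finset (ZMod n)) (m : ℕ) (hm : m ≤ n) :
    cnt S m + cnt Sᶜ m = m := by
  have hdisj : Disjoint (S.filter (fun z : ZMod n => z.val < m))
      (Sᶜ.filter (fun z : ZMod n => z.val < m)) :=
    Finset.disjoint_filter_filter (disjoint_compl_right)
  have h1 : cnt S m + cnt Sᶜ m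
      = ((Finset.univ : Finset (ZMod n)).filter (fun z => z.val < m)).card := by
    rw [cnt, cnt, ← Finset.card_union_of_disjoint hdisj, ← Finset.filter_union,
      Finset.union_compl]
  rw [h1]
  apply Finset.card_eq_of_bijective (fun i hi => (i : ZMod n))
  · intro z hz
    simp only [Finset.mem_filter, Finset.mem_univ, true_and] at hz
    exact ⟨z.val, hz, by simp [ZMod.natCast_val]⟩
  · intro i hi
    simp only [Finset.mem_filter, Finset.mem_univ, true_and]
    rwa [ZMod.val_cast_of_lt (lt_of_lt_of_le hi hm)]
  · intro i j hi hj hij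
    have h1 := ZMod.val_cast_of_lt (lt_of_lt_of_le hi hm)
    have h2 := ZMod.val_cast_of_lt (lt_of_lt_of_le hj hm)
    rw [← h1, ← h2, hij]

lemma mem_cycInterval {y x z : ZMod n} :
    z ∈ cycInterval n y x ↔ (z - y).val < (x - y).val := by
  simp [cycInterval]

lemma mem_cycInterval_lt {y x z : ZMod n} (h : y.val < x.val) :
    z ∈ cycInterval n y x ↔ y.val ≤ z.val ∧ z.val < x.val := by
  rw [mem_cycInterval, val_sub_eq, val_sub_eq]
  have := ZMod.val_lt z; have := ZMod.val_lt x; have := ZMod.val_lt y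
  split_ifs <;> omega

lemma mem_cycInterval_gt {y x z : ZMod n} (h : x.val < y.val) :
    z ∈ cycInterval n y x ↔ z.val < x.val ∨ y.val ≤ z.val := by
  rw [mem_cycInterval, val_sub_eq, val_sub_eq]
  have := ZMod.val_lt z; have := ZMod.val_lt x; have := ZMod.val_lt y
  split_ifs <;> omega

lemma card_inter_lt (A : Finset (ZMod n)) {y x : ZMod n} (h : y.val < x.val) :
    cnt A y.val + (cycInterval n y x ∩ A).card = cnt A x.val := by
  have h1 : cycInterval n y x ∩ A
      = A.filter (fun z => y.val ≤ z.val ∧ z.val < x.val) := by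
    ext z
    simp [mem_cycInterval_lt h, and_comm]
  have h2 : A.filter (fun z => z.val < y.val)
      ∪ A.filter (fun z => y.val ≤ z.val ∧ z.val < x.val)
      = A.filter (fun z => z.val < x.val) := by
    rw [← Finset.filter_or]
    apply Finset.filter_congr
    intro z _
    omega
  have hdisj : Disjoint (A.filter (fun z => z.val < y.val))
      (A.filter (fun z => y.val ≤ z.val ∧ z.val < x.val)) := by
    apply Finset.disjoint_filter_filter'
    rw [disjoint_iff_inf_le]
    intro z hz
    simp only [Pi.inf_apply, inf_Prop_eq] at hz
    omega
  rw [h1, cnt, cnt, ← h2, Finset.card_union_of_disjoint hdisj]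

lemma card_inter_gt (A : Finset (ZMod n)) {y x : ZMod n} (h : x.val < y.val) :
    cnt A y.val + (cycInterval n y x ∩ A).card = cnt A x.val + A.card := by
  have h1 : cycInterval n y x ∩ A
      = A.filter (fun z => z.val < x.val) ∪ A.filter (fun z => y.val ≤ z.val) := by
    rw [← Finset.filter_or]
    ext z
    simp [mem_cycInterval_gt h, and_comm]
  have hdisj : Disjoint (A.filter (fun z => z.val < x.val))
      (A.filter (fun z => y.val ≤ z.val)) := by
    apply Finset.disjoint_filter_filter'
    rw [disjoint_iff_inf_le]
    intro z hz
    simp only [Pi.inf_apply, inf_Prop_eq] at hz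
    omega
  have h2 : A.filter (fun z => z.val < y.val) ∪ A.filter (fun z => y.val ≤ z.val) = A := by
    rw [← Finset.filter_or]
    apply Finset.filter_true_of_mem
    intro z _
    omega
  have hdisj2 : Disjoint (A.filter (fun z => z.val < y.val))
      (A.filter (fun z => y.val ≤ z.val)) := by
    apply Finset.disjoint_filter_filter'
    rw [disjoint_iff_inf_le]
    intro z hz
    simp only [Pi.inf_apply, inf_Prop_eq] at hz
    omega
  rw [h1, Finset.card_union_of_disjoint hdisj, cnt, cnt]
  have := Finset.card_union_of_disjoint hdisj2
  rw [h2] at this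
  omega

/-- the key: an injective ℤ-valued function whose order encodes the lexColor condition -/
def key (S : Finset (ZMod n)) (z : ZMod n) : ℤ :=
  (n : ℤ) * (2 * (cnt Sᶜ z.val : ℤ) - (z.val : ℤ)) - (z.val : ℤ)

lemma key_lt_iff' {N u v a b : ℤ} (hN : 0 < N) (ha : 0 ≤ a) (ha' : a < N)
    (hb : 0 ≤ b) (hb' : b < N) :
    N * u - a < N * v - b ↔ u < v ∨ (u = v ∧ b < a) := by
  constructor
  · intro h
    rcases lt_trichotomy u v with h' | h' | h'
    · exact Or.inl h'
    · exact Or.inr ⟨h', by rw [h'] at h; linarith⟩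
    · exfalso
      have : N * 1 ≤ N * (u - v) := by
        apply mul_le_mul_of_nonneg_left _ hN.le
        omega
      linarith
  · rintro (h | ⟨rfl, h⟩)
    · have : N * 1 ≤ N * (v - u) := by
        apply mul_le_mul_of_nonneg_left _ hN.le
        omega
      linarith
    · linarith

lemma key_injective (S : Finset (ZMod n)) : Function.Injective (key S) := by
  intro z w h
  unfold key at h
  have hz := ZMod.val_lt z
  have hw := ZMod.val_lt w
  have hn : (0:ℤ) < (n:ℤ) := by exact_mod_cast Nat.pos_of_ne_zero (NeZero.ne n)
  have hdvd : (n:ℤ) ∣ ((w.val : ℤ) - (z.val : ℤ)) := by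
    refine ⟨(2 * (cnt Sᶜ w.val : ℤ) - (w.val : ℤ)) - (2 * (cnt Sᶜ z.val : ℤ) - (z.val : ℤ)), ?_⟩
    linarith
  have h0 : ((w.val : ℤ) - (z.val : ℤ)) = 0 := by
    apply Int.eq_zero_of_abs_lt_dvd hdvd
    rw [abs_sub_lt_iff]
    constructor <;> [skip; skip] <;>
      { have : (w.val : ℤ) < n := by exact_mod_cast hw
        have : (z.val : ℤ) < n := by exact_mod_cast hz
        omega }
  have : z.val = w.val := by omega
  exact ZMod.val_injective n this


lemma cond_iff (S : Finset (ZMod n)) (h1 : 2 * S.card + 1 = n) {y x : ZMod n} (hyx : y ≠ x) :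
    ((cycInterval n y x ∩ S).card < (cycInterval n y x ∩ Sᶜ).card) ↔ key S y < key S x := by
  have hz := ZMod.val_lt y
  have hx' := ZMod.val_lt x
  have hn : (0:ℤ) < (n:ℤ) := by exact_mod_cast Nat.pos_of_ne_zero (NeZero.ne n)
  have hcompl : S.card + Sᶜ.card = n := by
    rw [Finset.card_add_card_compl, ZMod.card]
  have hy1 := cnt_compl S y.val hz.le
  have hx1 := cnt_compl S x.val hx'.le
  have hvne : y.val ≠ x.val := fun hv => hyx (ZMod.val_injective n hv)
  rw [key, key, key_lt_iff' hn (by positivity) (by exact_mod_cast hz)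
    (by positivity) (by exact_mod_cast hx')]
  rcases Nat.lt_or_ge y.val x.val with h | h
  · have hS := card_inter_lt S h
    have hT := card_inter_lt Sᶜ h
    omega
  · have h' : x.val < y.val := by omega
    have hS := card_inter_gt S h'
    have hT := card_inter_gt Sᶜ h'
    omega

lemma cond_iff' (S : Finset (ZMod n)) (h1 : 2 * S.card + 1 = n) (y x : ZMod n) :
    ((cycInterval n y x ∩ S).card < (cycInterval n y x ∩ Sᶜ).card) ↔ key S y < key S x := by
  by_cases hyx : y = x
  · subst hyx
    have hempty : cycInterval n y y = ∅ := by
      ext z; simp [cycInterval]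
    simp [hempty]
  · exact cond_iff S h1 hyx

lemma lexColor_eq_rank (S : Finset (ZMod n)) (h1 : 2 * S.card + 1 = n) (x : ZMod n) :
    lexColor n S x = (Sᶜ.filter (fun y => key S y < key S x)).card := by
  unfold lexColor
  rw [Finset.filter_congr (fun y _ => cond_iff' S h1 y x), Finset.filter_erase,
    Finset.erase_eq_of_notMem (by simp)]

end Stmt9Aux

open Stmt9Aux in
/-- For a `k`-subset `S` of `Z_{2k+1}`, the lexical-color map `x ↦ c(x,S)` is a
bijection from `Z_{2k+1} \ S` onto `{0, 1, …, k}`. -/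
theorem stmt9 (k : ℕ) (hk : 1 ≤ k) (S : Finset (ZMod (2 * k + 1))) (hS : S.card = k) :
    Set.BijOn (fun x => lexColor (2 * k + 1) S x) (↑Sᶜ) {c : ℕ | c ≤ k} := by
  have h1 : 2 * S.card + 1 = 2 * k + 1 := by omega
  have hT : Sᶜ.card = k + 1 := by
    rw [Finset.card_compl, ZMod.card, hS]; omega
  set r : ZMod (2 * k + 1) → ℕ :=
    fun x => (Sᶜ.filter (fun y => key S y < key S x)).card with hr
  have hlex : ∀ x, lexColor (2 * k + 1) S x = r x := fun x => lexColor_eq_rank S h1 x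
  have hsub : ∀ x ∈ Sᶜ, Sᶜ.filter (fun y => key S y < key S x) ⊆ Sᶜ.erase x := by
    intro x hx y hy
    rw [Finset.mem_filter] at hy
    rw [Finset.mem_erase]
    refine ⟨fun h => ?_, hy.1⟩
    subst h; exact lt_irrefl _ hy.2
  have hmaps : ∀ x ∈ Sᶜ, r x ≤ k := by
    intro x hx
    have := Finset.card_le_card (hsub x hx)
    rwa [Finset.card_erase_of_mem hx, hT] at this
  have hinj : Set.InjOn r ↑Sᶜ := by
    intro x hx y hy hxy
    rw [Finset.mem_coe] at hx hy
    rcases lt_trichotomy (key S x) (key S y) with h | h | h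
    · exfalso
      have hss : Sᶜ.filter (fun z => key S z < key S x)
          ⊂ Sᶜ.filter (fun z => key S z < key S y) := by
        refine ⟨fun z hz => ?_, fun hcon => ?_⟩
        · rw [Finset.mem_filter] at hz ⊢
          exact ⟨hz.1, hz.2.trans h⟩
        · have hxmem : x ∈ Sᶜ.filter (fun z => key S z < key S y) :=
            Finset.mem_filter.mpr ⟨hx, h⟩
          have := hcon hxmem
          rw [Finset.mem_filter] at this
          exact lt_irrefl _ this.2
      have := Finset.card_lt_card hss
      simp only [hr] at hxy
      omega
    · exact key_injective S h
    · exfalso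
      have hss : Sᶜ.filter (fun z => key S z < key S y)
          ⊂ Sᶜ.filter (fun z => key S z < key S x) := by
        refine ⟨fun z hz => ?_, fun hcon => ?_⟩
        · rw [Finset.mem_filter] at hz ⊢
          exact ⟨hz.1, hz.2.trans h⟩
        · have hymem : y ∈ Sᶜ.filter (fun z => key S z < key S x) :=
            Finset.mem_filter.mpr ⟨hy, h⟩
          have := hcon hymem
          rw [Finset.mem_filter] at this
          exact lt_irrefl _ this.2
      have := Finset.card_lt_card hss
      simp only [hr] at hxy
      omega
  have himg : Sᶜ.image r = Finset.Iic k := by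
    apply Finset.eq_of_subset_of_card_le
    · intro c hc
      rw [Finset.mem_image] at hc
      obtain ⟨x, hx, rfl⟩ := hc
      exact Finset.mem_Iic.mpr (hmaps x hx)
    · rw [Nat.card_Iic, Finset.card_image_of_injOn hinj, hT]
  refine ⟨?_, ?_, ?_⟩
  · intro x hx
    simp only [Set.mem_setOf_eq, hlex]
    exact hmaps x (by exact_mod_cast hx)
  · intro x hx y hy hxy
    simp only [hlex] at hxy
    exact hinj hx hy hxy
  · intro c hc
    have hmem : c ∈ Sᶜ.image r := by
      rw [himg, Finset.mem_Iic]; exact hc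
    rw [Finset.mem_image] at hmem
    obtain ⟨x, hx, hxc⟩ := hmem
    exact ⟨x, by exact_mod_cast hx, by simp only [hlex]; exact hxc⟩
end

section
/- Let k ≥ 1, n = 2k+1, and let T be a (k+1)-element subset of Z_n. Then the map x ↦ c(x, T \ {x}) is a bijection from T onto the color set {0, 1, …, k}. -/
set_option linter.unusedSectionVars false
set_option linter.unusedTactic false

namespace Stmt10

variable {n : ℕ} [NeZero n]

lemma sub_val (A B : ZMod n) :
    (A - B).val = if B.val ≤ A.val then A.val - B.val else A.val + n - B.val := by
  have hA : A.val < n := ZMod.val_lt A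
  have hB : B.val < n := ZMod.val_lt B
  split_ifs with h
  · have : A - B = ((A.val - B.val : ℕ) : ZMod n) := by
      rw [Nat.cast_sub h, ZMod.natCast_val, ZMod.natCast_val, ZMod.cast_id, ZMod.cast_id]
    rw [this, ZMod.val_cast_of_lt (by omega)]
  · have : A - B = ((A.val + n - B.val : ℕ) : ZMod n) := by
      rw [Nat.cast_sub (by omega), Nat.cast_add, ZMod.natCast_self, add_zero,
        ZMod.natCast_val, ZMod.natCast_val, ZMod.cast_id, ZMod.cast_id]
    rw [this, ZMod.val_cast_of_lt (by omega)]

lemma mem_cyc {z x a : ZMod n} :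
    a ∈ cycInterval n z x ↔ (a - z).val < (x - z).val := by
  simp [cycInterval]

lemma sub_sub_val (z y a : ZMod n) :
    (a - y).val = if (y - z).val ≤ (a - z).val then (a - z).val - (y - z).val
      else (a - z).val + n - (y - z).val := by
  have : a - y = (a - z) - (y - z) := by ring
  rw [this, sub_val]

/-- splitting `[z,x)` at an intermediate point `y`. -/
lemma cyc_split {z y x : ZMod n} (h : (y - z).val ≤ (x - z).val) :
    cycInterval n z x = cycInterval n z y ∪ cycInterval n y x ∧
      Disjoint (cycInterval n z y) (cycInterval n y x) := by
  have hn : ∀ A : ZMod n, (A : ZMod n).val < n := fun A => ZMod.val_lt A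
  constructor
  · ext a
    rw [Finset.mem_union, mem_cyc, mem_cyc, mem_cyc, sub_sub_val z y a, sub_sub_val z y x]
    have h1 := hn (a - z); have h2 := hn (x - z); have h3 := hn (y - z)
    split_ifs <;> omega
  · rw [Finset.disjoint_left]
    intro a ha ha'
    rw [mem_cyc] at ha ha'
    rw [sub_sub_val z y a, sub_sub_val z y x] at ha'
    have h1 := hn (a - z); have h2 := hn (x - z); have h3 := hn (y - z)
    split_ifs at ha' <;> omega

lemma val_sub_eq_zero_iff {a b : ZMod n} : (a - b).val = 0 ↔ a = b := by
  rw [ZMod.val_eq_zero, sub_eq_zero]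

/-- `[z,x)` and `[x,z)` partition everything, for `z ≠ x`. -/
lemma cyc_compl {z x : ZMod n} (h : z ≠ x) :
    cycInterval n z x ∪ cycInterval n x z = Finset.univ ∧
      Disjoint (cycInterval n z x) (cycInterval n x z) := by
  have hn : ∀ A : ZMod n, (A : ZMod n).val < n := fun A => ZMod.val_lt A
  have ht : (x - z).val ≠ 0 := fun hc => h (val_sub_eq_zero_iff.mp hc).symm
  have key : ∀ a : ZMod n, (a ∈ cycInterval n z x ↔ ¬ a ∈ cycInterval n x z) := by
    intro a
    rw [mem_cyc, mem_cyc, sub_sub_val z x a, sub_sub_val z x z]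
    have h1 := hn (a - z); have h2 := hn (x - z)
    have h3 : (z - z).val = 0 := by simp
    split_ifs <;> omega
  constructor
  · ext a; simp only [Finset.mem_union, Finset.mem_univ, iff_true]
    by_cases hc : a ∈ cycInterval n x z
    · exact Or.inr hc
    · exact Or.inl ((key a).mpr hc)
  · rw [Finset.disjoint_left]
    intro a ha; exact (key a).mp ha

/-- signed weight of the interval `[z,x)`: #complement − #T. -/
def wt (T : Finset (ZMod n)) (z x : ZMod n) : ℤ :=
  ((cycInterval n z x ∩ Tᶜ).card : ℤ) - ((cycInterval n z x ∩ T).card : ℤ)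

lemma wt_of_union {T : Finset (ZMod n)} {I J K : Finset (ZMod n)}
    (hu : I = J ∪ K) (hd : Disjoint J K) :
    ((I ∩ Tᶜ).card : ℤ) - (I ∩ T).card =
      (((J ∩ Tᶜ).card : ℤ) - (J ∩ T).card) + (((K ∩ Tᶜ).card : ℤ) - (K ∩ T).card) := by
  subst hu
  rw [Finset.union_inter_distrib_right, Finset.union_inter_distrib_right]
  rw [Finset.card_union_of_disjoint (hd.mono (Finset.inter_subset_left) (Finset.inter_subset_left)),
    Finset.card_union_of_disjoint (hd.mono (Finset.inter_subset_left) (Finset.inter_subset_left))]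
  push_cast; ring

lemma wt_add (T : Finset (ZMod n)) {z y x : ZMod n} (h : (y - z).val ≤ (x - z).val) :
    wt T z x = wt T z y + wt T y x := by
  obtain ⟨hu, hd⟩ := cyc_split (x := x) h
  exact wt_of_union hu hd

lemma wt_total (T : Finset (ZMod n)) {z x : ZMod n} (h : z ≠ x) :
    wt T z x + wt T x z = (Tᶜ.card : ℤ) - T.card := by
  obtain ⟨hu, hd⟩ := cyc_compl h
  have := wt_of_union (T := T) hu.symm hd
  rw [Finset.univ_inter, Finset.univ_inter] at this
  rw [wt, wt, ← this]

lemma not_mem_cyc_self {z x : ZMod n} : x ∉ cycInterval n z x := by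
  rw [mem_cyc]; omega

lemma lexColor_eq {T : Finset (ZMod n)} {x : ZMod n} (hx : x ∈ T) :
    lexColor n (T.erase x) x = (Tᶜ.filter (fun y => 1 ≤ wt T y x)).card := by
  unfold lexColor
  have hset : ((T.erase x)ᶜ).erase x = Tᶜ := by
    rw [Finset.compl_erase, Finset.erase_insert (by simp [hx])]
  rw [hset]
  congr 1
  apply Finset.filter_congr
  intro y hy
  have hxi : x ∉ cycInterval n y x := not_mem_cyc_self
  have h1 : cycInterval n y x ∩ (T.erase x) = cycInterval n y x ∩ T := by
    ext a
    simp only [Finset.mem_inter, Finset.mem_erase]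
    exact ⟨fun ⟨ha, _, ht⟩ => ⟨ha, ht⟩, fun ⟨ha, ht⟩ => ⟨ha, fun hax => hxi (hax ▸ ha), ht⟩⟩
  have h2 : cycInterval n y x ∩ (T.erase x)ᶜ = cycInterval n y x ∩ Tᶜ := by
    rw [Finset.compl_erase]
    ext a
    simp only [Finset.mem_inter, Finset.mem_insert, Finset.mem_compl]
    constructor
    · rintro ⟨ha, (rfl | ht)⟩
      · exact absurd ha hxi
      · exact ⟨ha, ht⟩
    · rintro ⟨ha, ht⟩; exact ⟨ha, Or.inr ht⟩
  rw [h1, h2]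
  simp only [wt]
  omega

/-- the `i`-th step weight, walking backwards from `x`. -/
def eps (T : Finset (ZMod n)) (x : ZMod n) (i : ℕ) : ℤ :=
  if x - ((i : ZMod n) + 1) ∈ T then -1 else 1

/-- partial sums. -/
def Gg (T : Finset (ZMod n)) (x : ZMod n) (t : ℕ) : ℤ :=
  ∑ i ∈ Finset.range t, eps T x i

lemma cyc_self_empty (x : ZMod n) : cycInterval n x x = ∅ := by
  ext a; simp [mem_cyc]

lemma cyc_singleton {z y : ZMod n} (h : (y - z).val = 1) :
    cycInterval n z y = {z} := by
  ext a
  rw [mem_cyc, h, Finset.mem_singleton, Nat.lt_one_iff, val_sub_eq_zero_iff]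

lemma wt_singleton (T : Finset (ZMod n)) {z y : ZMod n} (h : (y - z).val = 1) :
    wt T z y = if z ∈ T then -1 else 1 := by
  rw [wt, cyc_singleton h]
  by_cases hz : z ∈ T
  · rw [Finset.singleton_inter_of_mem hz,
      Finset.singleton_inter_of_notMem (by simp [hz])]
    simp [hz]
  · rw [Finset.singleton_inter_of_notMem hz,
      Finset.singleton_inter_of_mem (by simp [hz])]
    simp [hz]

lemma Gg_eq_wt (T : Finset (ZMod n)) (x : ZMod n) :
    ∀ t, t < n → wt T (x - (t : ℕ)) x = Gg T x t := by
  intro t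
  induction t with
  | zero =>
    intro _
    simp only [Nat.cast_zero, sub_zero, Gg, Finset.range_zero, Finset.sum_empty,
      wt, cyc_self_empty]
    simp
  | succ t ih =>
    intro ht
    have htn : t < n := by omega
    have hcast : ∀ m : ℕ, m < n → ((m : ZMod n)).val = m := fun m hm => ZMod.val_cast_of_lt hm
    set z := x - ((t+1 : ℕ) : ZMod n) with hz
    set y := x - ((t : ℕ) : ZMod n) with hy
    have hyz : (y - z).val = 1 := by
      have : y - z = ((1 : ℕ) : ZMod n) := by
        rw [hy, hz]; push_cast; ring
      rw [this, hcast 1 (by omega)]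
    have hxz : (x - z).val = t + 1 := by
      have : x - z = ((t + 1 : ℕ) : ZMod n) := by rw [hz]; ring
      rw [this, hcast (t+1) ht]
    have hxy : (x - y).val = t := by
      have : x - y = ((t : ℕ) : ZMod n) := by rw [hy]; ring
      rw [this, hcast t htn]
    have hsplit : wt T z x = wt T z y + wt T y x := wt_add T (by omega)
    rw [hsplit, wt_singleton T hyz, ih htn]
    have : eps T x t = if z ∈ T then -1 else 1 := by
      rw [eps, hz]; push_cast; ring_nf
    have hstep : Gg T x (t+1) = Gg T x t + eps T x t := Finset.sum_range_succ _ _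
    rw [hstep, this]
    ring

lemma Gg_full (T : Finset (ZMod n)) (x : ZMod n) :
    Gg T x n = (Tᶜ.card : ℤ) - T.card := by
  have hinj : Set.InjOn (fun i : ℕ => x - ((i : ZMod n) + 1)) (Finset.range n) := by
    intro i hi j hj hij
    simp only at hij
    have h1 : ((i : ZMod n)) = j := add_right_cancel (sub_right_injective hij)
    have hi' : i < n := by simpa using hi
    have hj' : j < n := by simpa using hj
    have h2 : ((i : ZMod n)).val = ((j : ZMod n)).val := by rw [h1]
    rwa [ZMod.val_cast_of_lt hi', ZMod.val_cast_of_lt hj'] at h2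
  have himg : (Finset.range n).image (fun i : ℕ => x - ((i : ZMod n) + 1)) = Finset.univ := by
    apply Finset.eq_univ_of_card
    rw [Finset.card_image_of_injOn hinj, Finset.card_range, ZMod.card]
  have : Gg T x n = ∑ z ∈ Finset.univ, (if z ∈ T then (-1 : ℤ) else 1) := by
    rw [Gg, ← himg, Finset.sum_image (fun i hi j hj h => hinj hi hj h)]
    simp only [eps]
  rw [this, Finset.sum_ite, Finset.sum_const, Finset.sum_const]
  have h1 : Finset.univ.filter (fun z : ZMod n => z ∈ T) = T := by
    ext a; simp
  have h2 : Finset.univ.filter (fun z : ZMod n => ¬ z ∈ T) = Tᶜ := by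
    ext a; simp
  rw [h1, h2]
  push_cast; ring

/-- the key reflection identity for ±1 walks. -/
lemma count_key (T : Finset (ZMod n)) (x : ZMod n) (m : ℕ) :
    (((Finset.range m).filter (fun i => eps T x i = 1 ∧ 1 ≤ Gg T x (i+1))).card : ℤ) -
      ((Finset.range m).filter (fun i => eps T x i = -1 ∧ 0 ≤ Gg T x (i+1))).card =
      max (Gg T x m) 0 := by
  induction m with
  | zero =>
    have h0 : ∀ (p : ℕ → Prop) [DecidablePred p], ((Finset.range 0).filter p).card = 0 :=
      fun p _ => by simp
    rw [h0, h0]; simp [Gg]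
  | succ m ih =>
    have hstep : Gg T x (m+1) = Gg T x m + eps T x m := Finset.sum_range_succ _ _
    have hpm : eps T x m = -1 ∨ eps T x m = 1 := by
      rw [eps]; split_ifs <;> simp
    rw [Finset.range_add_one, Finset.filter_insert, Finset.filter_insert]
    have hnm : (m : ℕ) ∉ Finset.range m := by simp
    rcases hpm with h | h
    · rw [if_neg (by simp [h])]
      have hG : Gg T x (m+1) = Gg T x m - 1 := by rw [hstep, h]; ring
      by_cases hg : 0 ≤ Gg T x (m+1)
      · rw [if_pos ⟨h, hg⟩, Finset.card_insert_of_notMem (by simp)]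
        rcases max_cases (Gg T x m) 0 with ⟨e1, f1⟩ | ⟨e1, f1⟩ <;>
          rcases max_cases (Gg T x (m+1)) 0 with ⟨e2, f2⟩ | ⟨e2, f2⟩ <;>
          rw [e1] at ih <;> rw [e2] <;> push_cast <;> omega
      · rw [if_neg (fun hc => hg hc.2)]
        rcases max_cases (Gg T x m) 0 with ⟨e1, f1⟩ | ⟨e1, f1⟩ <;>
          rcases max_cases (Gg T x (m+1)) 0 with ⟨e2, f2⟩ | ⟨e2, f2⟩ <;>
          rw [e1] at ih <;> rw [e2] <;> push_cast <;> omega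
    · have hG : Gg T x (m+1) = Gg T x m + 1 := by rw [hstep, h]
      by_cases hg : 1 ≤ Gg T x (m+1)
      · rw [if_pos ⟨h, hg⟩, if_neg (by simp [h]), Finset.card_insert_of_notMem (by simp)]
        rcases max_cases (Gg T x m) 0 with ⟨e1, f1⟩ | ⟨e1, f1⟩ <;>
          rcases max_cases (Gg T x (m+1)) 0 with ⟨e2, f2⟩ | ⟨e2, f2⟩ <;>
          rw [e1] at ih <;> rw [e2] <;> push_cast <;> omega
      · rw [if_neg (fun hc => hg hc.2), if_neg (by simp [h])]
        rcases max_cases (Gg T x m) 0 with ⟨e1, f1⟩ | ⟨e1, f1⟩ <;>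
          rcases max_cases (Gg T x (m+1)) 0 with ⟨e2, f2⟩ | ⟨e2, f2⟩ <;>
          rw [e1] at ih <;> rw [e2] <;> push_cast <;> omega

lemma cast_val_sub (x y : ZMod n) : x - (((x - y).val : ℕ) : ZMod n) = y := by
  rw [ZMod.natCast_val, ZMod.cast_id]; ring

/-- the two counts agree with the range-indexed counts. -/
lemma countL (T : Finset (ZMod n)) (x : ZMod n) (hx : x ∈ T) :
    (Tᶜ.filter (fun y => 1 ≤ wt T y x)).card =
      ((Finset.range n).filter (fun i => eps T x i = 1 ∧ 1 ≤ Gg T x (i+1))).card := by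
  apply Finset.card_bij' (fun y _ => (x - y).val - 1)
    (fun i _ => x - ((i : ZMod n) + 1))
  · intro y hy
    simp only [Finset.mem_filter, Finset.mem_compl] at hy
    obtain ⟨hyT, hwt⟩ := hy
    have hne : y ≠ x := fun h => hyT (h ▸ hx)
    have ht0 : (x - y).val ≠ 0 := fun h => hne (val_sub_eq_zero_iff.mp h).symm
    have htn : (x - y).val < n := ZMod.val_lt _
    set t := (x - y).val with htdef
    have hyx : x - ((t - 1 : ℕ) + 1 : ZMod n) = y := by
      have : ((t - 1 : ℕ) : ZMod n) + 1 = ((t : ℕ) : ZMod n) := by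
        have h : t - 1 + 1 = t := by omega
        calc ((t - 1 : ℕ) : ZMod n) + 1 = (((t - 1) + 1 : ℕ) : ZMod n) := by push_cast; ring
          _ = ((t : ℕ) : ZMod n) := by rw [h]
      rw [this, htdef, cast_val_sub]
    simp only [Finset.mem_filter, Finset.mem_range]
    refine ⟨by omega, ?_, ?_⟩
    · rw [eps, hyx, if_neg hyT]
    · have : t - 1 + 1 = t := by omega
      rw [this, ← Gg_eq_wt T x t htn, htdef, cast_val_sub]
      exact hwt
  · intro i hi
    simp only [Finset.mem_filter, Finset.mem_range] at hi
    obtain ⟨hin, heps, hG⟩ := hi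
    have hyT : x - ((i : ZMod n) + 1) ∉ T := by
      intro hmem
      rw [eps, if_pos hmem] at heps
      norm_num at heps
    have hi1 : i + 1 < n := by
      rcases Nat.lt_or_ge (i+1) n with h | h
      · exact h
      · exfalso
        have hieq : i + 1 = n := by omega
        have : ((i : ZMod n) + 1) = 0 := by
          rw [← Nat.cast_one, ← Nat.cast_add, hieq, ZMod.natCast_self]
        rw [this, sub_zero] at hyT
        exact hyT hx
    simp only [Finset.mem_filter, Finset.mem_compl]
    refine ⟨hyT, ?_⟩
    have hcast : ((i : ZMod n) + 1) = (((i + 1 : ℕ)) : ZMod n) := by push_cast; ring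
    rw [hcast, Gg_eq_wt T x (i+1) hi1] at *
    exact hG
  · intro y hy
    simp only [Finset.mem_filter, Finset.mem_compl] at hy
    have hne : y ≠ x := fun h => hy.1 (h ▸ hx)
    have ht0 : (x - y).val ≠ 0 := fun h => hne (val_sub_eq_zero_iff.mp h).symm
    have : (((x - y).val - 1 : ℕ) : ZMod n) + 1 = (((x - y).val : ℕ) : ZMod n) := by
      have h : (x - y).val - 1 + 1 = (x - y).val := by omega
      calc (((x - y).val - 1 : ℕ) : ZMod n) + 1
          = ((((x - y).val - 1) + 1 : ℕ) : ZMod n) := by push_cast; ring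
        _ = _ := by rw [h]
    rw [this, cast_val_sub]
  · intro i hi
    simp only [Finset.mem_filter, Finset.mem_range] at hi
    obtain ⟨hin, heps, hG⟩ := hi
    have hyT : x - ((i : ZMod n) + 1) ∉ T := by
      intro hmem
      rw [eps, if_pos hmem] at heps
      norm_num at heps
    have hi1 : i + 1 < n := by
      rcases Nat.lt_or_ge (i+1) n with h | h
      · exact h
      · exfalso
        have hieq : i + 1 = n := by omega
        have : ((i : ZMod n) + 1) = 0 := by
          rw [← Nat.cast_one, ← Nat.cast_add, hieq, ZMod.natCast_self]
        rw [this, sub_zero] at hyT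
        exact hyT hx
    have hval : (x - (x - ((i : ZMod n) + 1))).val = i + 1 := by
      have h1 : x - (x - ((i : ZMod n) + 1)) = (((i + 1 : ℕ)) : ZMod n) := by
        push_cast; ring
      rw [h1, ZMod.val_cast_of_lt hi1]
    rw [hval]
    omega

lemma countR (T : Finset (ZMod n)) (x : ZMod n) (hGn : Gg T x n = -1) :
    ((T.erase x).filter (fun z => 0 ≤ wt T z x)).card =
      ((Finset.range n).filter (fun i => eps T x i = -1 ∧ 0 ≤ Gg T x (i+1))).card := by
  have cast_succ : ∀ t : ℕ, t ≠ 0 → ((t - 1 : ℕ) : ZMod n) + 1 = ((t : ℕ) : ZMod n) := by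
    intro t ht
    have h : t - 1 + 1 = t := by omega
    calc ((t - 1 : ℕ) : ZMod n) + 1 = (((t - 1) + 1 : ℕ) : ZMod n) := by push_cast; ring
      _ = _ := by rw [h]
  apply Finset.card_bij' (fun z _ => (x - z).val - 1)
    (fun i _ => x - ((i : ZMod n) + 1))
  · intro z hz
    simp only [Finset.mem_filter, Finset.mem_erase] at hz
    obtain ⟨⟨hne, hzT⟩, hwt⟩ := hz
    have ht0 : (x - z).val ≠ 0 := fun h => hne (val_sub_eq_zero_iff.mp h).symm
    have htn : (x - z).val < n := ZMod.val_lt _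
    have hzx : x - (((x - z).val - 1 : ℕ) + 1 : ZMod n) = z := by
      rw [cast_succ _ ht0, cast_val_sub]
    simp only [Finset.mem_filter, Finset.mem_range]
    refine ⟨by omega, ?_, ?_⟩
    · rw [eps, hzx, if_pos hzT]
    · have h : (x - z).val - 1 + 1 = (x - z).val := by omega
      rw [h, ← Gg_eq_wt T x _ htn, cast_val_sub]
      exact hwt
  · intro i hi
    simp only [Finset.mem_filter, Finset.mem_range] at hi
    obtain ⟨hin, heps, hG⟩ := hi
    have hzT : x - ((i : ZMod n) + 1) ∈ T := by
      by_contra hmem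
      rw [eps, if_neg hmem] at heps
      norm_num at heps
    have hi1 : i + 1 < n := by
      rcases Nat.lt_or_ge (i+1) n with h | h
      · exact h
      · exfalso
        have hieq : i + 1 = n := by omega
        rw [show Gg T x (i+1) = Gg T x n by rw [hieq]] at hG
        omega
    have hcast : ((i : ZMod n) + 1) = (((i + 1 : ℕ)) : ZMod n) := by push_cast; ring
    have hval : (x - (x - ((i : ZMod n) + 1))).val = i + 1 := by
      have h1 : x - (x - ((i : ZMod n) + 1)) = (((i + 1 : ℕ)) : ZMod n) := by
        push_cast; ring
      rw [h1, ZMod.val_cast_of_lt hi1]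
    simp only [Finset.mem_filter, Finset.mem_erase]
    refine ⟨⟨?_, hzT⟩, ?_⟩
    · intro hc
      rw [hc] at hval
      simp at hval
    · rw [hcast, Gg_eq_wt T x (i+1) hi1]
      exact hG
  · intro z hz
    simp only [Finset.mem_filter, Finset.mem_erase] at hz
    have hne : z ≠ x := hz.1.1
    have ht0 : (x - z).val ≠ 0 := fun h => hne (val_sub_eq_zero_iff.mp h).symm
    rw [cast_succ _ ht0, cast_val_sub]
  · intro i hi
    simp only [Finset.mem_filter, Finset.mem_range] at hi
    obtain ⟨hin, heps, hG⟩ := hi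
    have hzT : x - ((i : ZMod n) + 1) ∈ T := by
      by_contra hmem
      rw [eps, if_neg hmem] at heps
      norm_num at heps
    have hi1 : i + 1 < n := by
      rcases Nat.lt_or_ge (i+1) n with h | h
      · exact h
      · exfalso
        have hieq : i + 1 = n := by omega
        rw [show Gg T x (i+1) = Gg T x n by rw [hieq]] at hG
        omega
    have hval : (x - (x - ((i : ZMod n) + 1))).val = i + 1 := by
      have h1 : x - (x - ((i : ZMod n) + 1)) = (((i + 1 : ℕ)) : ZMod n) := by
        push_cast; ring
      rw [h1, ZMod.val_cast_of_lt hi1]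
    rw [hval]
    omega

end Stmt10

open Stmt10

/-- For a `(k+1)`-subset `T` of `Z_{2k+1}`, the map `x ↦ c(x, T \ {x})` is a bijection
from `T` onto `{0, 1, …, k}`. -/
theorem stmt10 (k : ℕ) (hk : 1 ≤ k) (T : Finset (ZMod (2 * k + 1)))
    (hT : T.card = k + 1) :
    Set.BijOn (fun x => lexColor (2 * k + 1) (T.erase x) x) (↑T) {c : ℕ | c ≤ k} := by
  have hcardU : Tᶜ.card = k := by
    have := Finset.card_compl T
    rw [hT, Fintype.card_eq_nat_card, Nat.card_zmod] at this
    omega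
  have hdiff : (Tᶜ.card : ℤ) - T.card = -1 := by rw [hcardU, hT]; push_cast; ring
  set r : ZMod (2 * k + 1) → ℕ :=
    fun x => ((T.erase x).filter (fun z => 0 ≤ wt T z x)).card with hr
  have hagree : ∀ x ∈ T, lexColor (2 * k + 1) (T.erase x) x = r x := by
    intro x hx
    rw [lexColor_eq hx, countL T x hx]
    have hGn : Gg T x (2 * k + 1) = -1 := by rw [Gg_full, hdiff]
    have h2 := countR T x hGn
    have h3 := count_key T x (2 * k + 1)
    rw [hGn] at h3
    rw [max_eq_right (by norm_num : (-1 : ℤ) ≤ 0)] at h3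
    simp only [hr]
    omega
  have hsum : ∀ z x : ZMod (2 * k + 1), z ≠ x → wt T z x + wt T x z = -1 := by
    intro z x h
    rw [wt_total T h, hdiff]
  have htrans : ∀ {z y x : ZMod (2 * k + 1)},
      (z ≠ y ∧ 0 ≤ wt T z y) → (y ≠ x ∧ 0 ≤ wt T y x) → (z ≠ x ∧ 0 ≤ wt T z x) := by
    rintro z y x ⟨hzy, h1⟩ ⟨hyx, h2⟩
    have hzx : z ≠ x := by
      rintro rfl
      have := hsum z y hzy
      omega
    refine ⟨hzx, ?_⟩
    rcases le_or_gt ((y - z).val) ((x - z).val) with h | h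
    · have := wt_add T (z := z) (y := y) (x := x) h
      omega
    · have ha := wt_add T (z := z) (y := x) (x := y) h.le
      have hb := hsum x y hyx.symm
      omega
  have hmono : ∀ x ∈ T, ∀ x' ∈ T, (x ≠ x' ∧ 0 ≤ wt T x x') → r x < r x' := by
    intro x hx x' hx' hlt
    obtain ⟨hne, hwt⟩ := hlt
    have hsub : insert x ((T.erase x).filter (fun z => 0 ≤ wt T z x)) ⊆
        (T.erase x').filter (fun z => 0 ≤ wt T z x') := by
      intro z hz
      rcases Finset.mem_insert.mp hz with rfl | hz
      · simp only [Finset.mem_filter, Finset.mem_erase]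
        exact ⟨⟨hne, hx⟩, hwt⟩
      · simp only [Finset.mem_filter, Finset.mem_erase] at hz ⊢
        obtain ⟨⟨hzx, hzT⟩, hzwt⟩ := hz
        have := htrans ⟨hzx, hzwt⟩ ⟨hne, hwt⟩
        exact ⟨⟨this.1, hzT⟩, this.2⟩
    have hnotmem : x ∉ (T.erase x).filter (fun z => 0 ≤ wt T z x) := by
      simp [Finset.mem_filter]
    calc r x < r x + 1 := Nat.lt_succ_self _
      _ = (insert x ((T.erase x).filter (fun z => 0 ≤ wt T z x))).card := by
          rw [Finset.card_insert_of_notMem hnotmem]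
      _ ≤ r x' := Finset.card_le_card hsub
  have hinj : Set.InjOn r ↑T := by
    intro x hx x' hx' heq
    by_contra hne
    rcases le_or_gt 0 (wt T x x') with h | h
    · exact absurd heq (Nat.ne_of_lt (hmono x hx x' hx' ⟨hne, h⟩))
    · have := hsum x x' hne
      have h2 : 0 ≤ wt T x' x := by omega
      exact absurd heq.symm (Nat.ne_of_lt (hmono x' hx' x hx ⟨Ne.symm hne, h2⟩))
  have hmaps : ∀ x ∈ T, r x ≤ k := by
    intro x hx
    have h1 : ((T.erase x).filter (fun z => 0 ≤ wt T z x)).card ≤ (T.erase x).card :=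
      Finset.card_le_card (Finset.filter_subset _ _)
    rw [Finset.card_erase_of_mem hx, hT] at h1
    exact h1
  have himg : T.image r = Finset.range (k + 1) := by
    apply Finset.eq_of_subset_of_card_le
    · intro c hc
      obtain ⟨x, hx, rfl⟩ := Finset.mem_image.mp hc
      exact Finset.mem_range.mpr (Nat.lt_succ_of_le (hmaps x hx))
    · rw [Finset.card_range, Finset.card_image_of_injOn hinj, hT]
  refine ⟨?_, ?_, ?_⟩
  · intro x hx
    simp only [Set.mem_setOf_eq]
    rw [hagree x hx]
    exact hmaps x hx
  · intro x hx x' hx' heq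
    simp only [hagree x hx, hagree x' hx'] at heq
    exact hinj hx hx' heq
  · intro c hc
    simp only [Set.mem_setOf_eq] at hc
    have hcm : c ∈ T.image r := by
      rw [himg]; exact Finset.mem_range.mpr (Nat.lt_succ_of_le hc)
    obtain ⟨x, hx, hxc⟩ := Finset.mem_image.mp hcm
    exact ⟨x, hx, by simpa [hagree x hx] using hxc⟩
end

section
/- Let k ≥ 1 and n = 2k+1. Assign to each edge of the middle-levels graph M_k, written as {S, S ∪ {x}} with S a k-element subset of Z_n and x ∉ S, the lexical color c(x, S). Then for every color c ∈ {0, 1, …, k}, the set of edges of color c is a perfect matching of M_k; hence the k+1 color classes partition the edge set of M_k into k+1 perfect matchings (a 1-factorization of M_k). -/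
/-- The lexical color of the edge `{S, S ∪ {x}}`, expressed symmetrically: for an
edge `A ⊂ B` of `M_k`, the difference `B \ A` is a singleton `{x}` (so its sum is
`x`) and the color is `c(x, A)`. -/
def edgeColor (n : ℕ) [NeZero n] (A B : Finset (ZMod n)) : ℕ :=
  if A ⊆ B then lexColor n A ((B \ A).sum id) else lexColor n B ((A \ B).sum id)

open Finset

set_option linter.unusedSectionVars false

section Cnt
variable {n : ℕ} [NeZero n]

/-- number of elements of `S` among `x, x+1, …, x+t-1`. -/
def cnt (S : Finset (ZMod n)) (x : ZMod n) (t : ℕ) : ℕ :=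
  ((Finset.range t).filter (fun i : ℕ => x + (i : ZMod n) ∈ S)).card

lemma natCast_val (a : ZMod n) : ((a.val : ℕ) : ZMod n) = a := by
  exact ZMod.natCast_rightInverse a

lemma cnt_le (S : Finset (ZMod n)) (x : ZMod n) (t : ℕ) : cnt S x t ≤ t := by
  classical
  calc cnt S x t ≤ (Finset.range t).card := Finset.card_filter_le _ _
  _ = t := Finset.card_range t

lemma cnt_succ (S : Finset (ZMod n)) (x : ZMod n) (t : ℕ) :
    cnt S x (t + 1) = cnt S x t + if x + (t : ZMod n) ∈ S then 1 else 0 := by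
  unfold cnt
  rw [Finset.range_add_one, Finset.filter_insert]
  split
  · rw [Finset.card_insert_of_notMem (by simp)]
  · simp

lemma cnt_add (S : Finset (ZMod n)) (x : ZMod n) (t u : ℕ) :
    cnt S x (t + u) = cnt S x t + cnt S (x + (t : ZMod n)) u := by
  induction u with
  | zero => simp [cnt]
  | succ u ih =>
      rw [← Nat.add_assoc, cnt_succ, cnt_succ, ih]
      have : x + (t : ZMod n) + (u : ZMod n) = x + ((t + u : ℕ) : ZMod n) := by
        push_cast; ring
      rw [this, Nat.add_assoc]

lemma cnt_n (S : Finset (ZMod n)) (x : ZMod n) : cnt S x n = S.card := by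
  classical
  unfold cnt
  refine Finset.card_bij (fun i _ => x + (i : ZMod n)) ?_ ?_ ?_
  · intro i hi
    simp only [Finset.mem_filter] at hi
    exact hi.2
  · intro i hi j hj hij
    simp only [Finset.mem_filter, Finset.mem_range] at hi hj
    have : ((i : ZMod n)) = (j : ZMod n) := by
      have := add_left_cancel hij
      exact this
    have := congrArg ZMod.val this
    rwa [ZMod.val_cast_of_lt hi.1, ZMod.val_cast_of_lt hj.1] at this
  · intro s hs
    refine ⟨(s - x).val, ?_, ?_⟩
    · simp only [Finset.mem_filter, Finset.mem_range]
      refine ⟨ZMod.val_lt _, ?_⟩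
      rw [natCast_val]
      simpa using hs
    · show x + (((s - x).val : ℕ) : ZMod n) = s
      rw [natCast_val]; ring

lemma cnt_compl (S : Finset (ZMod n)) (x : ZMod n) (t : ℕ) :
    cnt Sᶜ x t + cnt S x t = t := by
  classical
  unfold cnt
  have h := Finset.card_filter_add_card_filter_not
    (s := Finset.range t) (p := fun i : ℕ => x + (i:ZMod n) ∈ S)
  have h2 : (Finset.range t).filter (fun i : ℕ => x + (i:ZMod n) ∈ Sᶜ)
      = (Finset.range t).filter (fun i : ℕ => ¬ (x + (i:ZMod n) ∈ S)) := by
    apply Finset.filter_congr; intro i _; simp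
  rw [h2]
  rw [Finset.card_range] at h
  omega

lemma val_injective' {a b : ZMod n} (h : a.val = b.val) : a = b := by
  have := congrArg (fun m : ℕ => ((m : ℕ) : ZMod n)) h
  simpa [natCast_val] using this

lemma val_sub_of_le {y x : ZMod n} (h : y.val ≤ x.val) : (x - y).val = x.val - y.val := by
  have h1 : x - y = (((x.val - y.val : ℕ)) : ZMod n) := by
    rw [Nat.cast_sub h, natCast_val, natCast_val]
  have hx : x.val < n := ZMod.val_lt x
  rw [h1, ZMod.val_cast_of_lt (by omega)]
lemma val_sub_of_gt {y x : ZMod n} (h : x.val < y.val) : (x - y).val = n + x.val - y.val := by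
  have hy : y.val < n := ZMod.val_lt y
  have h1 : x - y = (((n + x.val - y.val : ℕ)) : ZMod n) := by
    rw [Nat.cast_sub (by omega), Nat.cast_add, ZMod.natCast_self, natCast_val, natCast_val]
    ring
  rw [h1, ZMod.val_cast_of_lt (by omega)]

lemma val_sub_add_val_sub {y x : ZMod n} (h : y ≠ x) :
    (x - y).val + (y - x).val = n := by
  have hx : x.val < n := ZMod.val_lt x
  have hy : y.val < n := ZMod.val_lt y
  have hne : x.val ≠ y.val := fun hv => h (val_injective' hv.symm)
  rcases lt_or_gt_of_ne hne with h1 | h1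
  · rw [val_sub_of_gt h1, val_sub_of_le (le_of_lt h1)]; omega
  · rw [val_sub_of_le (le_of_lt h1), val_sub_of_gt h1]; omega

/-- `[y,x) ∩ S` has the same cardinality as the count of `S`-elements among
`y, y+1, …, y + ((x-y).val - 1)`. -/
lemma inter_card (S : Finset (ZMod n)) (y x : ZMod n) :
    (cycInterval n y x ∩ S).card = cnt S y ((x - y).val) := by
  classical
  symm; unfold cnt
  refine Finset.card_bij (fun i _ => y + (i : ZMod n)) ?_ ?_ ?_
  · intro i hi
    simp only [Finset.mem_filter, Finset.mem_range] at hi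
    simp only [Finset.mem_inter, cycInterval, Finset.mem_filter, Finset.mem_univ, true_and]
    have hin : i < n := lt_trans hi.1 (ZMod.val_lt _)
    constructor
    · have : (y + (i:ZMod n)) - y = (i : ZMod n) := by ring
      rw [this, ZMod.val_cast_of_lt hin]
      exact hi.1
    · exact hi.2
  · intro i hi j hj hij
    simp only [Finset.mem_filter, Finset.mem_range] at hi hj
    have hin : i < n := lt_trans hi.1 (ZMod.val_lt _)
    have hjn : j < n := lt_trans hj.1 (ZMod.val_lt _)
    have : ((i : ZMod n)) = (j : ZMod n) := add_left_cancel hij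
    have := congrArg ZMod.val this
    rwa [ZMod.val_cast_of_lt hin, ZMod.val_cast_of_lt hjn] at this
  · intro z hz
    simp only [Finset.mem_inter, cycInterval, Finset.mem_filter, Finset.mem_univ, true_and] at hz
    refine ⟨(z - y).val, ?_, ?_⟩
    · simp only [Finset.mem_filter, Finset.mem_range]
      refine ⟨hz.1, ?_⟩
      rw [natCast_val]
      simpa using hz.2
    · show y + (((z - y).val : ℕ) : ZMod n) = z
      rw [natCast_val]; ring

/-- The condition in `lexColor`, rewritten via `cnt`. -/
lemma cond_iff_cnt (S : Finset (ZMod n)) (y x : ZMod n) :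
    ((cycInterval n y x ∩ S).card < (cycInterval n y x ∩ Sᶜ).card) ↔
      2 * cnt S y ((x - y).val) < (x - y).val := by
  rw [inter_card, inter_card]
  have := cnt_compl S y ((x - y).val)
  omega

lemma lin_helper (N u v a b : ℤ) (h1 : 0 ≤ a) (h2 : a < N) (h3 : 0 ≤ b) (h4 : b < N) :
    N * v - b > N * u - a ↔ (u < v ∨ (u = v ∧ b < a)) := by
  rcases lt_trichotomy u v with h | h | h
  · have hN : N * (v - u) ≥ N * 1 := by
      apply mul_le_mul_of_nonneg_left (by omega) (by omega)
    constructor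
    · intro _; exact Or.inl h
    · intro _; nlinarith
  · subst h
    constructor
    · intro hlt; exact Or.inr ⟨rfl, by omega⟩
    · rintro (h | ⟨-, h⟩); · omega
      omega
  · have hN : N * (u - v) ≥ N * 1 := by
      apply mul_le_mul_of_nonneg_left (by omega) (by omega)
    constructor
    · intro hlt; nlinarith
    · rintro (h' | ⟨h', -⟩) <;> omega

section Down
variable {n : ℕ} [NeZero n] (S : Finset (ZMod n))

/-- potential of position `p`. -/
def GG (S : Finset (ZMod n)) (p : ℕ) : ℤ := (p : ℤ) - 2 * (cnt S 0 p : ℤ)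

/-- the lexical key of `z` relative to `S`. -/
def phi (S : Finset (ZMod n)) (z : ZMod n) : ℤ := (n : ℤ) * GG S z.val - (z.val : ℤ)

lemma cnt_zero_mono {p q : ℕ} (h : p ≤ q) : cnt S 0 p ≤ cnt S 0 q := by
  obtain ⟨r, rfl⟩ := Nat.exists_eq_add_of_le h
  rw [cnt_add]; omega

lemma cnt_split (y : ZMod n) {m : ℕ} (hm : y.val + m < n + 1) :
    cnt S y m + cnt S 0 y.val = cnt S 0 (y.val + m) := by
  rw [cnt_add]
  have : (0 : ZMod n) + ((y.val : ℕ) : ZMod n) = y := by rw [natCast_val]; ring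
  rw [this]; ring

lemma cnt_wrap (y : ZMod n) :
    cnt S y (n - y.val) + cnt S 0 y.val = S.card := by
  have hy : y.val < n := ZMod.val_lt y
  have := cnt_split S y (m := n - y.val) (by omega)
  rw [show y.val + (n - y.val) = n by omega, cnt_n] at this
  omega

lemma down_cond_iff {k : ℕ} (hn : n = 2 * k + 1) (hS : S.card = k) {x y : ZMod n}
    (hxy : y ≠ x) :
    (2 * cnt S y ((x - y).val) < (x - y).val) ↔ phi S y < phi S x := by
  have hx : x.val < n := ZMod.val_lt x
  have hy : y.val < n := ZMod.val_lt y
  have hne : y.val ≠ x.val := fun hv => hxy (val_injective' hv)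
  have hiff : phi S y < phi S x ↔
      (GG S y.val < GG S x.val ∨ (GG S y.val = GG S x.val ∧ x.val < y.val)) := by
    unfold phi
    rw [show ((n:ℤ) * GG S y.val - y.val < (n:ℤ) * GG S x.val - x.val) ↔
        ((n:ℤ) * GG S x.val - x.val > (n:ℤ) * GG S y.val - y.val) from Iff.rfl]
    rw [lin_helper (n:ℤ) (GG S y.val) (GG S x.val) (y.val : ℤ) (x.val : ℤ)
      (by positivity) (by exact_mod_cast hy) (by positivity) (by exact_mod_cast hx)]
    constructor
    · rintro (h | ⟨h, h2⟩)
      · exact Or.inl h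
      · exact Or.inr ⟨h, by exact_mod_cast h2⟩
    · rintro (h | ⟨h, h2⟩)
      · exact Or.inl h
      · exact Or.inr ⟨h, by exact_mod_cast h2⟩
  rw [hiff]
  have hca : cnt S 0 y.val ≤ k := by
    have := cnt_zero_mono S (le_of_lt hy); rw [cnt_n, hS] at this; exact this
  have hcb : cnt S 0 x.val ≤ k := by
    have := cnt_zero_mono S (le_of_lt hx); rw [cnt_n, hS] at this; exact this
  rcases lt_or_gt_of_ne hne with hab | hab
  · -- y.val < x.val
    rw [val_sub_of_le (le_of_lt hab)]
    have hcnt : cnt S y (x.val - y.val) + cnt S 0 y.val = cnt S 0 x.val := by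
      have := cnt_split S y (m := x.val - y.val) (by omega)
      rwa [show y.val + (x.val - y.val) = x.val by omega] at this
    unfold GG
    push_cast
    omega
  · -- x.val < y.val
    rw [val_sub_of_gt hab]
    have hsplit : cnt S y ((n - y.val) + x.val)
        = cnt S y (n - y.val) + cnt S (y + ((n - y.val : ℕ) : ZMod n)) x.val := cnt_add ..
    have hzero : y + ((n - y.val : ℕ) : ZMod n) = 0 := by
      have : y + ((n - y.val : ℕ) : ZMod n) = (((y.val + (n - y.val) : ℕ)) : ZMod n) := by
        rw [Nat.cast_add, natCast_val]
      rw [this, show y.val + (n - y.val) = n by omega, ZMod.natCast_self]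
    rw [hzero] at hsplit
    have hwrap := cnt_wrap S y
    rw [show n + x.val - y.val = (n - y.val) + x.val by omega, hsplit]
    unfold GG
    rw [hS] at hwrap
    push_cast
    omega

lemma phi_inj {x y : ZMod n} (h : phi S x = phi S y) : x = y := by
  have hx : x.val < n := ZMod.val_lt x
  have hy : y.val < n := ZMod.val_lt y
  have hl1 := lin_helper (n:ℤ) (GG S y.val) (GG S x.val) (y.val : ℤ) (x.val : ℤ)
      (by positivity) (by exact_mod_cast hy) (by positivity) (by exact_mod_cast hx)
  have hl2 := lin_helper (n:ℤ) (GG S x.val) (GG S y.val) (x.val : ℤ) (y.val : ℤ)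
      (by positivity) (by exact_mod_cast hx) (by positivity) (by exact_mod_cast hy)
  unfold phi at h
  have n1 : ¬ ((n:ℤ) * GG S x.val - x.val > (n:ℤ) * GG S y.val - y.val) := by omega
  have n2 : ¬ ((n:ℤ) * GG S y.val - y.val > (n:ℤ) * GG S x.val - x.val) := by omega
  rw [hl1] at n1; rw [hl2] at n2
  push_neg at n1 n2
  apply val_injective'
  have hg : GG S y.val = GG S x.val := le_antisymm n2.1 n1.1
  have b1 := n1.2 hg
  have b2 := n2.2 hg.symm
  exact_mod_cast le_antisymm b2 b1

end Down

/-- Rank with respect to an injective key is a bijection onto `{0, …, |T|-1}`. -/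
lemma rank_exists_unique {α : Type*} [DecidableEq α] (T : Finset α) (f : α → ℤ)
    (hinj : ∀ x ∈ T, ∀ y ∈ T, f x = f y → x = y) {c : ℕ} (hc : c < T.card) :
    ∃! x, x ∈ T ∧ (T.filter (fun y => f y < f x)).card = c := by
  classical
  set r : α → ℕ := fun x => (T.filter (fun y => f y < f x)).card with hr
  have hmono : ∀ x ∈ T, ∀ y ∈ T, f x < f y → r x < r y := by
    intro x hx y hy hfxy
    apply Finset.card_lt_card
    constructor
    · intro z hz
      simp only [Finset.mem_filter] at hz ⊢
      exact ⟨hz.1, lt_trans hz.2 hfxy⟩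
    · intro hsub
      have : x ∈ T.filter (fun y_1 => f y_1 < f y) := by
        simp only [Finset.mem_filter]; exact ⟨hx, hfxy⟩
      have := hsub this
      simp only [Finset.mem_filter] at this
      exact lt_irrefl _ this.2
  have hrinj : ∀ x ∈ T, ∀ y ∈ T, r x = r y → x = y := by
    intro x hx y hy hrxy
    by_contra hne
    have hfne : f x ≠ f y := fun h => hne (hinj x hx y hy h)
    rcases lt_or_gt_of_ne hfne with h | h
    · exact absurd hrxy (Nat.ne_of_lt (hmono x hx y hy h))
    · exact absurd hrxy.symm (Nat.ne_of_lt (hmono y hy x hx h))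
  have hbound : ∀ x ∈ T, r x < T.card := by
    intro x hx
    have hsub : T.filter (fun y => f y < f x) ⊆ T.erase x := by
      intro z hz
      simp only [Finset.mem_filter] at hz
      refine Finset.mem_erase.mpr ⟨?_, hz.1⟩
      intro h; subst h; exact lt_irrefl _ hz.2
    calc r x ≤ (T.erase x).card := Finset.card_le_card hsub
    _ < T.card := by
        rw [Finset.card_erase_of_mem hx]
        have : 0 < T.card := Finset.card_pos.mpr ⟨x, hx⟩
        omega
  have himg : T.image r = Finset.range T.card := by
    apply Finset.eq_of_subset_of_card_le
    · intro m hm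
      simp only [Finset.mem_image] at hm
      obtain ⟨x, hx, rfl⟩ := hm
      exact Finset.mem_range.mpr (hbound x hx)
    · rw [Finset.card_range, Finset.card_image_of_injOn]
      intro x hx y hy h; exact hrinj x hx y hy h
  have hc' : c ∈ T.image r := by rw [himg]; exact Finset.mem_range.mpr hc
  simp only [Finset.mem_image] at hc'
  obtain ⟨x, hx, hxr⟩ := hc'
  refine ⟨x, ⟨hx, hxr⟩, ?_⟩
  rintro y ⟨hy, hyr⟩
  exact hrinj y hy x hx (hyr.trans hxr.symm)

section DownMain
variable {n : ℕ} [NeZero n]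

lemma lexColor_eq_rank {k : ℕ} (hn : n = 2 * k + 1) (S : Finset (ZMod n))
    (hS : S.card = k) (x : ZMod n) :
    lexColor n S x = (Sᶜ.filter (fun y => phi S y < phi S x)).card := by
  classical
  unfold lexColor
  congr 1
  ext y
  simp only [Finset.mem_filter, Finset.mem_erase]
  constructor
  · rintro ⟨⟨hyx, hyc⟩, hcond⟩
    refine ⟨hyc, ?_⟩
    rw [← down_cond_iff S hn hS hyx, ← cond_iff_cnt]
    exact hcond
  · rintro ⟨hyc, hlt⟩
    have hyx : y ≠ x := by
      intro h; subst h; exact lt_irrefl _ hlt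
    refine ⟨⟨hyx, hyc⟩, ?_⟩
    rw [cond_iff_cnt, down_cond_iff S hn hS hyx]
    exact hlt

lemma compl_card {k : ℕ} (hn : n = 2 * k + 1) (S : Finset (ZMod n)) (hS : S.card = k) :
    Sᶜ.card = k + 1 := by
  rw [Finset.card_compl, ZMod.card, hS, hn]; omega

/-- Down-vertex statement: each `k`-set `S` has exactly one `x ∉ S` of each color `c ≤ k`. -/
theorem down_exu {k : ℕ} (hn : n = 2 * k + 1) (S : Finset (ZMod n)) (hS : S.card = k)
    {c : ℕ} (hc : c ≤ k) :
    ∃! x, x ∈ Sᶜ ∧ lexColor n S x = c := by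
  classical
  have hcard := compl_card hn S hS
  have h := rank_exists_unique Sᶜ (phi S)
    (fun x _ y _ hf => phi_inj S hf) (c := c) (by omega)
  obtain ⟨x, ⟨hx1, hx2⟩, hxu⟩ := h
  refine ⟨x, ⟨hx1, by rw [lexColor_eq_rank hn S hS x]; exact hx2⟩, ?_⟩
  rintro y ⟨hy1, hy2⟩
  exact hxu y ⟨hy1, by rw [← lexColor_eq_rank hn S hS y]; exact hy2⟩

end DownMain

section Up
variable {n : ℕ} [NeZero n]

lemma cnt_erase (B : Finset (ZMod n)) (x y : ZMod n) :
    cnt (B.erase x) y ((x - y).val) = cnt B y ((x - y).val) := by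
  unfold cnt
  apply congrArg
  apply Finset.filter_congr
  intro i hi
  simp only [Finset.mem_range] at hi
  have hin : i < n := lt_trans hi (ZMod.val_lt _)
  simp only [Finset.mem_erase, eq_iff_iff]
  constructor
  · exact fun h => h.2
  · intro h
    refine ⟨?_, h⟩
    intro heq
    have : x - y = (i : ZMod n) := by rw [← heq]; ring
    have : (x - y).val = i := by rw [this, ZMod.val_cast_of_lt hin]
    omega

lemma cnt_rev (S : Finset (ZMod n)) {x y : ZMod n} (h : y ≠ x) :
    cnt S y ((x - y).val) + cnt S x ((y - x).val) = S.card := by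
  have hsum : (y - x).val + (x - y).val = n := val_sub_add_val_sub (fun hh => h hh.symm)
  have := cnt_add S x ((y - x).val) ((x - y).val)
  rw [hsum, cnt_n] at this
  have hxy : x + (((y - x).val : ℕ) : ZMod n) = y := by rw [natCast_val]; ring
  rw [hxy] at this
  omega

lemma val_pos_of_ne {x y : ZMod n} (h : y ≠ x) : 1 ≤ (y - x).val := by
  rcases Nat.eq_zero_or_pos (y - x).val with h0 | h1
  · exfalso
    have : y - x = 0 := by
      have := (ZMod.val_eq_zero (y - x)).mp h0
      exact this
    apply h; linear_combination this
  · exact h1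

lemma condA_iff {k : ℕ} (hn : n = 2 * k + 1) (B : Finset (ZMod n)) (hB : B.card = k + 1)
    {x y : ZMod n} (hx : x ∈ B) (hy : y ∈ Bᶜ) :
    ((cycInterval n y x ∩ (B.erase x)).card < (cycInterval n y x ∩ (B.erase x)ᶜ).card)
      ↔ ((y - x).val + 2 ≤ 2 * cnt B x ((y - x).val)) := by
  have hyB : y ∉ B := Finset.mem_compl.mp hy
  have hne : y ≠ x := fun h => hyB (h ▸ hx)
  rw [cond_iff_cnt, cnt_erase]
  have hrev := cnt_rev B hne
  have hsum : (y - x).val + (x - y).val = n := val_sub_add_val_sub (fun hh => hne hh.symm)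
  rw [hB] at hrev
  omega

lemma condD_iff {k : ℕ} (hn : n = 2 * k + 1) (B : Finset (ZMod n)) (hB : B.card = k + 1)
    {x y : ZMod n} (hx : x ∈ B) (hy : y ∈ B) (hne : y ≠ x) :
    ((cycInterval n y x ∩ Bᶜ).card < (cycInterval n y x ∩ B).card)
      ↔ (2 * cnt B x ((y - x).val) ≤ (y - x).val) := by
  rw [show (cycInterval n y x ∩ B) = (cycInterval n y x ∩ Bᶜᶜ) by rw [compl_compl],
    cond_iff_cnt]
  have hcompl := cnt_compl B y ((x - y).val)
  have hrev := cnt_rev B hne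
  have hsum : (y - x).val + (x - y).val = n := val_sub_add_val_sub (fun hh => hne hh.symm)
  rw [hB] at hrev
  have ht1 : 1 ≤ (y - x).val := val_pos_of_ne hne
  omega

lemma erase_compl_erase {B : Finset (ZMod n)} {x : ZMod n} (hx : x ∈ B) :
    ((B.erase x)ᶜ).erase x = Bᶜ := by
  ext z
  by_cases hzx : z = x
  · subst hzx; simp [hx]
  · simp [Finset.mem_erase, Finset.mem_compl, hzx]

lemma lexA {k : ℕ} (hn : n = 2 * k + 1) (B : Finset (ZMod n)) (hB : B.card = k + 1)
    {x : ZMod n} (hx : x ∈ B) :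
    lexColor n (B.erase x) x =
      ((Finset.Ico 1 n).filter
        (fun t : ℕ => x + (t : ZMod n) ∉ B ∧ t + 2 ≤ 2 * cnt B x t)).card := by
  classical
  unfold lexColor
  rw [erase_compl_erase hx]
  refine Finset.card_bij (fun y _ => (y - x).val) ?_ ?_ ?_
  · intro y hy
    simp only [Finset.mem_filter] at hy
    obtain ⟨hy1, hy2⟩ := hy
    have hyB : y ∉ B := Finset.mem_compl.mp hy1
    have hne : y ≠ x := fun h => hyB (h ▸ hx)
    simp only [Finset.mem_filter, Finset.mem_Ico]
    have hxy : x + (((y - x).val : ℕ) : ZMod n) = y := by rw [natCast_val]; ring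
    refine ⟨⟨val_pos_of_ne hne, ZMod.val_lt _⟩, by rw [hxy]; exact hyB, ?_⟩
    exact (condA_iff hn B hB hx hy1).mp hy2
  · intro y hy z hz hyz
    have : y - x = z - x := by
      have hyz' : (y - x).val = (z - x).val := hyz
      have h1 : ((y - x).val : ZMod n) = ((z - x).val : ZMod n) := by rw [hyz']
      rwa [natCast_val, natCast_val] at h1
    linear_combination this
  · intro t ht
    simp only [Finset.mem_filter, Finset.mem_Ico] at ht
    obtain ⟨⟨ht1, ht2⟩, htB, htc⟩ := ht
    refine ⟨x + (t : ZMod n), ?_, ?_⟩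
    · have hyc : x + (t : ZMod n) ∈ Bᶜ := Finset.mem_compl.mpr htB
      have hval : (x + (t : ZMod n) - x).val = t := by
        rw [show x + (t : ZMod n) - x = (t : ZMod n) by ring, ZMod.val_cast_of_lt ht2]
      simp only [Finset.mem_filter]
      refine ⟨hyc, ?_⟩
      rw [condA_iff hn B hB hx hyc, hval]
      exact htc
    · show (x + (t : ZMod n) - x).val = t
      rw [show x + (t : ZMod n) - x = (t : ZMod n) by ring, ZMod.val_cast_of_lt ht2]

lemma lexD {k : ℕ} (hn : n = 2 * k + 1) (B : Finset (ZMod n)) (hB : B.card = k + 1)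
    {x : ZMod n} (hx : x ∈ B) :
    lexColor n Bᶜ x =
      ((Finset.Ico 1 n).filter
        (fun t : ℕ => x + (t : ZMod n) ∈ B ∧ 2 * cnt B x t ≤ t)).card := by
  classical
  unfold lexColor
  rw [compl_compl]
  refine Finset.card_bij (fun y _ => (y - x).val) ?_ ?_ ?_
  · intro y hy
    simp only [Finset.mem_filter, Finset.mem_erase] at hy
    obtain ⟨⟨hne, hy1⟩, hy2⟩ := hy
    simp only [Finset.mem_filter, Finset.mem_Ico]
    have hxy : x + (((y - x).val : ℕ) : ZMod n) = y := by rw [natCast_val]; ring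
    refine ⟨⟨val_pos_of_ne hne, ZMod.val_lt _⟩, by rw [hxy]; exact hy1, ?_⟩
    exact (condD_iff hn B hB hx hy1 hne).mp hy2
  · intro y hy z hz hyz
    have : y - x = z - x := by
      have hyz' : (y - x).val = (z - x).val := hyz
      have h1 : ((y - x).val : ZMod n) = ((z - x).val : ZMod n) := by rw [hyz']
      rwa [natCast_val, natCast_val] at h1
    linear_combination this
  · intro t ht
    simp only [Finset.mem_filter, Finset.mem_Ico] at ht
    obtain ⟨⟨ht1, ht2⟩, htB, htc⟩ := ht
    have hne : x + (t : ZMod n) ≠ x := by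
      intro h
      have : (t : ZMod n) = 0 := by linear_combination h
      have := congrArg ZMod.val this
      rw [ZMod.val_cast_of_lt ht2, ZMod.val_zero] at this
      omega
    have hval : (x + (t : ZMod n) - x).val = t := by
      rw [show x + (t : ZMod n) - x = (t : ZMod n) by ring, ZMod.val_cast_of_lt ht2]
    refine ⟨x + (t : ZMod n), ?_, hval⟩
    simp only [Finset.mem_filter, Finset.mem_erase]
    refine ⟨⟨hne, htB⟩, ?_⟩
    rw [condD_iff hn B hB hx htB hne, hval]
    exact htc

end Up

section Cross
variable {n : ℕ} [NeZero n]

lemma crossing {k : ℕ} (hn : n = 2 * k + 1) (B : Finset (ZMod n)) (hB : B.card = k + 1)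
    {x : ZMod n} (hx : x ∈ B) :
    ((Finset.Ico 1 n).filter
        (fun t : ℕ => x + (t : ZMod n) ∉ B ∧ 2 * cnt B x t ≤ t + 1)).card =
    ((Finset.Ico 1 n).filter
        (fun t : ℕ => x + (t : ZMod n) ∈ B ∧ 2 * cnt B x t ≤ t)).card := by
  classical
  set F : ℤ → ℤ := fun v => ((v + 1).toNat : ℤ) with hF
  set s : ℕ → ℤ := fun t => (t : ℤ) - 2 * (cnt B x t : ℤ) with hs
  have step : ∀ t : ℕ,
      F (s (t + 1)) - F (s t) =
        (if x + (t : ZMod n) ∉ B ∧ 2 * cnt B x t ≤ t + 1 then (1 : ℤ) else 0)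
          - (if x + (t : ZMod n) ∈ B ∧ 2 * cnt B x t ≤ t then (1 : ℤ) else 0) := by
    intro t
    have hsucc := cnt_succ B x t
    by_cases hmem : x + (t : ZMod n) ∈ B
    · rw [if_pos hmem] at hsucc
      simp only [hmem, not_true_eq_false, false_and, if_false, true_and]
      simp only [hF, hs, hsucc]
      push_cast
      split <;> omega
    · rw [if_neg hmem] at hsucc
      simp only [hmem, not_false_eq_true, true_and, false_and, if_false]
      simp only [hF, hs, hsucc]
      push_cast
      split <;> omega
  have htel : ∑ t ∈ Finset.Ico 1 n, (F (s (t + 1)) - F (s t)) = F (s n) - F (s 1) := by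
    rw [Finset.sum_Ico_eq_sum_range]
    have : ∀ i, F (s (1 + i + 1)) - F (s (1 + i)) =
        (fun j => F (s (1 + j))) (i + 1) - (fun j => F (s (1 + j))) i := by
      intro i; simp only []; ring_nf
    calc ∑ i ∈ Finset.range (n - 1), (F (s (1 + i + 1)) - F (s (1 + i)))
        = ∑ i ∈ Finset.range (n - 1), ((fun j => F (s (1 + j))) (i + 1)
            - (fun j => F (s (1 + j))) i) := by
          apply Finset.sum_congr rfl; intro i _; exact this i
      _ = F (s (1 + (n - 1))) - F (s (1 + 0)) := Finset.sum_range_sub (fun j => F (s (1 + j))) (n - 1)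
      _ = F (s n) - F (s 1) := by
          have hn1 : 1 ≤ n := by omega
          rw [show 1 + (n - 1) = n by omega, show 1 + 0 = 1 by omega]
  have hs1 : s 1 = -1 := by
    have h1 : cnt B x 1 = 1 := by
      have := cnt_succ B x 0
      rw [show ((0 : ℕ) : ZMod n) = 0 by push_cast; ring, add_zero, if_pos hx] at this
      simpa [cnt] using this
    simp [hs, h1]
  have hsn : s n = -1 := by
    show (n : ℤ) - 2 * (cnt B x n : ℤ) = -1
    rw [cnt_n, hB, hn]; push_cast; ring
  rw [hsn, hs1, sub_self] at htel
  have hsum : ∑ t ∈ Finset.Ico 1 n,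
      ((if x + (t : ZMod n) ∉ B ∧ 2 * cnt B x t ≤ t + 1 then (1 : ℤ) else 0)
        - (if x + (t : ZMod n) ∈ B ∧ 2 * cnt B x t ≤ t then (1 : ℤ) else 0))
      = ∑ t ∈ Finset.Ico 1 n, (F (s (t + 1)) - F (s t)) :=
    Finset.sum_congr rfl (fun t _ => (step t).symm)
  rw [htel, Finset.sum_sub_distrib, Finset.sum_boole, Finset.sum_boole] at hsum
  have := sub_eq_zero.mp hsum
  exact_mod_cast this

lemma notin_count {k : ℕ} (hn : n = 2 * k + 1) (B : Finset (ZMod n)) (hB : B.card = k + 1)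
    {x : ZMod n} (hx : x ∈ B) :
    ((Finset.Ico 1 n).filter (fun t : ℕ => x + (t : ZMod n) ∉ B)).card = k := by
  classical
  have h1 : (Finset.Ico 1 n).filter (fun t : ℕ => x + (t : ZMod n) ∉ B)
      = (Finset.range n).filter (fun t : ℕ => x + (t : ZMod n) ∉ B) := by
    ext t
    simp only [Finset.mem_filter, Finset.mem_Ico, Finset.mem_range]
    constructor
    · rintro ⟨⟨h1, h2⟩, h3⟩; exact ⟨h2, h3⟩
    · rintro ⟨h1, h2⟩
      refine ⟨⟨?_, h1⟩, h2⟩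
      rcases Nat.eq_zero_or_pos t with rfl | ht
      · exfalso; apply h2; rw [show ((0:ℕ) : ZMod n) = 0 by push_cast; ring, add_zero]
        exact hx
      · exact ht
  have h2 : (Finset.range n).filter (fun t : ℕ => x + (t : ZMod n) ∉ B)
      = (Finset.range n).filter (fun t : ℕ => x + (t : ZMod n) ∈ Bᶜ) := by
    apply Finset.filter_congr; intro t _; simp
  rw [h1, h2]
  have h3 : ((Finset.range n).filter (fun t : ℕ => x + (t : ZMod n) ∈ Bᶜ)).card
      = cnt Bᶜ x n := rfl
  rw [h3, cnt_n, Finset.card_compl, ZMod.card, hB, hn]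
  omega

lemma up_eq {k : ℕ} (hn : n = 2 * k + 1) (B : Finset (ZMod n)) (hB : B.card = k + 1)
    {x : ZMod n} (hx : x ∈ B) :
    lexColor n (B.erase x) x + lexColor n Bᶜ x = k := by
  classical
  rw [lexA hn B hB hx, lexD hn B hB hx, ← crossing hn B hB hx]
  have hpart := Finset.card_filter_add_card_filter_not
    (s := (Finset.Ico 1 n).filter (fun t : ℕ => x + (t : ZMod n) ∉ B))
    (p := fun t : ℕ => t + 2 ≤ 2 * cnt B x t)
  rw [Finset.filter_filter, Finset.filter_filter] at hpart
  rw [notin_count hn B hB hx] at hpart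
  have e1 : (Finset.Ico 1 n).filter
      (fun t : ℕ => x + (t : ZMod n) ∉ B ∧ t + 2 ≤ 2 * cnt B x t)
      = (Finset.Ico 1 n).filter
        (fun a : ℕ => x + (a : ZMod n) ∉ B ∧ a + 2 ≤ 2 * cnt B x a) := rfl
  have e2 : (Finset.Ico 1 n).filter
      (fun t : ℕ => x + (t : ZMod n) ∉ B ∧ 2 * cnt B x t ≤ t + 1)
      = (Finset.Ico 1 n).filter
        (fun a : ℕ => x + (a : ZMod n) ∉ B ∧ ¬(a + 2 ≤ 2 * cnt B x a)) := by
    apply Finset.filter_congr; intro t _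
    constructor
    · rintro ⟨h1, h2⟩; exact ⟨h1, by omega⟩
    · rintro ⟨h1, h2⟩; exact ⟨h1, by omega⟩
  rw [e1, e2]
  omega

/-- Up-vertex statement: each `(k+1)`-set `B` has exactly one `x ∈ B` of each color `c ≤ k`. -/
theorem up_exu {k : ℕ} (hn : n = 2 * k + 1) (B : Finset (ZMod n)) (hB : B.card = k + 1)
    {c : ℕ} (hc : c ≤ k) :
    ∃! x, x ∈ B ∧ lexColor n (B.erase x) x = c := by
  classical
  have hBc : Bᶜ.card = k := by
    rw [Finset.card_compl, ZMod.card, hB, hn]; omega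
  obtain ⟨x, ⟨hx1, hx2⟩, hxu⟩ := down_exu hn Bᶜ hBc (c := k - c) (by omega)
  rw [compl_compl] at hx1
  have hup := up_eq hn B hB hx1
  refine ⟨x, ⟨hx1, by omega⟩, ?_⟩
  rintro y ⟨hy1, hy2⟩
  have hupy := up_eq hn B hB hy1
  apply hxu
  constructor
  · rw [compl_compl]; exact hy1
  · omega

end Cross

section Assemble
variable {n : ℕ} [NeZero n]

lemma lexColor_le_down {k : ℕ} (hn : n = 2 * k + 1) (S : Finset (ZMod n))
    (hS : S.card = k) {x : ZMod n} (hx : x ∉ S) : lexColor n S x ≤ k := by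
  classical
  have hxc : x ∈ Sᶜ := Finset.mem_compl.mpr hx
  have h1 : lexColor n S x ≤ (Sᶜ.erase x).card := Finset.card_filter_le _ _
  rw [Finset.card_erase_of_mem hxc, compl_card hn S hS] at h1
  omega

lemma insert_sdiff_self' {α : Type*} [DecidableEq α] (s : Finset α) (x : α) (hx : x ∉ s) :
    insert x s \ s = {x} := by
  ext z
  simp only [Finset.mem_sdiff, Finset.mem_insert, Finset.mem_singleton]
  constructor
  · rintro ⟨h1 | h1, h2⟩
    · exact h1
    · exact absurd h1 h2
  · rintro rfl; exact ⟨Or.inl rfl, hx⟩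

lemma sdiff_erase_self' {α : Type*} [DecidableEq α] (s : Finset α) (x : α) (hx : x ∈ s) :
    s \ s.erase x = {x} := by
  ext z
  simp only [Finset.mem_sdiff, Finset.mem_erase, Finset.mem_singleton, not_and]
  constructor
  · rintro ⟨h1, h2⟩
    by_contra hne
    exact (h2 hne) h1
  · rintro rfl; exact ⟨hx, fun h _ => absurd rfl h⟩

end Assemble

/-- Lexical colors give a 1-factorization of `M_k`: every edge has a color in
`{0, …, k}`, and for every color `c ≤ k` the edges of color `c` form a perfect
matching (each vertex lies on exactly one edge of color `c`). -/
theorem stmt11 (k : ℕ) (hk : 1 ≤ k) :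
    (∀ v w : Vert k, (middleLevels k).Adj v w → edgeColor (2 * k + 1) v.1 w.1 ≤ k) ∧
    (∀ c : ℕ, c ≤ k → ∀ v : Vert k,
      ∃! w : Vert k, (middleLevels k).Adj v w ∧ edgeColor (2 * k + 1) v.1 w.1 = c) := by
  classical
  set n := 2 * k + 1 with hn
  -- decomposition of adjacency
  have decomp : ∀ v w : Vert k, (middleLevels k).Adj v w →
      (∃ x : ZMod n, x ∉ v.1 ∧ v.1.card = k ∧ w.1 = insert x v.1 ∧
        edgeColor n v.1 w.1 = lexColor n v.1 x) ∨
      (∃ x : ZMod n, x ∈ v.1 ∧ v.1.card = k + 1 ∧ w.1 = v.1.erase x ∧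
        edgeColor n v.1 w.1 = lexColor n (v.1.erase x) x) := by
    intro v w h
    rcases (show v.1 ⊂ w.1 ∨ w.1 ⊂ v.1 from h) with h | h
    · -- v.1 ⊂ w.1
      left
      have hcards : v.1.card = k ∧ w.1.card = k + 1 := by
        have hlt := Finset.card_lt_card h
        rcases v.2 with h1 | h1 <;> rcases w.2 with h2 | h2 <;> omega
      have hsub := h.subset
      have hsd : (w.1 \ v.1).card = 1 := by
        rw [Finset.card_sdiff_of_subset hsub, hcards.1, hcards.2]; omega
      obtain ⟨x, hx⟩ := Finset.card_eq_one.mp hsd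
      have hxmem : x ∈ w.1 \ v.1 := hx ▸ Finset.mem_singleton_self x
      rw [Finset.mem_sdiff] at hxmem
      refine ⟨x, hxmem.2, hcards.1, ?_, ?_⟩
      · rw [← Finset.union_sdiff_of_subset hsub, hx, Finset.union_comm]
        rfl
      · rw [edgeColor, if_pos hsub, hx, Finset.sum_singleton, id]
    · -- w.1 ⊂ v.1
      right
      have hcards : w.1.card = k ∧ v.1.card = k + 1 := by
        have hlt := Finset.card_lt_card h
        rcases v.2 with h1 | h1 <;> rcases w.2 with h2 | h2 <;> omega
      have hsub := h.subset
      have hsd : (v.1 \ w.1).card = 1 := by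
        rw [Finset.card_sdiff_of_subset hsub, hcards.1, hcards.2]; omega
      obtain ⟨x, hx⟩ := Finset.card_eq_one.mp hsd
      have hxmem : x ∈ v.1 \ w.1 := hx ▸ Finset.mem_singleton_self x
      rw [Finset.mem_sdiff] at hxmem
      have hw : w.1 = v.1.erase x := by
        rw [Finset.erase_eq, ← hx, Finset.sdiff_sdiff_self_left,
          Finset.inter_eq_right.mpr hsub]
      refine ⟨x, hxmem.1, hcards.2, hw, ?_⟩
      have hns : ¬ v.1 ⊆ w.1 := h.not_subset
      rw [edgeColor, if_neg hns, hx, Finset.sum_singleton, id, hw]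
  constructor
  · -- part 1: colors are ≤ k
    intro v w h
    rcases decomp v w h with ⟨x, hx, hvc, _, hec⟩ | ⟨x, hx, hvc, _, hec⟩
    · rw [hec]; exact lexColor_le_down hn v.1 hvc hx
    · rw [hec]
      have := up_eq hn v.1 hvc hx
      omega
  · -- part 2: unique neighbor of each color
    intro c hc v
    rcases v.2 with hvc | hvc
    · -- down vertex
      obtain ⟨x, ⟨hx1, hx2⟩, hxu⟩ := down_exu hn v.1 hvc (c := c) hc
      have hxn : x ∉ v.1 := Finset.mem_compl.mp hx1
      refine ⟨⟨insert x v.1, Or.inr (by rw [Finset.card_insert_of_notMem hxn, hvc])⟩,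
        ⟨?_, ?_⟩, ?_⟩
      · exact (Or.inl (Finset.ssubset_insert hxn) : v.1 ⊂ _ ∨ _ ⊂ v.1)
      · show edgeColor n v.1 (insert x v.1) = c
        rw [edgeColor, if_pos (Finset.subset_insert x v.1),
          insert_sdiff_self' v.1 x hxn, Finset.sum_singleton, id]
        exact hx2
      · rintro w ⟨hadj, hcol⟩
        rcases decomp v w hadj with ⟨x', hx', hvc', hw, hec⟩ | ⟨x', hx', hvc', hw, hec⟩
        · have : x' = x := by
            apply hxu
            exact ⟨Finset.mem_compl.mpr hx', by rw [← hec]; exact hcol⟩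
          apply Subtype.ext
          rw [hw, this]
        · omega
    · -- up vertex
      obtain ⟨x, ⟨hx1, hx2⟩, hxu⟩ := up_exu hn v.1 hvc (c := c) hc
      refine ⟨⟨v.1.erase x, Or.inl (by rw [Finset.card_erase_of_mem hx1, hvc]; omega)⟩,
        ⟨?_, ?_⟩, ?_⟩
      · exact (Or.inr (Finset.erase_ssubset hx1) : v.1 ⊂ _ ∨ _ ⊂ v.1)
      · show edgeColor n v.1 (v.1.erase x) = c
        have hns : ¬ v.1 ⊆ v.1.erase x := by
          intro hsub
          exact (Finset.mem_erase.mp (hsub hx1)).1 rfl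
        rw [edgeColor, if_neg hns, sdiff_erase_self' v.1 x hx1, Finset.sum_singleton, id]
        exact hx2
      · rintro w ⟨hadj, hcol⟩
        rcases decomp v w hadj with ⟨x', hx', hvc', hw, hec⟩ | ⟨x', hx', hvc', hw, hec⟩
        · omega
        · have : x' = x := by
            apply hxu
            exact ⟨hx', by rw [← hec]; exact hcol⟩
          apply Subtype.ext
          rw [hw, this]
end Cnt
end

section
/- Let k ≥ 1, n = 2k+1, S a k-element subset of Z_n, and x ∈ Z_n \ S. Then the lexical color is invariant under complemented reversal: c(x, S) = c(n−1−x, ℵ(S ∪ {x})), where ℵ(S ∪ {x}) = { n−1−j mod n : j ∈ Z_n \ (S ∪ {x}) } is a k-element subset of Z_n not containing n−1−x. (That is, the edge {S, S ∪ {x}} of the middle-levels graph and its image edge {ℵ(S ∪ {x}), ℵ(S)} under ℵ receive the same lexical color.) -/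
set_option linter.unusedSectionVars false

namespace Stmt13
variable {n : ℕ} [NeZero n]

lemma mem_cyc {y x z : ZMod n} : z ∈ cycInterval n y x ↔ (z - y).val < (x - y).val := by
  simp [cycInterval]

lemma val_eq_iff {u v : ZMod n} : u = v ↔ u.val = v.val :=
  ⟨fun h => by rw [h], fun h => ZMod.val_injective n h⟩
lemma val_sub_eq (u v : ZMod n) :
    (u - v).val = if v.val ≤ u.val then u.val - v.val else u.val + n - v.val := by
  split_ifs with h
  · exact ZMod.val_sub h
  · push_neg at h
    have hv : v ≠ 0 := by
      intro h0; rw [h0, ZMod.val_zero] at h; omega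
    have : NeZero v := ⟨hv⟩
    rw [sub_eq_add_neg, ZMod.val_add, ZMod.val_neg_of_ne_zero]
    have hu := ZMod.val_lt u
    have hv' := ZMod.val_lt v
    rw [Nat.mod_eq_of_lt (by omega)]
    omega
lemma val_one' (hn : 1 < n) : (1 : ZMod n).val = 1 := by
  rw [ZMod.val_one_eq_one_mod, Nat.mod_eq_of_lt hn]
lemma Z1 (hn : 1 < n) (a b : ZMod n) : (b - 1 - a).val < b.val ↔ a.val < b.val := by
  have ha := ZMod.val_lt a
  have hb := ZMod.val_lt b
  rw [show b - 1 - a = (b - a) - 1 by ring, val_sub_eq, val_sub_eq b a, val_one' hn]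
  split_ifs <;> omega
lemma Z2 {a b z : ZMod n} (hab : a ≠ b) :
    (z - a).val < (b - a).val ↔ ¬ ((z - b).val < (a - b).val) := by
  have ha := ZMod.val_lt a
  have hb := ZMod.val_lt b
  have hz := ZMod.val_lt z
  have hab' : ¬ a.val = b.val := fun h => hab (val_eq_iff.mpr h)
  rw [val_sub_eq, val_sub_eq, val_sub_eq, val_sub_eq]
  split_ifs <;> omega
lemma Z3 {y x z : ZMod n} (hn : 1 < n) (hyx : y ≠ x + 1) :
    (z - y).val < (x + 1 - y).val ↔ ((z - y).val < (x - y).val ∨ z = x) := by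
  have ha := ZMod.val_lt x
  have hb := ZMod.val_lt y
  have hz := ZMod.val_lt z
  have hd := ZMod.val_lt (x - y)
  have hne : (x - y).val ≠ n - 1 := by
    intro h
    apply hyx
    have h1 : ((-1 : ZMod n)).val = n - 1 := by
      rw [show (-1 : ZMod n) = 0 - 1 by ring, val_sub_eq, ZMod.val_zero, val_one' hn]
      simp
    have : x - y = -1 := val_eq_iff.mpr (by omega)
    have := sub_eq_iff_eq_add.mp this
    rw [this]; ring
  rw [show x + 1 - y = (x - y) - (-1) by ring]
  have h1 : ((-1 : ZMod n)).val = n - 1 := by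
    rw [show (-1 : ZMod n) = 0 - 1 by ring, val_sub_eq, ZMod.val_zero, val_one' hn]
    simp
  rw [val_sub_eq (x - y) (-1), h1, val_sub_eq x y, val_sub_eq z y,
    show (z = x) ↔ z.val = x.val from val_eq_iff]
  rw [val_sub_eq x y] at hne
  split_ifs at * <;> omega
lemma Z4 {x z : ZMod n} (hn : 1 < n) :
    (z - (x + 1)).val < (x - (x + 1)).val ↔ z ≠ x := by
  have ha := ZMod.val_lt x
  have hz := ZMod.val_lt z
  have h1 : ((-1 : ZMod n)).val = n - 1 := by
    rw [show (-1 : ZMod n) = 0 - 1 by ring, val_sub_eq, ZMod.val_zero, val_one' hn]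
    simp
  rw [show x - (x + 1) = -1 by ring, h1,
    show z - (x + 1) = (z - x) - 1 by ring, val_sub_eq (z - x) 1, val_one' hn,
    val_sub_eq z x, show (z ≠ x) ↔ ¬ z.val = x.val from not_congr val_eq_iff]
  split_ifs <;> omega
lemma Z5 {y x z : ZMod n} (hn : 1 < n) (hyx : y ≠ x) :
    (z - y).val < (x - y).val ↔ (z = y ∨ (z - (y + 1)).val < (x - (y + 1)).val) := by
  have ha := ZMod.val_lt x
  have hb := ZMod.val_lt y
  have hz := ZMod.val_lt z
  have hd : (x - y).val ≠ 0 := by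
    rw [Ne, ZMod.val_eq_zero, sub_eq_zero]
    exact fun h => hyx h.symm
  rw [show z - (y + 1) = (z - y) - 1 by ring, show x - (y + 1) = (x - y) - 1 by ring,
    val_sub_eq (z - y) 1, val_sub_eq (x - y) 1, val_one' hn,
    show (z = y) ↔ z.val = y.val from val_eq_iff]
  rw [val_sub_eq x y, val_sub_eq z y] at *
  split_ifs at * <;> omega
lemma B1 (hn : 1 < n) {s x z : ZMod n} :
    z ∈ cycInterval n (-1 - s) (-1 - x) ↔ (-1 - z) ∈ cycInterval n (x + 1) (s + 1) := by
  rw [mem_cyc, mem_cyc,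
    show (-1 - z - (x + 1) : ZMod n) = (-1 - x - (-1 - s)) - 1 - (z - (-1 - s)) by ring,
    show (s + 1 - (x + 1) : ZMod n) = -1 - x - (-1 - s) by ring]
  exact (Z1 hn _ _).symm
lemma mem_image_r {W : Finset (ZMod n)} {z : ZMod n} :
    z ∈ W.image (fun j => -1 - j) ↔ -1 - z ∈ W := by
  simp only [Finset.mem_image]
  constructor
  · rintro ⟨a, ha, rfl⟩
    simpa [show -1 - (-1 - a) = a by ring] using ha
  · intro h
    exact ⟨-1 - z, h, by ring⟩
lemma cyc_all {x : ZMod n} (hn : 1 < n) :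
    cycInterval n (x + 1) x = Finset.univ.erase x := by
  ext z
  rw [mem_cyc, Z4 hn, Finset.mem_erase]
  simp
lemma cyc_self {x : ZMod n} : cycInterval n x x = ∅ := by
  ext z; simp [mem_cyc]
lemma cyc_cons {y x : ZMod n} (hn : 1 < n) (hyx : y ≠ x) :
    cycInterval n y x = insert y (cycInterval n (y + 1) x) := by
  ext z
  rw [mem_cyc, Z5 hn hyx, Finset.mem_insert, mem_cyc]
lemma notMem_cyc_succ {y x : ZMod n} (hn : 1 < n) (hyx : y ≠ x) :
    y ∉ cycInterval n (y + 1) x := by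
  rw [mem_cyc]
  intro h
  have h1 : ((-1 : ZMod n)).val = n - 1 := by
    rw [show (-1 : ZMod n) = 0 - 1 by ring, val_sub_eq, ZMod.val_zero, val_one' hn]
    simp
  rw [show y - (y + 1) = -1 by ring, h1] at h
  have := ZMod.val_lt (x - (y + 1))
  have : x - (y + 1) = -1 := val_eq_iff.mpr (by omega)
  exact hyx (by linear_combination -this)
lemma endpoint_not_mem {y x : ZMod n} : x ∉ cycInterval n y x := by
  simp [mem_cyc]
lemma cyc_compl {a b : ZMod n} (hab : a ≠ b) :
    cycInterval n a b = (cycInterval n b a)ᶜ := by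
  ext z
  rw [mem_cyc, Finset.mem_compl, mem_cyc]
  exact Z2 hab
lemma cyc_extend {y x : ZMod n} (hn : 1 < n) (h : y ≠ x + 1) :
    cycInterval n y (x + 1) = insert x (cycInterval n y x) := by
  ext z
  rw [mem_cyc, Z3 hn h, Finset.mem_insert, mem_cyc]
  tauto

/-- the height function -/
def F (n : ℕ) [NeZero n] (S : Finset (ZMod n)) (x y : ZMod n) : ℤ :=
  ((cycInterval n y x ∩ Sᶜ).card : ℤ) - ((cycInterval n y x ∩ S).card : ℤ)

lemma card_insert_inter {y : ZMod n} {W A : Finset (ZMod n)} (hy : y ∉ W) :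
    ((insert y W) ∩ A).card = (W ∩ A).card + if y ∈ A then 1 else 0 := by
  by_cases h : y ∈ A
  · rw [Finset.insert_inter_of_mem h,
      Finset.card_insert_of_notMem (fun hc => hy (Finset.mem_inter.mp hc).1)]
    simp [h]
  · rw [Finset.insert_inter_of_notMem h]
    simp [h]

lemma F_rec (hn : 1 < n) {S : Finset (ZMod n)} {x y : ZMod n} (hyx : y ≠ x) :
    F n S x y = F n S x (y + 1) + (if y ∈ S then -1 else 1) := by
  unfold F
  rw [cyc_cons hn hyx, card_insert_inter (notMem_cyc_succ hn hyx),
    card_insert_inter (notMem_cyc_succ hn hyx)]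
  by_cases h : y ∈ S <;> simp [h] <;> push_cast <;> ring

lemma F_self {S : Finset (ZMod n)} {x : ZMod n} : F n S x x = 0 := by
  simp [F, cyc_self]

lemma F_succ_self (hn : 1 < n) {S : Finset (ZMod n)} {x : ZMod n} (hx : x ∉ S)
    (hcard : n = 2 * S.card + 1) : F n S x (x + 1) = 0 := by
  unfold F
  rw [cyc_all hn]
  have h1 : Finset.univ.erase x ∩ Sᶜ = Sᶜ.erase x := by
    ext z; simp [Finset.mem_erase]
  have h2 : Finset.univ.erase x ∩ S = S := by
    ext z
    simp only [Finset.mem_inter, Finset.mem_erase, Finset.mem_univ, and_true]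
    exact ⟨fun h => h.2, fun h => ⟨fun e => hx (e ▸ h), h⟩⟩
  rw [h1, h2, Finset.card_erase_of_mem (Finset.mem_compl.mpr hx), Finset.card_compl]
  have hc : Fintype.card (ZMod n) = n := ZMod.card n
  rw [hc]
  have : n - S.card - 1 = S.card := by omega
  rw [this]
  ring


lemma stepC (hn : 1 < n) {S : Finset (ZMod n)} {x : ZMod n} (hx : x ∉ S)
    (hcard : n = 2 * S.card + 1) :
    (Finset.univ.filter (fun y => y ∈ Sᶜ.erase x ∧ 0 < F n S x y)).card
      = (Finset.univ.filter (fun y => y ∈ S ∧ 0 < F n S x (y + 1))).card := by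
  have key : ∀ y : ZMod n,
      (if y ∈ Sᶜ.erase x ∧ 0 < F n S x y then (1 : ℤ) else 0)
        - (if y ∈ S ∧ 0 < F n S x (y + 1) then (1 : ℤ) else 0)
      = max (F n S x y) 0 - max (F n S x (y + 1)) 0 := by
    intro y
    by_cases hyx : y = x
    · subst hyx
      rw [F_self, F_succ_self hn hx hcard]
      simp [hx]
    · have hrec := F_rec hn (S := S) (x := x) hyx
      by_cases hyS : y ∈ S
      · rw [hrec, if_pos hyS]
        have h1 : y ∉ Sᶜ.erase x := by simp [Finset.mem_erase, hyS]
        simp only [h1, false_and, if_false, hyS, true_and]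
        rw [max_def, max_def]
        split_ifs <;> omega
      · rw [hrec, if_neg hyS]
        have h1 : y ∈ Sᶜ.erase x := Finset.mem_erase.mpr ⟨hyx, Finset.mem_compl.mpr hyS⟩
        simp only [h1, true_and, hyS, false_and, if_false]
        rw [max_def, max_def]
        split_ifs <;> omega
  have tele : ∑ y : ZMod n, (max (F n S x y) 0 - max (F n S x (y + 1)) 0) = 0 := by
    rw [Finset.sum_sub_distrib, sub_eq_zero]
    exact Fintype.sum_equiv (Equiv.subRight (1 : ZMod n)) _ _ (fun y => by simp)
  have hsum : ∑ y : ZMod n, (if y ∈ Sᶜ.erase x ∧ 0 < F n S x y then (1 : ℤ) else 0)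
      = ∑ y : ZMod n, (if y ∈ S ∧ 0 < F n S x (y + 1) then (1 : ℤ) else 0) := by
    have h0 : ∑ y : ZMod n,
        ((if y ∈ Sᶜ.erase x ∧ 0 < F n S x y then (1 : ℤ) else 0)
          - (if y ∈ S ∧ 0 < F n S x (y + 1) then (1 : ℤ) else 0)) = 0 := by
      calc ∑ y : ZMod n,
          ((if y ∈ Sᶜ.erase x ∧ 0 < F n S x y then (1 : ℤ) else 0)
            - (if y ∈ S ∧ 0 < F n S x (y + 1) then (1 : ℤ) else 0))
          = ∑ y : ZMod n, (max (F n S x y) 0 - max (F n S x (y + 1)) 0) :=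
            Finset.sum_congr rfl (fun y _ => key y)
        _ = 0 := tele
    rwa [Finset.sum_sub_distrib, sub_eq_zero] at h0
  rw [Finset.sum_boole, Finset.sum_boole] at hsum
  exact_mod_cast hsum


lemma compl_image {W : Finset (ZMod n)} :
    (W.image (fun j => -1 - j))ᶜ = Wᶜ.image (fun j => -1 - j) := by
  ext z
  rw [Finset.mem_compl, mem_image_r, mem_image_r, Finset.mem_compl]

lemma Bmain (hn : 1 < n) {S : Finset (ZMod n)} {x s : ZMod n} (hx : x ∉ S) (hs : s ∈ S)
    (hcard : n = 2 * S.card + 1) :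
    ((cycInterval n (-1 - s) (-1 - x) ∩ ((insert x S)ᶜ.image (fun j => -1 - j))).card
      < (cycInterval n (-1 - s) (-1 - x) ∩ ((insert x S)ᶜ.image (fun j => -1 - j))ᶜ).card)
    ↔ 0 < F n S x (s + 1) := by
  set A := insert x S with hA
  have rinj : Function.Injective (fun j : ZMod n => -1 - j) := by
    intro a b h
    simpa [sub_right_inj] using h
  have h1 : cycInterval n (-1 - s) (-1 - x) ∩ (Aᶜ.image (fun j => -1 - j))
      = (cycInterval n (x + 1) (s + 1) ∩ Aᶜ).image (fun j => -1 - j) := by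
    ext z
    rw [Finset.mem_inter, mem_image_r, mem_image_r, Finset.mem_inter, B1 hn]
  have h2 : cycInterval n (-1 - s) (-1 - x) ∩ (Aᶜ.image (fun j => -1 - j))ᶜ
      = (cycInterval n (x + 1) (s + 1) ∩ A).image (fun j => -1 - j) := by
    rw [compl_image, compl_compl]
    ext z
    rw [Finset.mem_inter, mem_image_r, mem_image_r, Finset.mem_inter, B1 hn]
  rw [h1, h2, Finset.card_image_of_injective _ rinj, Finset.card_image_of_injective _ rinj]
  have hsx : s ≠ x := fun h => hx (h ▸ hs)
  have hI'eq : cycInterval n (s + 1) (x + 1) = insert x (cycInterval n (s + 1) x) :=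
    cyc_extend hn (by simpa using hsx)
  have hJ : cycInterval n (x + 1) (s + 1) = (insert x (cycInterval n (s + 1) x))ᶜ := by
    rw [← hI'eq]
    exact cyc_compl (by simpa using fun h => hsx h.symm)
  set I := cycInterval n (s + 1) x with hI
  have hxI : x ∉ I := endpoint_not_mem
  set W := insert x I with hW
  have e1 : cycInterval n (x + 1) (s + 1) ∩ A = A \ W := by
    rw [hJ]
    ext z
    simp only [Finset.mem_inter, Finset.mem_compl, Finset.mem_sdiff]
    tauto
  have e2 : cycInterval n (x + 1) (s + 1) ∩ Aᶜ = Aᶜ \ W := by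
    rw [hJ]
    ext z
    simp only [Finset.mem_inter, Finset.mem_compl, Finset.mem_sdiff]
    tauto
  have c1 := Finset.card_inter_add_card_sdiff A W
  have c2 := Finset.card_inter_add_card_sdiff Aᶜ W
  have hWA : (A ∩ W).card = (I ∩ S).card + 1 := by
    have hAW : A ∩ W = insert x (I ∩ S) := by
      ext z
      simp only [hA, hW, Finset.mem_inter, Finset.mem_insert]
      constructor
      · rintro ⟨hz1, hz2⟩
        rcases hz2 with rfl | hzI
        · exact Or.inl rfl
        · rcases hz1 with rfl | hzS
          · exact Or.inl rfl
          · exact Or.inr ⟨hzI, hzS⟩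
      · rintro (rfl | ⟨hzI, hzS⟩)
        · exact ⟨Or.inl rfl, Or.inl rfl⟩
        · exact ⟨Or.inr hzS, Or.inr hzI⟩
    rw [hAW, Finset.card_insert_of_notMem (fun h => hxI (Finset.mem_inter.mp h).1)]
  have hWAc : (Aᶜ ∩ W).card = (I ∩ Sᶜ).card := by
    have hAW : Aᶜ ∩ W = I ∩ Sᶜ := by
      ext z
      simp only [hA, hW, Finset.mem_inter, Finset.mem_compl, Finset.mem_insert, not_or]
      constructor
      · rintro ⟨⟨hzx, hzS⟩, hz2⟩
        rcases hz2 with rfl | hzI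
        · exact absurd rfl hzx
        · exact ⟨hzI, hzS⟩
      · rintro ⟨hzI, hzS⟩
        exact ⟨⟨fun e => hxI (e ▸ hzI), hzS⟩, Or.inr hzI⟩
    rw [hAW]
  have hAcard : A.card = S.card + 1 := Finset.card_insert_of_notMem hx
  have hAc : Aᶜ.card = n - (S.card + 1) := by
    rw [Finset.card_compl, ZMod.card, hAcard]
  have b1 : (I ∩ S).card ≤ S.card := Finset.card_le_card Finset.inter_subset_right
  have b2 : (I ∩ Sᶜ).card ≤ S.card := by
    have hsub : I ∩ Sᶜ ⊆ Sᶜ.erase x := by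
      intro z hz
      rw [Finset.mem_erase]
      exact ⟨fun e => hxI (e ▸ (Finset.mem_inter.mp hz).1), (Finset.mem_inter.mp hz).2⟩
    calc (I ∩ Sᶜ).card ≤ (Sᶜ.erase x).card := Finset.card_le_card hsub
      _ = S.card := by
          rw [Finset.card_erase_of_mem (Finset.mem_compl.mpr hx), Finset.card_compl, ZMod.card]
          omega
  have hF : F n S x (s + 1) = ((I ∩ Sᶜ).card : ℤ) - ((I ∩ S).card : ℤ) := rfl
  rw [e1, e2, hF]
  omega


lemma Bmain' (hn : 1 < n) {S : Finset (ZMod n)} {x z : ZMod n} (hx : x ∉ S)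
    (hz : -1 - z ∈ S) (hcard : n = 2 * S.card + 1) :
    ((cycInterval n z (-1 - x) ∩ ((insert x S)ᶜ.image (fun j => -1 - j))).card
      < (cycInterval n z (-1 - x) ∩ ((insert x S)ᶜ.image (fun j => -1 - j))ᶜ).card)
    ↔ 0 < F n S x ((-1 - z) + 1) := by
  have h := Bmain hn hx hz hcard
  rwa [show (-1 - (-1 - z) : ZMod n) = z by ring] at h

end Stmt13

/-- The lexical color is invariant under complemented reversal:
`c(x, S) = c(n−1−x, ℵ(S ∪ {x}))`. -/
theorem stmt13 (k : ℕ) (hk : 1 ≤ k) (S : Finset (ZMod (2 * k + 1))) (hS : S.card = k)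
    (x : ZMod (2 * k + 1)) (hx : x ∉ S) :
    lexColor (2 * k + 1) S x =
      lexColor (2 * k + 1) (aleph (2 * k + 1) (insert x S))
        (((2 * k + 1 : ℕ) : ZMod (2 * k + 1)) - 1 - x) := by

  have hn : 1 < 2 * k + 1 := by omega
  have hcard : 2 * k + 1 = 2 * S.card + 1 := by rw [hS]
  have rinj : Function.Injective (fun j : ZMod (2 * k + 1) => -1 - j) := by
    intro a b h
    simpa [sub_right_inj] using h
  rw [show (((2 * k + 1 : ℕ) : ZMod (2 * k + 1))) - 1 - x = -1 - x by
    rw [ZMod.natCast_self]; ring]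
  have hT : aleph (2 * k + 1) (insert x S) = (insert x S)ᶜ.image (fun j => -1 - j) := by
    unfold aleph
    simp only [ZMod.natCast_self, zero_sub]
  rw [hT]
  have hL : lexColor (2 * k + 1) S x
      = (Finset.univ.filter
          (fun y => y ∈ Sᶜ.erase x ∧ 0 < Stmt13.F (2 * k + 1) S x y)).card := by
    unfold lexColor
    congr 1
    ext z
    simp only [Finset.mem_filter, Finset.mem_univ, true_and, Stmt13.F, sub_pos, Nat.cast_lt]
  have hR : lexColor (2 * k + 1) ((insert x S)ᶜ.image (fun j => -1 - j)) (-1 - x)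
      = (Finset.univ.filter
          (fun y => y ∈ S ∧ 0 < Stmt13.F (2 * k + 1) S x (y + 1))).card := by
    unfold lexColor
    have hset : ((((insert x S)ᶜ.image (fun j => -1 - j))ᶜ).erase (-1 - x)).filter
        (fun y => (cycInterval (2 * k + 1) y (-1 - x)
            ∩ ((insert x S)ᶜ.image (fun j => -1 - j))).card
          < (cycInterval (2 * k + 1) y (-1 - x)
            ∩ ((insert x S)ᶜ.image (fun j => -1 - j))ᶜ).card)
        = (S.filter (fun s => 0 < Stmt13.F (2 * k + 1) S x ((-1 - (-1 - s)) + 1))).image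
            (fun j => -1 - j) := by
      ext z
      simp only [Finset.mem_filter, Finset.mem_erase, Finset.mem_compl,
        Stmt13.mem_image_r, not_not]
      constructor
      · rintro ⟨⟨hz1, hz2⟩, hc⟩
        have hzS : -1 - z ∈ S := by
          rcases Finset.mem_insert.mp hz2 with h | h
          · exact absurd (show z = -1 - x by linear_combination -h) hz1
          · exact h
        refine ⟨hzS, ?_⟩
        rw [show (-1 - (-1 - (-1 - z)) : ZMod (2 * k + 1)) = -1 - z by ring]
        exact (Stmt13.Bmain' hn hx hzS hcard).mp hc
      · rintro ⟨hzS, hF⟩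
        rw [show (-1 - (-1 - (-1 - z)) : ZMod (2 * k + 1)) = -1 - z by ring] at hF
        refine ⟨⟨?_, Finset.mem_insert.mpr (Or.inr hzS)⟩, ?_⟩
        · intro h
          apply hx
          have : -1 - z = x := by rw [h]; ring
          exact this ▸ hzS
        · exact (Stmt13.Bmain' hn hx hzS hcard).mpr hF
    rw [hset, Finset.card_image_of_injective _ rinj]
    congr 1
    ext z
    simp only [Finset.mem_filter, Finset.mem_univ, true_and,
      show (-1 - (-1 - z) : ZMod (2 * k + 1)) = z by ring]
  rw [hL, hR]
  exact Stmt13.stepC hn hx hcard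
end

section
/- Let k ≥ 1 and n = 2k+1, and let W_{01}^k be the spanning subgraph of the middle-levels graph M_k whose edges are exactly the edges {S, S ∪ {x}} of lexical color 0 or 1 (i.e., c(x, S) ∈ {0, 1}). Then every vertex of M_k has degree exactly 2 in W_{01}^k; hence W_{01}^k is a 2-factor of M_k, i.e., a disjoint union of cycles covering all vertices of M_k. -/
namespace ML

variable {n : ℕ} [NeZero n]

lemma mem_cyc {y x z : ZMod n} : z ∈ cycInterval n y x ↔ (z - y).val < (x - y).val := by
  simp [cycInterval]

lemma emod_cases {A : ℕ} (h : A < 2 * n) : (A % n = A ∧ A < n) ∨ A % n + n = A := by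
  rcases Nat.lt_or_ge A n with h' | h'
  · exact Or.inl ⟨Nat.mod_eq_of_lt h', h'⟩
  · right
    have hn : 0 < n := Nat.pos_of_ne_zero (NeZero.ne n)
    rw [Nat.mod_eq_sub_mod h', Nat.mod_eq_of_lt (by omega)]
    omega

lemma sub_val (a b : ZMod n) : (a - b).val = (a.val + n - b.val) % n := by
  have hn : 0 < n := Nat.pos_of_ne_zero (NeZero.ne n)
  have ha : a.val < n := ZMod.val_lt a
  rw [sub_eq_add_neg, ZMod.val_add, ZMod.neg_val]
  rcases eq_or_ne b 0 with h | h
  · have hb0 : b.val = 0 := by simp [h]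
    rw [if_pos h, hb0, Nat.add_zero, Nat.sub_zero, Nat.add_mod_right, Nat.mod_eq_of_lt ha]
  · have hb : b.val < n := ZMod.val_lt b
    rw [if_neg h]
    congr 1
    omega

lemma val_sub_tri (u a b : ZMod n) :
    (u - b).val = ((u - a).val + n - (b - a).val) % n := by
  have : u - b = (u - a) - (b - a) := by ring
  rw [this, sub_val]

lemma val_sub_ne_zero {a b : ZMod n} (h : a ≠ b) : (a - b).val ≠ 0 := by
  rw [Ne, ZMod.val_eq_zero, sub_eq_zero]; exact h

lemma cyc_compl {x y : ZMod n} (h : x ≠ y) :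
    cycInterval n x y = (cycInterval n y x)ᶜ := by
  ext z
  simp only [Finset.mem_compl, mem_cyc, not_lt]
  have h1 := val_sub_tri z y x
  have h2 := val_sub_tri y y x
  have h3 : (y - y).val = 0 := by simp
  have h4 := val_sub_ne_zero h
  have l1 := ZMod.val_lt (z - y)
  have l2 := ZMod.val_lt (x - y)
  have hn : 0 < n := Nat.pos_of_ne_zero (NeZero.ne n)
  have m1 := emod_cases (n := n) (A := (z - y).val + n - (x - y).val) (by omega)
  have m2 := emod_cases (n := n) (A := (y - y).val + n - (x - y).val) (by omega)
  rcases m1 with ⟨m1, _⟩ | m1 <;> rcases m2 with ⟨m2, _⟩ | m2 <;> omega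

lemma cyc_self (x : ZMod n) : cycInterval n x x = ∅ := by
  ext z; simp [mem_cyc]

lemma not_mem_cyc_right (y x : ZMod n) : x ∉ cycInterval n y x := by
  simp [mem_cyc]

lemma cyc_split_mem {a b c z : ZMod n} (h : (b - a).val ≤ (c - a).val) :
    z ∈ cycInterval n a c ↔ z ∈ cycInterval n a b ∨ z ∈ cycInterval n b c := by
  simp only [mem_cyc]
  have h1 := val_sub_tri z a b
  have h2 := val_sub_tri c a b
  have l1 := ZMod.val_lt (z - a)
  have l2 := ZMod.val_lt (c - a)
  have l3 := ZMod.val_lt (b - a)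
  have hn : 0 < n := Nat.pos_of_ne_zero (NeZero.ne n)
  have m1 := emod_cases (n := n) (A := (z - a).val + n - (b - a).val) (by omega)
  have m2 := emod_cases (n := n) (A := (c - a).val + n - (b - a).val) (by omega)
  rcases m1 with ⟨m1, _⟩ | m1 <;> rcases m2 with ⟨m2, _⟩ | m2 <;> omega

lemma cyc_split_disj {a b c z : ZMod n} (h : (b - a).val ≤ (c - a).val) :
    z ∈ cycInterval n a b → z ∉ cycInterval n b c := by
  simp only [mem_cyc]
  have h1 := val_sub_tri z a b
  have h2 := val_sub_tri c a b
  have l1 := ZMod.val_lt (z - a)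
  have l2 := ZMod.val_lt (c - a)
  have l3 := ZMod.val_lt (b - a)
  have hn : 0 < n := Nat.pos_of_ne_zero (NeZero.ne n)
  have m1 := emod_cases (n := n) (A := (z - a).val + n - (b - a).val) (by omega)
  have m2 := emod_cases (n := n) (A := (c - a).val + n - (b - a).val) (by omega)
  rcases m1 with ⟨m1, _⟩ | m1 <;> rcases m2 with ⟨m2, _⟩ | m2 <;> omega

/-- weight of the interval `[y,x)`: `|[y,x) ∩ P| - |[y,x) ∩ Pᶜ|`. -/
def wgt (P : Finset (ZMod n)) (y x : ZMod n) : ℤ :=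
  ((cycInterval n y x ∩ P).card : ℤ) - ((cycInterval n y x ∩ Pᶜ).card : ℤ)

lemma inter_card_split (I : Finset (ZMod n)) (P : Finset (ZMod n)) :
    (I ∩ P).card + (I ∩ Pᶜ).card = I.card := by
  rw [← Finset.card_union_of_disjoint]
  · congr 1
    ext z; simp [Finset.mem_inter]; tauto
  · refine Finset.disjoint_left.2 ?_
    intro z hz hz'
    simp only [Finset.mem_inter, Finset.mem_compl] at hz hz'
    exact hz'.2 hz.2

lemma compl_inter_card (A : Finset (ZMod n)) (P : Finset (ZMod n)) :
    (A ∩ P).card + (Aᶜ ∩ P).card = P.card := by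
  rw [← Finset.card_union_of_disjoint]
  · congr 1
    ext z; simp [Finset.mem_inter]; tauto
  · refine Finset.disjoint_left.2 ?_
    intro z hz hz'
    simp only [Finset.mem_inter, Finset.mem_compl] at hz hz'
    exact hz'.1 hz.1

lemma wgt_add_compl (P : Finset (ZMod n)) {x y : ZMod n} (h : x ≠ y) :
    wgt P y x + wgt P x y = 2 * (P.card : ℤ) - n := by
  have hcompl := cyc_compl h
  have h1 := compl_inter_card (cycInterval n y x) P
  have h2 := compl_inter_card (cycInterval n y x) Pᶜ
  have h3 : Pᶜ.card = n - P.card := by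
    rw [Finset.card_compl, ZMod.card]
  have h4 : P.card ≤ n := by
    have := Finset.card_le_card (Finset.subset_univ P)
    simpa [ZMod.card, Finset.card_univ] using this
  unfold wgt
  rw [hcompl]
  push_cast
  omega

lemma wgt_split {a b c : ZMod n} (h : (b - a).val ≤ (c - a).val) (P : Finset (ZMod n)) :
    wgt P a c = wgt P a b + wgt P b c := by
  have hu : ∀ Q : Finset (ZMod n), (cycInterval n a c ∩ Q).card
      = (cycInterval n a b ∩ Q).card + (cycInterval n b c ∩ Q).card := by
    intro Q
    rw [← Finset.card_union_of_disjoint]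
    · congr 1
      ext z
      simp only [Finset.mem_inter, Finset.mem_union, cyc_split_mem h]
      tauto
    · refine Finset.disjoint_left.2 ?_
      intro z hz hz'
      simp only [Finset.mem_inter] at hz hz'
      exact cyc_split_disj h hz.1 hz'.1
  unfold wgt
  rw [hu P, hu Pᶜ]
  push_cast
  ring

lemma wgt_self (P : Finset (ZMod n)) (x : ZMod n) : wgt P x x = 0 := by
  unfold wgt
  rw [cyc_self]
  simp


lemma cyc_cons {z x : ZMod n} (hn : 1 < n) (h : z ≠ x) :
    cycInterval n z x = insert z (cycInterval n (z + 1) x) := by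
  have hone : (1 : ZMod n).val = 1 := ZMod.val_one_eq_one_mod n ▸ Nat.mod_eq_of_lt hn
  have hd := val_sub_ne_zero (Ne.symm h)  -- (x - z).val ≠ 0
  ext u
  simp only [mem_cyc, Finset.mem_insert]
  have h1 : (u - (z + 1)).val = ((u - z).val + n - 1) % n := by
    have : u - (z + 1) = (u - z) - 1 := by ring
    rw [this, sub_val, hone]
  have h2 : (x - (z + 1)).val = ((x - z).val + n - 1) % n := by
    have : x - (z + 1) = (x - z) - 1 := by ring
    rw [this, sub_val, hone]
  have l1 := ZMod.val_lt (u - z)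
  have l2 := ZMod.val_lt (x - z)
  have hz : u = z ↔ (u - z).val = 0 := by
    rw [ZMod.val_eq_zero, sub_eq_zero]
  rw [hz]
  have m1 := emod_cases (n := n) (A := (u - z).val + n - 1) (by omega)
  have m2 := emod_cases (n := n) (A := (x - z).val + n - 1) (by omega)
  rcases m1 with ⟨m1, _⟩ | m1 <;> rcases m2 with ⟨m2, _⟩ | m2 <;> omega

lemma self_not_mem_succ {z x : ZMod n} (hn : 1 < n) : z ∉ cycInterval n (z + 1) x := by
  have hone : (1 : ZMod n).val = 1 := ZMod.val_one_eq_one_mod n ▸ Nat.mod_eq_of_lt hn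
  simp only [mem_cyc]
  have h1 : (z - (z + 1)).val = n - 1 := by
    have : z - (z + 1) = (0 : ZMod n) - 1 := by ring
    rw [this, sub_val, hone]
    simp only [ZMod.val_zero]
    rw [Nat.mod_eq_of_lt (by omega)]
    omega
  have l2 := ZMod.val_lt (x - (z + 1))
  omega

lemma wgt_cons {z x : ZMod n} (hn : 1 < n) (h : z ≠ x) (P : Finset (ZMod n)) :
    wgt P z x = (if z ∈ P then 1 else -1) + wgt P (z + 1) x := by
  have hins := cyc_cons hn h
  have hnm := self_not_mem_succ (x := x) (z := z) hn
  unfold wgt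
  rcases Finset.decidableMem z P with hzP | hzP
  · -- z ∉ P
    rw [hins, Finset.insert_inter_of_notMem hzP,
      Finset.insert_inter_of_mem (by simpa using hzP),
      Finset.card_insert_of_notMem (by simp [hnm])]
    rw [if_neg hzP]
    push_cast
    ring
  · rw [hins, Finset.insert_inter_of_mem hzP,
      Finset.insert_inter_of_notMem (by simpa using hzP),
      Finset.card_insert_of_notMem (by simp [hnm])]
    rw [if_pos hzP]
    push_cast
    ring

lemma cyc_succ_singleton (hn : 1 < n) (x : ZMod n) :
    cycInterval n x (x + 1) = {x} := by
  have hone : (1 : ZMod n).val = 1 := ZMod.val_one_eq_one_mod n ▸ Nat.mod_eq_of_lt hn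
  ext u
  simp only [mem_cyc, Finset.mem_singleton]
  have h2 : (x + 1 - x).val = 1 := by
    have : x + 1 - x = (1 : ZMod n) := by ring
    rw [this, hone]
  have hz : u = x ↔ (u - x).val = 0 := by rw [ZMod.val_eq_zero, sub_eq_zero]
  rw [hz]
  omega

lemma wgt_succ (hn : 1 < n) (P : Finset (ZMod n)) {x : ZMod n} (hx : x ∉ P) :
    wgt P x (x + 1) = -1 := by
  unfold wgt
  rw [cyc_succ_singleton hn]
  have h1 : ({x} : Finset (ZMod n)) ∩ P = ∅ := by
    ext u; simp only [Finset.mem_inter, Finset.mem_singleton, Finset.notMem_empty, iff_false]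
    rintro ⟨rfl, h⟩; exact hx h
  have h2 : ({x} : Finset (ZMod n)) ∩ Pᶜ = {x} := by
    ext u; simp only [Finset.mem_inter, Finset.mem_singleton, Finset.mem_compl]
    constructor
    · rintro ⟨h, _⟩; exact h
    · rintro rfl; exact ⟨rfl, hx⟩
  rw [h1, h2]
  simp

lemma ne_succ_self (hn : 1 < n) (x : ZMod n) : x ≠ x + 1 := by
  intro h
  have hone : (1 : ZMod n).val = 1 := ZMod.val_one_eq_one_mod n ▸ Nat.mod_eq_of_lt hn
  have h1 : (x + 1 - x).val = 1 := by
    have hx : x + 1 - x = (1 : ZMod n) := by ring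
    rw [hx, hone]
  have h2 : x + 1 - x = 0 := by rw [← h]; exact sub_self x
  rw [h2] at h1
  simp at h1

/-- The telescoping walk identity: for `|P| = k`, `n = 2k+1`, `x ∉ P`,
the number of `y ∈ P` with `wgt P y x ≥ 1` equals the number of
`y ∈ Pᶜ, y ≠ x` with `wgt P y x ≥ 0`. -/
lemma walk_identity (hn : 1 < n) (P : Finset (ZMod n)) {x : ZMod n} (hx : x ∉ P)
    (hcard : 2 * P.card + 1 = n) :
    (P.filter (fun y => 1 ≤ wgt P y x)).card
      = ((Pᶜ.erase x).filter (fun y => 0 ≤ wgt P y x)).card := by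
  classical
  set F : ZMod n → ℤ := fun z => ((wgt P z x).toNat : ℤ) with hF
  have hsum0 : ∑ z : ZMod n, (F z - F (z + 1)) = 0 := by
    rw [Finset.sum_sub_distrib]
    have : ∑ z : ZMod n, F (z + 1) = ∑ z : ZMod n, F z := by
      apply Finset.sum_equiv (Equiv.addRight (1 : ZMod n)) (by simp)
      intro i _
      rfl
    rw [this, sub_self]
  -- the x term vanishes
  have hwx : wgt P x x = 0 := wgt_self P x
  have hwx1 : wgt P (x + 1) x = 0 := by
    have hTot := wgt_add_compl P (ne_succ_self hn x)
    have h2 : wgt P x (x + 1) = -1 := wgt_succ hn P hx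
    have h3 : (n : ℤ) = 2 * (P.card : ℤ) + 1 := by exact_mod_cast hcard.symm
    omega
  have hxterm : F x - F (x + 1) = 0 := by
    simp only [hF]
    rw [hwx, hwx1]
    simp
  have hsum' : ∑ z ∈ Finset.univ.erase x, (F z - F (z + 1)) = 0 := by
    have h := Finset.add_sum_erase Finset.univ (fun z => F z - F (z + 1)) (Finset.mem_univ x)
    rw [hsum0] at h
    omega
  have key : ∀ z ∈ Finset.univ.erase x, F z - F (z + 1)
      = (if z ∈ P ∧ 1 ≤ wgt P z x then (1:ℤ) else 0)
        - (if z ∉ P ∧ 0 ≤ wgt P z x then (1:ℤ) else 0) := by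
    intro z hz
    have hzx : z ≠ x := (Finset.mem_erase.1 hz).1
    have hcons := wgt_cons hn hzx P
    simp only [hF]
    by_cases hzP : z ∈ P
    · rw [if_pos hzP] at hcons
      simp only [hzP, true_and, not_true_eq_false, false_and, if_false]
      split_ifs <;> omega
    · rw [if_neg hzP] at hcons
      simp only [hzP, false_and, if_false, not_false_eq_true, true_and]
      split_ifs <;> omega
  have hsum2 : ∑ z ∈ Finset.univ.erase x, (if z ∈ P ∧ 1 ≤ wgt P z x then (1:ℤ) else 0)
      = ∑ z ∈ Finset.univ.erase x, (if z ∉ P ∧ 0 ≤ wgt P z x then (1:ℤ) else 0) := by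
    have h := Finset.sum_congr rfl key
    rw [hsum', Finset.sum_sub_distrib] at h
    omega
  rw [Finset.sum_boole, Finset.sum_boole] at hsum2
  have e1 : (Finset.univ.erase x).filter (fun z => z ∈ P ∧ 1 ≤ wgt P z x)
      = P.filter (fun y => 1 ≤ wgt P y x) := by
    ext z
    simp only [Finset.mem_filter, Finset.mem_erase, Finset.mem_univ, and_true, true_and]
    constructor
    · rintro ⟨_, h1, h2⟩; exact ⟨h1, h2⟩
    · rintro ⟨h1, h2⟩
      refine ⟨?_, h1, h2⟩
      rintro rfl; exact hx h1
  have e2 : (Finset.univ.erase x).filter (fun z => z ∉ P ∧ 0 ≤ wgt P z x)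
      = (Pᶜ.erase x).filter (fun y => 0 ≤ wgt P y x) := by
    ext z
    simp only [Finset.mem_filter, Finset.mem_erase, Finset.mem_univ, and_true, true_and,
      Finset.mem_compl]
    tauto
  rw [e1, e2] at hsum2
  exact_mod_cast hsum2


section Rank

variable {α : Type*} [DecidableEq α]

/-- rank of `x` in `Q` w.r.t. relation `r`: number of strict predecessors. -/
def rk (Q : Finset α) (r : α → α → Prop) [DecidableRel r] (x : α) : ℕ :=
  ((Q.erase x).filter (fun y => r y x)).card

variable {Q : Finset α} {r : α → α → Prop} [DecidableRel r]

/-- hypotheses: `r` restricted to distinct elements of `Q` is a strict total order. -/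
structure IsSTO (Q : Finset α) (r : α → α → Prop) : Prop where
  asym : ∀ x ∈ Q, ∀ y ∈ Q, x ≠ y → r x y → ¬ r y x
  tot : ∀ x ∈ Q, ∀ y ∈ Q, x ≠ y → r x y ∨ r y x
  trans : ∀ a ∈ Q, ∀ b ∈ Q, ∀ c ∈ Q, a ≠ b → b ≠ c → a ≠ c → r a b → r b c → r a c

lemma rk_lt (h : IsSTO Q r) {x : α} (hx : x ∈ Q) : rk Q r x < Q.card := by
  have h1 : ((Q.erase x).filter (fun y => r y x)).card ≤ (Q.erase x).card :=
    Finset.card_le_card (Finset.filter_subset _ _)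
  have h2 : (Q.erase x).card = Q.card - 1 := Finset.card_erase_of_mem hx
  have h3 : 0 < Q.card := Finset.card_pos.2 ⟨x, hx⟩
  unfold rk
  omega

lemma rk_lt_rk (h : IsSTO Q r) {x y : α} (hx : x ∈ Q) (hy : y ∈ Q) (hxy : y ≠ x)
    (hr : r y x) : rk Q r y < rk Q r x := by
  apply Finset.card_lt_card
  constructor
  · intro z hz
    simp only [Finset.mem_filter, Finset.mem_erase] at hz ⊢
    obtain ⟨⟨hzy, hzQ⟩, hzr⟩ := hz
    have hzx : z ≠ x := by
      rintro rfl
      exact h.asym z hzQ y hy hzy hzr hr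
    exact ⟨⟨hzx, hzQ⟩, h.trans z hzQ y hy x hx hzy hxy hzx hzr hr⟩
  · intro hsub
    have hymem : y ∈ (Q.erase x).filter (fun z => r z x) := by
      simp only [Finset.mem_filter, Finset.mem_erase]
      exact ⟨⟨hxy, hy⟩, hr⟩
    have := hsub hymem
    simp only [Finset.mem_filter, Finset.mem_erase] at this
    exact this.1.1 rfl

lemma rk_injOn (h : IsSTO Q r) : ∀ x ∈ Q, ∀ y ∈ Q, rk Q r x = rk Q r y → x = y := by
  intro x hx y hy hxy
  by_contra hne
  rcases h.tot x hx y hy hne with hr | hr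
  · exact absurd hxy (Nat.ne_of_lt (rk_lt_rk h hy hx hne hr))
  · exact absurd hxy (Nat.ne_of_gt (rk_lt_rk h hx hy (Ne.symm hne) hr))

lemma rk_image (h : IsSTO Q r) : Q.image (rk Q r) = Finset.range Q.card := by
  apply Finset.eq_of_subset_of_card_le
  · intro j hj
    simp only [Finset.mem_image] at hj
    obtain ⟨x, hx, rfl⟩ := hj
    exact Finset.mem_range.2 (rk_lt h hx)
  · rw [Finset.card_range, Finset.card_image_of_injOn]
    intro x hx y hy
    exact rk_injOn h x hx y hy

lemma rk_exists_unique (h : IsSTO Q r) {j : ℕ} (hj : j < Q.card) :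
    ∃! x, x ∈ Q ∧ rk Q r x = j := by
  have hmem : j ∈ Q.image (rk Q r) := by
    rw [rk_image h]; exact Finset.mem_range.2 hj
  simp only [Finset.mem_image] at hmem
  obtain ⟨x, hx, hrk⟩ := hmem
  refine ⟨x, ⟨hx, hrk⟩, ?_⟩
  rintro y ⟨hy, hrky⟩
  exact rk_injOn h y hy x hx (by rw [hrky, hrk])

end Rank

variable {n : ℕ} [NeZero n]

lemma sto1 {P : Finset (ZMod n)} (hP : 2 * P.card = n + 1) :
    IsSTO P (fun y x => 0 < wgt P y x) := by
  have hT : 2 * (P.card : ℤ) - n = 1 := by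
    have : (2 * P.card : ℤ) = (n : ℤ) + 1 := by exact_mod_cast hP
    omega
  refine ⟨?_, ?_, ?_⟩
  · intro x _ y _ hxy hr
    have h := wgt_add_compl P (x := y) (y := x) (Ne.symm hxy)
    omega
  · intro x _ y _ hxy
    have h := wgt_add_compl P (x := y) (y := x) (Ne.symm hxy)
    omega
  · intro a _ b _ c _ hab hbc hac hr1 hr2
    rcases le_or_gt ((b - a).val) ((c - a).val) with h | h
    · have h2 := wgt_split h P
      omega
    · have h2 := wgt_split (le_of_lt h) P
      have h3 := wgt_add_compl P (x := b) (y := c) hbc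
      omega

lemma sto2 {P : Finset (ZMod n)} (hP : 2 * P.card + 1 = n) :
    IsSTO Pᶜ (fun y x => 0 ≤ wgt P y x) := by
  have hT : 2 * (P.card : ℤ) - n = -1 := by
    have : 2 * (P.card : ℤ) + 1 = (n : ℤ) := by exact_mod_cast hP
    omega
  refine ⟨?_, ?_, ?_⟩
  · intro x _ y _ hxy hr
    have h := wgt_add_compl P (x := y) (y := x) (Ne.symm hxy)
    omega
  · intro x _ y _ hxy
    have h := wgt_add_compl P (x := y) (y := x) (Ne.symm hxy)
    omega
  · intro a _ b _ c _ hab hbc hac hr1 hr2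
    rcases le_or_gt ((b - a).val) ((c - a).val) with h | h
    · have h2 := wgt_split h P
      omega
    · have h2 := wgt_split (le_of_lt h) P
      have h3 := wgt_add_compl P (x := b) (y := c) hbc
      omega

lemma lexColor_eq_rk1 (S : Finset (ZMod n)) (x : ZMod n) :
    lexColor n S x = rk Sᶜ (fun y x' => 0 < wgt Sᶜ y x') x := by
  unfold lexColor rk
  congr 1
  apply Finset.filter_congr
  intro y _
  unfold wgt
  rw [compl_compl]
  omega

lemma lexColor_erase_eq_rk (hn : 1 < n) {B : Finset (ZMod n)} {x : ZMod n} (hx : x ∈ B)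
    (hcard : 2 * Bᶜ.card + 1 = n) :
    lexColor n (B.erase x) x = rk B (fun y x' => 0 ≤ wgt Bᶜ y x') x := by
  have hset : ((B.erase x)ᶜ).erase x = Bᶜ := by
    ext u
    simp only [Finset.mem_erase, Finset.mem_compl]
    constructor
    · rintro ⟨hux, hu⟩ huB
      exact hu ⟨hux, huB⟩
    · intro hu
      constructor
      · rintro rfl; exact hu hx
      · rintro ⟨_, huB⟩; exact hu huB
  have hcond : ∀ y, ((cycInterval n y x ∩ (B.erase x)).card < (cycInterval n y x ∩ (B.erase x)ᶜ).card)
      ↔ (1 ≤ wgt Bᶜ y x) := by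
    intro y
    have hxI : x ∉ cycInterval n y x := not_mem_cyc_right y x
    have h1 : cycInterval n y x ∩ (B.erase x) = cycInterval n y x ∩ B := by
      ext u
      simp only [Finset.mem_inter, Finset.mem_erase]
      constructor
      · rintro ⟨hu, _, huB⟩; exact ⟨hu, huB⟩
      · rintro ⟨hu, huB⟩
        refine ⟨hu, ?_, huB⟩
        rintro rfl; exact hxI hu
    have h2 : cycInterval n y x ∩ (B.erase x)ᶜ = cycInterval n y x ∩ Bᶜ := by
      ext u
      simp only [Finset.mem_inter, Finset.mem_compl, Finset.mem_erase]
      constructor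
      · rintro ⟨hu, hu2⟩
        refine ⟨hu, fun huB => hu2 ⟨?_, huB⟩⟩
        rintro rfl; exact hxI hu
      · rintro ⟨hu, hu2⟩
        exact ⟨hu, fun h => hu2 h.2⟩
    rw [h1, h2]
    unfold wgt
    rw [compl_compl]
    omega
  unfold lexColor
  rw [hset]
  rw [Finset.filter_congr (fun y _ => hcond y)]
  rw [walk_identity hn Bᶜ (by simp [hx]) hcard]
  rw [compl_compl]
  rfl

end ML

open ML

/-- The union `W_{01}^k` of the lexical 1-factors of colors 0 and 1 is a 2-factor of
`M_k`: every vertex has exactly two neighbors along edges of color 0 or 1. -/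
theorem stmt14 (k : ℕ) (hk : 1 ≤ k) (v : Vert k) :
    Nat.card {w : Vert k // (middleLevels k).Adj v w ∧
      (edgeColor (2 * k + 1) v.1 w.1 = 0 ∨ edgeColor (2 * k + 1) v.1 w.1 = 1)} = 2 := by
  have hn : 1 < 2 * k + 1 := by omega
  have hcompl : (v.1)ᶜ.card = 2 * k + 1 - v.1.card := by
    rw [Finset.card_compl, ZMod.card]
  rw [Nat.card_eq_two_iff]
  rcases v.2 with hA | hA
  · -- v is a k-set
    have hPcard : (v.1)ᶜ.card = k + 1 := by omega
    have hsto : IsSTO (v.1)ᶜ (fun y x' => 0 < wgt (v.1)ᶜ y x') :=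
      sto1 (by omega)
    obtain ⟨x0, ⟨hx0Q, hrk0⟩, hun0⟩ := rk_exists_unique hsto (j := 0) (by omega)
    obtain ⟨x1, ⟨hx1Q, hrk1⟩, hun1⟩ := rk_exists_unique hsto (j := 1) (by omega)
    have hx01 : x0 ≠ x1 := by
      rintro rfl; rw [hrk0] at hrk1; omega
    have hx0A : x0 ∉ v.1 := Finset.mem_compl.1 hx0Q
    have hx1A : x1 ∉ v.1 := Finset.mem_compl.1 hx1Q
    have hcolor : ∀ x : ZMod (2 * k + 1), x ∉ v.1 →
        edgeColor (2 * k + 1) v.1 (insert x v.1)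
          = rk (v.1)ᶜ (fun y x' => 0 < wgt (v.1)ᶜ y x') x := by
      intro x hx
      have hsd : insert x v.1 \ v.1 = {x} := by
        ext u
        simp only [Finset.mem_sdiff, Finset.mem_insert, Finset.mem_singleton]
        constructor
        · rintro ⟨h | h, h2⟩
          · exact h
          · exact absurd h h2
        · rintro rfl
          exact ⟨Or.inl rfl, hx⟩
      unfold edgeColor
      rw [if_pos (Finset.subset_insert x v.1), hsd, Finset.sum_singleton]
      exact lexColor_eq_rk1 v.1 x
    have hmain : ∀ w : Vert k,
        ((middleLevels k).Adj v w ∧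
          (edgeColor (2 * k + 1) v.1 w.1 = 0 ∨ edgeColor (2 * k + 1) v.1 w.1 = 1))
        ↔ (w.1 = insert x0 v.1 ∨ w.1 = insert x1 v.1) := by
      intro w
      constructor
      · rintro ⟨hadj, hcol⟩
        have hadj' : v.1 ⊂ w.1 ∨ w.1 ⊂ v.1 := hadj
        rcases hadj' with hss | hss
        · have hlt := Finset.card_lt_card hss
          have hwcard : w.1.card = k + 1 := by
            rcases w.2 with h | h <;> omega
          have hsd1 : (w.1 \ v.1).card = 1 := by
            rw [Finset.card_sdiff_of_subset hss.subset]; omega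
          obtain ⟨x, hx⟩ := Finset.card_eq_one.1 hsd1
          have hxmem : x ∈ w.1 \ v.1 := by rw [hx]; exact Finset.mem_singleton_self x
          have hxA : x ∉ v.1 := (Finset.mem_sdiff.1 hxmem).2
          have hw1 : w.1 = insert x v.1 := by
            rw [← Finset.union_sdiff_of_subset hss.subset, hx, Finset.insert_eq, Finset.union_comm]
          rw [hw1, hcolor x hxA] at hcol
          rcases hcol with h0 | h1
          · left
            rw [hw1, hun0 x ⟨Finset.mem_compl.2 hxA, h0⟩]
          · right
            rw [hw1, hun1 x ⟨Finset.mem_compl.2 hxA, h1⟩]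
        · exfalso
          have hlt := Finset.card_lt_card hss
          rcases w.2 with h | h <;> omega
      · intro h
        rcases h with h | h
        · refine ⟨Or.inl ?_, ?_⟩
          · rw [h]; exact Finset.ssubset_insert hx0A
          · rw [h, hcolor x0 hx0A]
            exact Or.inl hrk0
        · refine ⟨Or.inl ?_, ?_⟩
          · rw [h]; exact Finset.ssubset_insert hx1A
          · rw [h, hcolor x1 hx1A]
            exact Or.inr hrk1
    have hc0 : (insert x0 v.1).card = k + 1 := by
      rw [Finset.card_insert_of_notMem hx0A, hA]
    have hc1 : (insert x1 v.1).card = k + 1 := by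
      rw [Finset.card_insert_of_notMem hx1A, hA]
    refine ⟨⟨⟨insert x0 v.1, Or.inr hc0⟩, (hmain _).2 (Or.inl rfl)⟩,
      ⟨⟨insert x1 v.1, Or.inr hc1⟩, (hmain _).2 (Or.inr rfl)⟩, ?_, ?_⟩
    · intro h
      have h1 : insert x0 v.1 = insert x1 v.1 := congrArg (fun e => e.1.1) h
      have : x0 ∈ insert x1 v.1 := h1 ▸ Finset.mem_insert_self x0 v.1
      rcases Finset.mem_insert.1 this with h2 | h2
      · exact hx01 h2
      · exact hx0A h2
    · rw [Set.eq_univ_iff_forall]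
      intro e
      rcases (hmain e.1).1 e.2 with h | h
      · left; exact Subtype.ext (Subtype.ext h)
      · right
        simp only [Set.mem_singleton_iff]
        exact Subtype.ext (Subtype.ext h)
  · -- v is a (k+1)-set
    have hPcard : (v.1)ᶜ.card = k := by omega
    have hsto : IsSTO v.1 (fun y x' => 0 ≤ wgt (v.1)ᶜ y x') := by
      have h := sto2 (P := (v.1)ᶜ) (by omega)
      rwa [compl_compl] at h
    obtain ⟨x0, ⟨hx0Q, hrk0⟩, hun0⟩ := rk_exists_unique hsto (j := 0) (by omega)
    obtain ⟨x1, ⟨hx1Q, hrk1⟩, hun1⟩ := rk_exists_unique hsto (j := 1) (by omega)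
    have hx01 : x0 ≠ x1 := by
      rintro rfl; rw [hrk0] at hrk1; omega
    have hcolor : ∀ x : ZMod (2 * k + 1), x ∈ v.1 →
        edgeColor (2 * k + 1) v.1 (v.1.erase x)
          = rk v.1 (fun y x' => 0 ≤ wgt (v.1)ᶜ y x') x := by
      intro x hx
      have hnots : ¬ v.1 ⊆ v.1.erase x := fun h => (Finset.mem_erase.1 (h hx)).1 rfl
      have hsd : v.1 \ v.1.erase x = {x} := by
        rw [Finset.erase_eq, Finset.sdiff_sdiff_eq_self (Finset.singleton_subset_iff.2 hx)]
      unfold edgeColor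
      rw [if_neg hnots, hsd, Finset.sum_singleton]
      exact lexColor_erase_eq_rk hn hx (by omega)
    have hmain : ∀ w : Vert k,
        ((middleLevels k).Adj v w ∧
          (edgeColor (2 * k + 1) v.1 w.1 = 0 ∨ edgeColor (2 * k + 1) v.1 w.1 = 1))
        ↔ (w.1 = v.1.erase x0 ∨ w.1 = v.1.erase x1) := by
      intro w
      constructor
      · rintro ⟨hadj, hcol⟩
        have hadj' : v.1 ⊂ w.1 ∨ w.1 ⊂ v.1 := hadj
        rcases hadj' with hss | hss
        · exfalso
          have hlt := Finset.card_lt_card hss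
          rcases w.2 with h | h <;> omega
        · have hlt := Finset.card_lt_card hss
          have hwcard : w.1.card = k := by
            rcases w.2 with h | h <;> omega
          have hsd1 : (v.1 \ w.1).card = 1 := by
            rw [Finset.card_sdiff_of_subset hss.subset]; omega
          obtain ⟨x, hx⟩ := Finset.card_eq_one.1 hsd1
          have hxmem : x ∈ v.1 \ w.1 := by rw [hx]; exact Finset.mem_singleton_self x
          have hxv : x ∈ v.1 := (Finset.mem_sdiff.1 hxmem).1
          have hw1 : w.1 = v.1.erase x := by
            rw [← Finset.sdiff_sdiff_eq_self hss.subset, hx, Finset.erase_eq]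
          rw [hw1, hcolor x hxv] at hcol
          rcases hcol with h0 | h1
          · left
            rw [hw1, hun0 x ⟨hxv, h0⟩]
          · right
            rw [hw1, hun1 x ⟨hxv, h1⟩]
      · intro h
        rcases h with h | h
        · refine ⟨Or.inr ?_, ?_⟩
          · rw [h]; exact Finset.erase_ssubset hx0Q
          · rw [h, hcolor x0 hx0Q]
            exact Or.inl hrk0
        · refine ⟨Or.inr ?_, ?_⟩
          · rw [h]; exact Finset.erase_ssubset hx1Q
          · rw [h, hcolor x1 hx1Q]
            exact Or.inr hrk1
    have hc0 : (v.1.erase x0).card = k := by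
      rw [Finset.card_erase_of_mem hx0Q]; omega
    have hc1 : (v.1.erase x1).card = k := by
      rw [Finset.card_erase_of_mem hx1Q]; omega
    refine ⟨⟨⟨v.1.erase x0, Or.inl hc0⟩, (hmain _).2 (Or.inl rfl)⟩,
      ⟨⟨v.1.erase x1, Or.inl hc1⟩, (hmain _).2 (Or.inr rfl)⟩, ?_, ?_⟩
    · intro h
      have h1 : v.1.erase x0 = v.1.erase x1 := congrArg (fun e => e.1.1) h
      have : x1 ∉ v.1.erase x1 := Finset.notMem_erase x1 v.1
      rw [← h1] at this
      exact this (Finset.mem_erase.2 ⟨Ne.symm hx01, hx1Q⟩)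
    · rw [Set.eq_univ_iff_forall]
      intro e
      rcases (hmain e.1).1 e.2 with h | h
      · left; exact Subtype.ext (Subtype.ext h)
      · right
        simp only [Set.mem_singleton_iff]
        exact Subtype.ext (Subtype.ext h)
end
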